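/- arXiv:2006.07517 — 9 statements merged into one kernel-verified Lean document; each statement's English description precedes it below -/
import Mathlib

section
/- Let f : ℝ → ℝ be continuous, and suppose there exists a set A ⊆ ℝ with Lebesgue measure zero such that the image f(A) has positive Lebesgue outer measure. Then there exists a compact set K ⊆ ℝ with Lebesgue measure zero such that f(K) has positive Lebesgue measure. -/
open MeasureTheory Set Metric ENNReal

/-- Compact exhaustion of a proper open subset of `ℝ`. -/
lemma exhaust_open (V : Set ℝ) (hV : IsOpen V) (hVne : Vᶜ.Nonempty) :
    ∃ C : ℕ → Set ℝ, Monotone C ∧ (∀ k, IsCompact (C k) ∧ C k ⊆ V) ∧ V ⊆ ⋃ k, C k := by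
  refine ⟨fun k => closedBall 0 k ∩ {x | 1 / ((k : ℝ) + 1) ≤ infDist x Vᶜ}, ?_, ?_, ?_⟩
  · intro i j hij
    apply inter_subset_inter
    · exact closedBall_subset_closedBall (by exact_mod_cast hij)
    · intro x hx
      have h1 : ((i : ℝ) + 1) ≤ (j : ℝ) + 1 := by exact_mod_cast Nat.succ_le_succ hij
      exact le_trans (one_div_le_one_div_of_le (by positivity) h1) hx
  · intro k
    constructor
    · refine IsCompact.inter_right (isCompact_closedBall 0 k) ?_
      exact isClosed_le continuous_const (continuous_infDist_pt Vᶜ)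
    · rintro x ⟨-, hx⟩
      by_contra hxV
      have h0 : infDist x Vᶜ = 0 := infDist_zero_of_mem hxV
      rw [mem_setOf_eq, h0] at hx
      have : (0 : ℝ) < 1 / ((k : ℝ) + 1) := by positivity
      linarith
  · intro x hxV
    obtain ⟨r, hr0, hrV⟩ := Metric.isOpen_iff.1 hV x hxV
    have hrle : r ≤ infDist x Vᶜ := by
      by_contra h
      push_neg at h
      obtain ⟨y, hyVc, hyd⟩ := (infDist_lt_iff hVne).1 h
      exact hyVc (hrV (by rwa [mem_ball, dist_comm]))
    obtain ⟨k, hk⟩ := exists_nat_ge (max ‖x‖ (1 / r))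
    refine mem_iUnion.2 ⟨k, ?_, ?_⟩
    · simpa [Real.norm_eq_abs] using (le_max_left _ _).trans hk
    · have h1r : 1 / r ≤ (k : ℝ) := (le_max_right _ _).trans hk
      have : 1 / ((k : ℝ) + 1) ≤ r := by
        rw [div_le_iff₀ (by positivity)]
        have : 1 / r ≤ (k : ℝ) + 1 := by linarith
        rw [div_le_iff₀ hr0] at this
        linarith [mul_comm r ((k : ℝ) + 1)]
      exact this.trans hrle

/-- Inner approximation of the image measure by compact subsets of an open superset. -/
lemma key_step (f : ℝ → ℝ) (S V : Set ℝ) (hV : IsOpen V) (hVne : Vᶜ.Nonempty)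
    (hSV : S ⊆ V) (c : ℝ≥0∞) (hc : c < volume (f '' S)) :
    ∃ C, IsCompact C ∧ C ⊆ V ∧ c < volume (f '' (S ∩ C)) := by
  obtain ⟨C, hmono, hCk, hcover⟩ := exhaust_open V hV hVne
  have h1 : (⋃ k, S ∩ C k) = S := by
    rw [← inter_iUnion]
    exact inter_eq_left.2 (hSV.trans hcover)
  have h2 : volume (f '' S) = ⨆ k, volume (f '' (S ∩ C k)) := by
    conv_lhs => rw [← h1]
    rw [image_iUnion]
    exact Monotone.measure_iUnion fun i j h =>
      image_mono (f := f) (inter_subset_inter_right S (hmono h))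
  rw [h2] at hc
  obtain ⟨k, hk⟩ := lt_iSup_iff.1 hc
  exact ⟨C k, (hCk k).1, (hCk k).2, hk⟩

theorem stmt_0 (f : ℝ → ℝ) (hf : Continuous f)
    (A : Set ℝ) (hA : volume A = 0) (hfA : 0 < volume (f '' A)) :
    ∃ K : Set ℝ, IsCompact K ∧ volume K = 0 ∧ 0 < volume (f '' K) := by
  -- Reduce to a bounded null set A'
  obtain ⟨n₀, hn₀⟩ : ∃ n : ℕ, 0 < volume (f '' (A ∩ closedBall 0 n)) := by
    by_contra h
    push_neg at h
    simp only [le_zero_iff] at h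
    have hAeq : A = ⋃ n : ℕ, A ∩ closedBall (0 : ℝ) n := by
      rw [← inter_iUnion, iUnion_closedBall_nat, inter_univ]
    have : volume (f '' A) = 0 := by
      rw [hAeq, image_iUnion]
      exact measure_iUnion_null fun n => h n
    exact absurd this hfA.ne'
  set A' : Set ℝ := A ∩ closedBall 0 n₀ with hA'def
  have hA'null : volume A' = 0 := le_antisymm (hA ▸ measure_mono inter_subset_left) zero_le
  set m : ℝ≥0∞ := volume (f '' A') with hmdef
  have hm0 : m ≠ 0 := hn₀.ne'
  have hmtop : m ≠ ∞ := by
    have : volume (f '' A') ≤ volume (f '' closedBall (0 : ℝ) n₀) :=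
      measure_mono (image_mono (f := f) inter_subset_right)
    exact (this.trans_lt ((isCompact_closedBall (0 : ℝ) n₀).image hf).measure_lt_top).ne
  set c : ℝ≥0∞ := m / 2 with hcdef
  have hc0 : 0 < c := ENNReal.half_pos hm0
  have hcm : c < m := ENNReal.half_lt_self hm0 hmtop
  -- open sets of small measure containing A'
  have hU : ∀ k : ℕ, ∃ U, A' ⊆ U ∧ IsOpen U ∧ volume U < ((k : ℝ≥0∞) + 1)⁻¹ := by
    intro k
    have : volume A' < ((k : ℝ≥0∞) + 1)⁻¹ := by
      rw [hA'null]
      exact ENNReal.inv_pos.2 (by simp)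
    obtain ⟨U, hU1, hU2, hU3⟩ := Set.exists_isOpen_lt_of_lt A' _ this
    exact ⟨U, hU1, hU2, hU3⟩
  choose U hUA hUopen hUvol using hU
  set V : ℕ → Set ℝ := fun k => ball (0 : ℝ) (n₀ + 1) ∩ ⋂ i ∈ Finset.range (k + 1), U i with hVdef
  have hVopen : ∀ k, IsOpen (V k) :=
    fun k => isOpen_ball.inter (isOpen_biInter_finset fun i _ => hUopen i)
  have hVne : ∀ k, (V k)ᶜ.Nonempty := by
    intro k
    refine ⟨(n₀ : ℝ) + 1, fun h => ?_⟩
    have := h.1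
    rw [mem_ball, dist_zero_right, Real.norm_eq_abs] at this
    have : (n₀ : ℝ) + 1 < n₀ + 1 := lt_of_le_of_lt (le_abs_self _) this
    linarith
  have hA'V : ∀ k, A' ⊆ V k := by
    intro k
    intro x hx
    refine ⟨?_, mem_iInter₂.2 fun i _ => hUA i hx⟩
    have h2 := hx.2
    rw [mem_closedBall, dist_zero_right, Real.norm_eq_abs] at h2
    rw [mem_ball, dist_zero_right, Real.norm_eq_abs]
    linarith
  have hVvol : ∀ k, volume (V k) < ((k : ℝ≥0∞) + 1)⁻¹ := by
    intro k
    refine lt_of_le_of_lt (measure_mono fun x hx => ?_) (hUvol k)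
    exact mem_iInter₂.1 hx.2 k (Finset.mem_range.2 (Nat.lt_succ_self k))
  set G : Set ℝ := ⋂ k, V k with hGdef
  have hA'G : A' ⊆ G := subset_iInter fun k => hA'V k
  have hGnull : volume G = 0 := by
    by_contra h
    obtain ⟨k, hk⟩ := ENNReal.exists_inv_nat_lt h
    have h1 : volume G ≤ volume (V k) := measure_mono (iInter_subset V k)
    have h2 : ((k : ℝ≥0∞) + 1)⁻¹ ≤ ((k : ℝ≥0∞))⁻¹ :=
      ENNReal.inv_le_inv.2 (le_self_add)
    exact absurd ((h1.trans (hVvol k).le).trans h2) (not_le.2 hk)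
  -- recursive construction of compacts
  have hGV : ∀ k, G ⊆ V k := fun k => iInter_subset V k
  set Q : Set ℝ → ℕ → Prop :=
    fun D k => IsCompact D ∧ D ⊆ V k ∧ c < volume (f '' (G ∩ D)) with hQdef
  obtain ⟨D₀, hD₀c, hD₀V, hD₀m⟩ : ∃ D, Q D 0 := by
    have hcG : c < volume (f '' G) :=
      hcm.trans_le (measure_mono (image_mono (f := f) hA'G))
    obtain ⟨C, h1, h2, h3⟩ := key_step f G (V 0) (hVopen 0) (hVne 0) (hGV 0) c hcG
    refine ⟨C, h1, h2, h3⟩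
  have step : ∀ (k : ℕ) (D : Set ℝ), Q D k → ∃ D', D' ⊆ D ∧ Q D' (k + 1) := by
    rintro k D ⟨hDc, hDV, hDm⟩
    obtain ⟨C, h1, h2, h3⟩ := key_step f (G ∩ D) (V (k + 1)) (hVopen (k + 1)) (hVne (k + 1))
      (fun x hx => hGV (k + 1) hx.1) c hDm
    refine ⟨D ∩ C, inter_subset_left, hDc.inter_right h1.isClosed, ?_, ?_⟩
    · exact inter_subset_right.trans h2
    · rwa [inter_assoc] at h3
  choose! F hFsub hFQ using step
  set D : ℕ → Set ℝ := fun k => Nat.rec D₀ F k with hDdef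
  have hQk : ∀ k, Q (D k) k := by
    intro k
    induction k with
    | zero => exact ⟨hD₀c, hD₀V, hD₀m⟩
    | succ k ih => exact hFQ k (D k) ih
  have hDsucc : ∀ k, D (k + 1) ⊆ D k := fun k => hFsub k (D k) (hQk k)
  have hDanti : Antitone D := antitone_nat_of_succ_le hDsucc
  set K : Set ℝ := ⋂ k, D k with hKdef
  have hKclosed : IsClosed K := isClosed_iInter fun k => (hQk k).1.isClosed
  have hKcomp : IsCompact K := (hQk 0).1.of_isClosed_subset hKclosed (iInter_subset D 0)
  have hKG : K ⊆ G := by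
    intro x hx
    exact mem_iInter.2 fun k => (hQk k).2.1 (mem_iInter.1 hx k)
  have hKnull : volume K = 0 :=
    le_antisymm (hGnull ▸ measure_mono hKG) zero_le
  refine ⟨K, hKcomp, hKnull, ?_⟩
  -- f '' K = ⋂ f '' D k
  have himg : f '' K = ⋂ k, f '' D k := by
    apply Subset.antisymm
    · exact image_iInter_subset D f
    · intro y hy
      have hne : ∀ k, (D k ∩ f ⁻¹' {y}).Nonempty := by
        intro k
        obtain ⟨x, hxD, hxy⟩ := mem_iInter.1 hy k
        exact ⟨x, hxD, by simpa using hxy⟩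
      have hcmp : ∀ k, IsCompact (D k ∩ f ⁻¹' {y}) :=
        fun k => (hQk k).1.inter_right (isClosed_singleton.preimage hf)
      have hcl : ∀ k, IsClosed (D k ∩ f ⁻¹' {y}) :=
        fun k => (hQk k).1.isClosed.inter (isClosed_singleton.preimage hf)
      have hdir : Directed (· ⊇ ·) fun k => D k ∩ f ⁻¹' {y} := by
        intro i j
        refine ⟨max i j, ?_, ?_⟩
        · exact inter_subset_inter_left _ (hDanti (le_max_left i j))
        · exact inter_subset_inter_left _ (hDanti (le_max_right i j))
      obtain ⟨x, hx⟩ :=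
        IsCompact.nonempty_iInter_of_directed_nonempty_isCompact_isClosed _ hdir hne hcmp hcl
      have hxK : x ∈ K := mem_iInter.2 fun k => (mem_iInter.1 hx k).1
      have hfx : f x = y := by
        have := (mem_iInter.1 hx 0).2
        simpa using this
      exact ⟨x, hxK, hfx⟩
  rw [himg]
  have hmeasur : ∀ k, NullMeasurableSet (f '' D k) (volume : Measure ℝ) :=
    fun k => (((hQk k).1.image hf).isClosed.measurableSet).nullMeasurableSet
  have hfin : ∃ k, volume (f '' D k) ≠ ∞ :=
    ⟨0, ((hQk 0).1.image hf).measure_lt_top.ne⟩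
  have hanti : Antitone fun k => f '' D k := fun i j h => image_mono (f := f) (hDanti h)
  rw [Antitone.measure_iInter hanti hmeasur hfin]
  refine lt_of_lt_of_le hc0 (le_iInf fun k => ?_)
  exact le_trans (hQk k).2.2.le (measure_mono (image_mono (f := f) inter_subset_right))
end

section
/- Let f : ℝ → ℝ be continuous and satisfy Luzin's property (N). Then for Lebesgue-almost every y ∈ ℝ, the fiber f⁻¹({y}) is countable; that is, the set {y ∈ ℝ : f⁻¹({y}) is uncountable} has Lebesgue measure zero. -/
open MeasureTheory Set Filter
open scoped ENNReal Classical Topology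

noncomputable section
namespace LZhelper

variable (f : ℝ → ℝ)

/-- levels whose fiber is uncountable within the open rational interval -/
def unc (c : ℚ × ℚ) : Set ℝ :=
  {y : ℝ | ¬ (f ⁻¹' {y} ∩ Set.Ioo (c.1 : ℝ) (c.2 : ℝ)).Countable}

/-- measurable hull of `unc`, within the compact image -/
def Bset (c : ℚ × ℚ) : Set ℝ :=
  toMeasurable volume (unc f c) ∩ f '' Set.Icc (c.1 : ℝ) (c.2 : ℝ)

def child (c : ℚ × ℚ) (k : ℕ) (j : ℕ) : ℚ × ℚ :=
  (c.1 + j * (c.2 - c.1) / k, c.1 + (j + 1) * (c.2 - c.1) / k)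

def cnt (c : ℚ × ℚ) (k : ℕ) (y : ℝ) : ℕ :=
  ∑ j ∈ Finset.range k, if y ∈ Bset f (child c k j) then 1 else 0

lemma cnt_eq_card (c : ℚ × ℚ) (k : ℕ) (y : ℝ) :
    cnt f c k y = ((Finset.range k).filter (fun j => y ∈ Bset f (child c k j))).card :=
  (Finset.card_filter _ _).symm

def tailSet (c : ℚ × ℚ) : Set ℝ :=
  ⋂ (R : ℕ), ⋃ (K : ℕ), ⋂ (k : ℕ), ⋂ (_ : K ≤ k), {y | R ≤ cnt f c k y}

def Nstar : Set ℝ := ⋃ (c : ℚ × ℚ), (Bset f c \ tailSet f c)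

lemma unc_subset_image (c : ℚ × ℚ) : unc f c ⊆ f '' Set.Icc (c.1 : ℝ) (c.2 : ℝ) := by
  intro y hy
  have hne : (f ⁻¹' {y} ∩ Set.Ioo (c.1 : ℝ) (c.2 : ℝ)).Nonempty := by
    by_contra h
    rw [Set.not_nonempty_iff_eq_empty] at h
    exact hy (h ▸ Set.countable_empty)
  obtain ⟨x, hx1, hx2⟩ := hne
  exact ⟨x, Set.Ioo_subset_Icc_self hx2, hx1⟩

lemma unc_subset_Bset (c : ℚ × ℚ) : unc f c ⊆ Bset f c :=
  fun y hy => ⟨subset_toMeasurable _ _ hy, unc_subset_image f c hy⟩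

lemma measurableSet_Bset (hf : Continuous f) (c : ℚ × ℚ) : MeasurableSet (Bset f c) :=
  (measurableSet_toMeasurable _ _).inter
    ((isCompact_Icc.image hf).isClosed.measurableSet)

lemma Bset_volume_lt_top (hf : Continuous f) (c : ℚ × ℚ) : volume (Bset f c) < ⊤ :=
  lt_of_le_of_lt (measure_mono Set.inter_subset_right) (isCompact_Icc.image hf).measure_lt_top

lemma measurable_cnt (hf : Continuous f) (c : ℚ × ℚ) (k : ℕ) : Measurable (fun y => cnt f c k y) := by
  exact Finset.measurable_sum _ (fun j _ =>
    Measurable.ite (measurableSet_Bset f hf _) measurable_const measurable_const)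

lemma measurableSet_tailSet (hf : Continuous f) (c : ℚ × ℚ) : MeasurableSet (tailSet f c) := by
  refine MeasurableSet.iInter (fun R => MeasurableSet.iUnion (fun K =>
    MeasurableSet.iInter (fun k => MeasurableSet.iInter (fun _ => ?_))))
  exact (measurable_cnt f hf c k) (measurableSet_Ici (a := R))

lemma Bset_diff_null (hf : Continuous f) {M : Set ℝ} (c : ℚ × ℚ) (hM : MeasurableSet M)
    (hsub : unc f c ⊆ M) : volume (Bset f c \ M) = 0 := by
  have h1 : volume (Bset f c ∩ M) + volume (Bset f c \ M) = volume (Bset f c) :=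
    measure_inter_add_diff _ hM
  have h2 : volume (Bset f c) ≤ volume (Bset f c ∩ M) := by
    calc volume (Bset f c) ≤ volume (toMeasurable volume (unc f c)) :=
          measure_mono Set.inter_subset_left
    _ = volume (unc f c) := measure_toMeasurable _
    _ ≤ volume (Bset f c ∩ M) :=
          measure_mono (fun y hy => ⟨unc_subset_Bset f c hy, hsub hy⟩)
  have hfin : volume (Bset f c ∩ M) ≠ ⊤ :=
    (lt_of_le_of_lt (measure_mono Set.inter_subset_left) (Bset_volume_lt_top f hf c)).ne
  have : volume (Bset f c ∩ M) + volume (Bset f c \ M)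
      ≤ volume (Bset f c ∩ M) + 0 := by
    rw [add_zero]; exact h1.le.trans h2
  simpa using (ENNReal.add_le_add_iff_left hfin).mp this

/-- an uncountable set of reals has uncountably many condensation points in itself,
avoiding any fixed countable set -/
lemma exists_cond (C : Set ℝ) (hC : ¬ C.Countable) (G : Set ℝ) (hG : G.Countable) :
    ¬ {x | x ∈ C ∧ x ∉ G ∧
        ∀ ε : ℝ, 0 < ε → ¬ (C ∩ Set.Ioo (x - ε) (x + ε)).Countable}.Countable := by
  intro hE
  set D := {x : ℝ | ∀ ε : ℝ, 0 < ε → ¬ (C ∩ Set.Ioo (x - ε) (x + ε)).Countable} with hD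
  have hCD : (C \ D).Countable := by
    have hsub : C \ D ⊆ ⋃ (uv : ℚ × ℚ) (_ : (C ∩ Set.Ioo (uv.1 : ℝ) (uv.2 : ℝ)).Countable),
        (C ∩ Set.Ioo (uv.1 : ℝ) (uv.2 : ℝ)) := by
      rintro x ⟨hxC, hxD⟩
      simp only [hD, mem_setOf_eq, not_forall] at hxD
      obtain ⟨ε, hε, hcnt⟩ := hxD
      rw [not_not] at hcnt
      obtain ⟨u, hu1, hu2⟩ := exists_rat_btwn (show x - ε < x by linarith)
      obtain ⟨v, hv1, hv2⟩ := exists_rat_btwn (show x < x + ε by linarith)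
      have hsub2 : C ∩ Set.Ioo (u:ℝ) (v:ℝ) ⊆ C ∩ Set.Ioo (x-ε) (x+ε) := by
        rintro z ⟨hz1, hz2, hz3⟩
        exact ⟨hz1, lt_trans hu1 hz2, lt_trans hz3 hv2⟩
      simp only [mem_iUnion]
      exact ⟨(u, v), hcnt.mono hsub2, hxC, hu2, hv1⟩
    refine Set.Countable.mono hsub ?_
    refine Set.Countable.biUnion (Set.to_countable _) ?_
    intro uv huv
    exact huv
  apply hC
  have : C ⊆ (C \ D) ∪ ({x | x ∈ C ∧ x ∉ G ∧
      ∀ ε : ℝ, 0 < ε → ¬ (C ∩ Set.Ioo (x - ε) (x + ε)).Countable} ∪ G) := by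
    intro x hx
    by_cases hxD : x ∈ D
    · by_cases hxG : x ∈ G
      · exact Or.inr (Or.inr hxG)
      · exact Or.inr (Or.inl ⟨hx, hxG, hxD⟩)
    · exact Or.inl ⟨hx, hxD⟩
  exact Set.Countable.mono this (hCD.union (hE.union hG))

lemma child_fst_cast (c : ℚ × ℚ) (k : ℕ) (j : ℕ) :
    (((child c k j).1 : ℚ) : ℝ) = (c.1 : ℝ) + j * (((c.2 : ℝ) - c.1) / k) := by
  simp only [child]
  push_cast
  ring

lemma child_snd_cast (c : ℚ × ℚ) (k : ℕ) (j : ℕ) :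
    (((child c k j).2 : ℚ) : ℝ) = (c.1 : ℝ) + (j + 1) * (((c.2 : ℝ) - c.1) / k) := by
  simp only [child]
  push_cast
  ring

lemma unc_subset_tailSet (c : ℚ × ℚ) : unc f c ⊆ tailSet f c := by
  rcases le_or_gt c.2 c.1 with hba | hab
  · intro y hy
    exfalso
    apply hy
    have h0 : Set.Ioo (c.1:ℝ) (c.2:ℝ) = ∅ := Set.Ioo_eq_empty (by exact_mod_cast not_lt.mpr hba)
    show (f ⁻¹' {y} ∩ Set.Ioo (c.1:ℝ) (c.2:ℝ)).Countable
    rw [h0, Set.inter_empty]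
    exact Set.countable_empty
  · intro y hy
    have habR : (c.1 : ℝ) < (c.2 : ℝ) := by exact_mod_cast hab
    set C := f ⁻¹' {y} ∩ Set.Ioo (c.1:ℝ) (c.2:ℝ) with hCdef
    have hE := exists_cond C hy (Set.range ((↑) : ℚ → ℝ)) (Set.countable_range _)
    have hEinf : {x | x ∈ C ∧ x ∉ Set.range ((↑) : ℚ → ℝ) ∧
        ∀ ε : ℝ, 0 < ε → ¬ (C ∩ Set.Ioo (x - ε) (x + ε)).Countable}.Infinite := by
      intro hfin
      exact hE hfin.countable
    obtain emb := hEinf.natEmbedding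
    set xs : ℕ → ℝ := fun i => (emb i : ℝ) with hxs
    have hxsInj : Function.Injective xs := by
      intro i j h
      exact emb.injective (Subtype.ext h)
    have hxsC : ∀ i, xs i ∈ C := fun i => (emb i).2.1
    have hxsG : ∀ i, xs i ∉ Set.range ((↑) : ℚ → ℝ) := fun i => (emb i).2.2.1
    have hxsD : ∀ i, ∀ ε : ℝ, 0 < ε → ¬ (C ∩ Set.Ioo (xs i - ε) (xs i + ε)).Countable :=
      fun i => (emb i).2.2.2
    simp only [tailSet, Set.mem_iInter, Set.mem_iUnion, Set.mem_setOf_eq]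
    intro R
    set gs : Finset ℝ := insert (1:ℝ)
      (((Finset.range R ×ˢ Finset.range R).filter (fun ij => ij.1 ≠ ij.2)).image
        (fun ij => |xs ij.1 - xs ij.2|)) with hgs
    have hgsne : gs.Nonempty := ⟨1, Finset.mem_insert_self _ _⟩
    set g := gs.min' hgsne with hgdef
    have hgpos : 0 < g := by
      rw [hgdef, show (0:ℝ) < gs.min' hgsne ↔ ∀ b ∈ gs, 0 < b from Finset.lt_min'_iff gs hgsne]
      intro b hb
      rcases Finset.mem_insert.mp hb with h1 | h2
      · rw [h1]; norm_num
      · obtain ⟨ij, hij, hb⟩ := Finset.mem_image.mp h2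
        have : ij.1 ≠ ij.2 := (Finset.mem_filter.mp hij).2
        rw [← hb]
        exact abs_pos.mpr (sub_ne_zero.mpr (fun hc => this (hxsInj hc)))
    have hgap : ∀ i j, i < R → j < R → i ≠ j → g ≤ |xs i - xs j| := by
      intro i j hi hj hij
      apply Finset.min'_le
      apply Finset.mem_insert_of_mem
      exact Finset.mem_image.mpr ⟨(i, j), Finset.mem_filter.mpr
        ⟨Finset.mem_product.mpr ⟨Finset.mem_range.mpr hi, Finset.mem_range.mpr hj⟩, hij⟩, rfl⟩
    obtain ⟨K0, hK0⟩ := exists_nat_gt (((c.2:ℝ) - c.1) / g)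
    refine ⟨max K0 1, ?_⟩
    intro k hk
    have hk1 : 1 ≤ k := le_trans (le_max_right K0 1) hk
    have hkpos : (0:ℝ) < k := by exact_mod_cast hk1
    set δ := ((c.2:ℝ) - c.1) / k with hδdef
    have hδpos : 0 < δ := div_pos (by linarith) hkpos
    have hδg : δ < g := by
      rw [hδdef, div_lt_iff₀ hkpos]
      have h1 : ((c.2:ℝ) - c.1) / g < K0 := hK0
      have h2 : (K0:ℝ) ≤ k := by
        exact_mod_cast le_trans (le_max_left K0 1) hk
      rw [div_lt_iff₀ hgpos] at h1
      nlinarith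
    have hkδ : (k:ℝ) * δ = (c.2:ℝ) - c.1 := by
      rw [hδdef]; field_simp
    set jfun : ℕ → ℕ := fun i => (⌊(xs i - (c.1:ℝ)) / δ⌋).toNat with hjfun
    have hmain : ∀ i, i < R → jfun i < k ∧
        ((c.1:ℝ) + jfun i * δ < xs i ∧ xs i < (c.1:ℝ) + (jfun i + 1) * δ) := by
      intro i _
      have hxIoo : xs i ∈ Set.Ioo (c.1:ℝ) (c.2:ℝ) := (hxsC i).2
      set t := (xs i - (c.1:ℝ)) / δ with htdef
      have htpos : 0 < t := div_pos (by linarith [hxIoo.1]) hδpos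
      have htk : t < k := by
        rw [htdef, div_lt_iff₀ hδpos]
        calc xs i - (c.1:ℝ) < (c.2:ℝ) - c.1 := by linarith [hxIoo.2]
        _ = k * δ := hkδ.symm
      have hjeq : ((jfun i : ℤ) : ℝ) = ((⌊t⌋ : ℤ) : ℝ) := by
        simp only [hjfun]
        norm_cast
        exact Int.toNat_of_nonneg (Int.floor_nonneg.mpr htpos.le)
      have hjcast : (jfun i : ℝ) = ((⌊t⌋ : ℤ) : ℝ) := by
        rw [show ((jfun i : ℝ)) = ((jfun i : ℤ) : ℝ) by norm_cast]
        exact hjeq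
      have hjle : (jfun i : ℝ) * δ ≤ xs i - (c.1:ℝ) := by
        have h1 : ((⌊t⌋ : ℤ) : ℝ) ≤ t := Int.floor_le t
        have h2 : (jfun i : ℝ) ≤ t := by rw [hjcast]; exact h1
        calc (jfun i : ℝ) * δ ≤ t * δ := by nlinarith
        _ = xs i - (c.1:ℝ) := by rw [htdef]; field_simp
      have hjlt : xs i - (c.1:ℝ) < ((jfun i : ℝ) + 1) * δ := by
        have h1 : t < ((⌊t⌋ : ℤ) : ℝ) + 1 := Int.lt_floor_add_one t
        have h2 : t < (jfun i : ℝ) + 1 := by rw [hjcast]; exact h1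
        calc xs i - (c.1:ℝ) = t * δ := by rw [htdef]; field_simp
        _ < ((jfun i : ℝ) + 1) * δ := by nlinarith
      have hjk : jfun i < k := by
        have h3 : ((⌊t⌋ : ℤ) : ℝ) < (k:ℝ) := by
          have := Int.floor_lt.mpr (show t < ((k:ℤ):ℝ) by exact_mod_cast htk)
          exact_mod_cast this
        have h4 : ((jfun i : ℝ)) < ((k:ℕ):ℝ) := by rw [hjcast]; exact_mod_cast h3
        exact_mod_cast h4
      have hstrict : (c.1:ℝ) + jfun i * δ < xs i := by
        rcases lt_or_eq_of_le hjle with h | h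
        · linarith
        · exfalso
          apply hxsG i
          refine ⟨c.1 + (jfun i) * (c.2 - c.1) / k, ?_⟩
          push_cast
          rw [mul_div_assoc, ← hδdef]
          linarith
      exact ⟨hjk, hstrict, by linarith⟩
    have hinj : Set.InjOn jfun (Finset.range R : Set ℕ) := by
      intro i hi j hj hij
      by_contra hne
      have h1 := hmain i (by simpa using hi)
      have h2 := hmain j (by simpa using hj)
      have habs : |xs i - xs j| < δ := by
        rw [abs_lt]
        rw [hij] at h1
        constructor <;> [nlinarith [h1.2.1, h1.2.2, h2.2.1, h2.2.2];
          nlinarith [h1.2.1, h1.2.2, h2.2.1, h2.2.2]]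
      have := hgap i j (by simpa using hi) (by simpa using hj) hne
      linarith
    rw [cnt_eq_card]
    have hsubJ : (Finset.range R).image jfun ⊆
        (Finset.range k).filter (fun j => y ∈ Bset f (child c k j)) := by
      intro j hj
      obtain ⟨i, hi, rfl⟩ := Finset.mem_image.mp hj
      have him := hmain i (Finset.mem_range.mp hi)
      refine Finset.mem_filter.mpr ⟨Finset.mem_range.mpr him.1, ?_⟩
      apply unc_subset_Bset
      show ¬ (f ⁻¹' {y} ∩ Set.Ioo (((child c k (jfun i)).1 : ℚ) : ℝ)
        (((child c k (jfun i)).2 : ℚ) : ℝ)).Countable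
      rw [child_fst_cast, child_snd_cast, ← hδdef]
      set x := xs i with hxdef
      set L := (c.1:ℝ) + (jfun i) * δ with hLdef
      set Rr := (c.1:ℝ) + ((jfun i : ℝ) + 1) * δ with hRdef
      have hL : L < x := him.2.1
      have hR : x < Rr := him.2.2
      set ε := min (x - L) (Rr - x) with hε
      have hεpos : 0 < ε := lt_min (by linarith) (by linarith)
      intro hcnt
      apply hxsD i ε hεpos
      refine hcnt.mono ?_
      rintro z ⟨⟨hz1, _⟩, hz3, hz4⟩
      have hεL : ε ≤ x - L := min_le_left _ _
      have hεR : ε ≤ Rr - x := min_le_right _ _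
      exact ⟨hz1, by linarith, by linarith⟩
    calc R = ((Finset.range R).image jfun).card := by
          rw [Finset.card_image_of_injOn hinj, Finset.card_range]
    _ ≤ _ := Finset.card_le_card hsubJ



-- generic finset sum helpers in ℝ≥0∞
lemma sum_image_le' {α β : Type*} [DecidableEq β] (s : Finset α) (g : α → β) (w : β → ℝ≥0∞) :
    ∑ b ∈ s.image g, w b ≤ ∑ a ∈ s, w (g a) := by
  induction s using Finset.induction_on with
  | empty => simp
  | @insert a t ha ih =>
      rw [Finset.image_insert, Finset.sum_insert ha]
      by_cases h : g a ∈ t.image g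
      · rw [Finset.insert_eq_self.mpr h]
        exact le_add_of_nonneg_of_le (zero_le) ih
      · rw [Finset.sum_insert h]
        exact add_le_add le_rfl ih

lemma sum_biUnion_le' {α β : Type*} [DecidableEq β] (s : Finset α) (t : α → Finset β)
    (w : β → ℝ≥0∞) :
    ∑ b ∈ s.biUnion t, w b ≤ ∑ a ∈ s, ∑ b ∈ t a, w b := by
  induction s using Finset.induction_on with
  | empty => simp
  | @insert a u ha ih =>
      rw [Finset.biUnion_insert, Finset.sum_insert ha]
      calc ∑ b ∈ t a ∪ u.biUnion t, w b ≤ ∑ b ∈ t a, w b + ∑ b ∈ u.biUnion t, w b := by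
            rw [← Finset.sum_union_inter]
            exact le_self_add
        _ ≤ _ := add_le_add le_rfl ih


lemma volume_Nstar (hf : Continuous f) : volume (Nstar f) = 0 := by
  apply measure_iUnion_null
  intro c
  exact Bset_diff_null f hf c (measurableSet_tailSet f hf c) (unc_subset_tailSet f c)

def lenE (c : ℚ × ℚ) : ℝ≥0∞ := ENNReal.ofReal ((c.2 : ℝ) - c.1)

def lenS (S : Finset (ℚ × ℚ)) : ℝ≥0∞ := ∑ c ∈ S, lenE c

def KS (S : Finset (ℚ × ℚ)) : Set ℝ := ⋃ c ∈ S, Set.Icc (c.1 : ℝ) (c.2 : ℝ)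

lemma isClosed_KS (S : Finset (ℚ × ℚ)) : IsClosed (KS S) :=
  S.finite_toSet.isClosed_biUnion (fun _ _ => isClosed_Icc)

lemma volume_KS_le (S : Finset (ℚ × ℚ)) : volume (KS S) ≤ lenS S := by
  refine le_trans (measure_biUnion_finset_le S _) ?_
  refine Finset.sum_le_sum (fun c _ => ?_)
  rw [Real.volume_Icc]
  exact le_of_eq rfl

lemma lenE_ne_top (c : ℚ × ℚ) : lenE c ≠ ⊤ := ENNReal.ofReal_ne_top

lemma lenS_ne_top (S : Finset (ℚ × ℚ)) : lenS S ≠ ⊤ := by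
  rw [lenS]
  exact (ENNReal.sum_lt_top.mpr (fun c _ => (lenE_ne_top c).lt_top)).ne

lemma child_valid {c : ℚ × ℚ} (hc : c.1 < c.2) {k : ℕ} (hk : 1 ≤ k) (j : ℕ) :
    (child c k j).1 < (child c k j).2 := by
  simp only [child]
  have hk0 : (0:ℚ) < (k:ℚ) := by exact_mod_cast hk
  have hd : (0:ℚ) < c.2 - c.1 := sub_pos.mpr hc
  have h := div_pos hd hk0
  rw [mul_div_assoc, mul_div_assoc]
  have hj0 : (0:ℚ) ≤ (j:ℚ) := by positivity
  nlinarith [h]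

lemma child_Icc_subset {c : ℚ × ℚ} (hc : c.1 < c.2) {k : ℕ} (hk : 1 ≤ k) {j : ℕ} (hj : j < k) :
    Set.Icc (((child c k j).1 : ℚ) : ℝ) (((child c k j).2 : ℚ) : ℝ)
      ⊆ Set.Icc (c.1 : ℝ) (c.2 : ℝ) := by
  apply Set.Icc_subset_Icc
  · rw [child_fst_cast]
    have hd : (0:ℝ) ≤ (c.2:ℝ) - c.1 := by
      have : (c.1:ℝ) < c.2 := by exact_mod_cast hc
      linarith
    have h1 : (0:ℝ) ≤ (j:ℝ) * (((c.2:ℝ) - c.1) / k) := by positivity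
    linarith
  · rw [child_snd_cast]
    have hkR : (0:ℝ) < (k:ℝ) := by exact_mod_cast hk
    have hj1 : ((j:ℝ) + 1) ≤ (k:ℝ) := by exact_mod_cast hj
    have hd : (0:ℝ) ≤ (c.2:ℝ) - c.1 := by
      have : (c.1:ℝ) < c.2 := by exact_mod_cast hc
      linarith
    have h2 : ((j:ℝ) + 1) * (((c.2:ℝ) - c.1) / k) ≤ (k:ℝ) * (((c.2:ℝ) - c.1) / k) := by
      apply mul_le_mul_of_nonneg_right hj1
      positivity
    have h3 : (k:ℝ) * (((c.2:ℝ) - c.1) / k) = (c.2:ℝ) - c.1 := by field_simp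
    linarith [h2, h3.le]

lemma lenE_child {c : ℚ × ℚ} {k : ℕ} (j : ℕ) :
    lenE (child c k j) = ENNReal.ofReal (((c.2:ℝ) - c.1) / k) := by
  rw [lenE]
  congr 1
  rw [child_fst_cast, child_snd_cast]
  ring

lemma lenS_children_le {c : ℚ × ℚ} (hc : c.1 < c.2) {k : ℕ} (hk : 1 ≤ k) :
    lenS ((Finset.range k).image (child c k)) ≤ lenE c := by
  refine le_trans (sum_image_le' _ _ _) ?_
  have heach : ∀ j ∈ Finset.range k, lenE (child c k j)
      = ENNReal.ofReal (((c.2:ℝ) - c.1) / k) := fun j _ => lenE_child j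
  rw [Finset.sum_congr rfl heach, Finset.sum_const, Finset.card_range, nsmul_eq_mul]
  have hkR : (0:ℝ) < (k:ℝ) := by exact_mod_cast hk
  rw [← ENNReal.ofReal_natCast k, ← ENNReal.ofReal_mul (by positivity)]
  rw [lenE]
  apply le_of_eq
  congr 1
  field_simp

section Prob

variable {α : Type*} [DecidableEq α]

noncomputable def wgt (p : ℝ≥0∞) (U T : Finset α) : ℝ≥0∞ := p ^ T.card * (1 - p) ^ (U \ T).card

lemma wgt_sum_ind (p : ℝ≥0∞) (hp : p ≤ 1) (U : Finset α) :
    ∀ V : Finset α, V ⊆ U →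
      ∑ T ∈ U.powerset, wgt p U T * (if V ∩ T = ∅ then 1 else 0) = (1 - p) ^ V.card := by
  induction U using Finset.induction_on with
  | empty =>
      intro V hV
      rw [Finset.subset_empty.mp hV]
      simp [wgt]
  | @insert a s ha ih =>
      intro V hV
      rw [Finset.sum_powerset_insert ha]
      have hw1 : ∀ T ∈ s.powerset, wgt p (insert a s) T = (1 - p) * wgt p s T := by
        intro T hT
        have hTs : T ⊆ s := Finset.mem_powerset.mp hT
        have haT : a ∉ T := fun h => ha (hTs h)
        have : insert a s \ T = insert a (s \ T) := by
          ext x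
          simp only [Finset.mem_sdiff, Finset.mem_insert]
          constructor
          · rintro ⟨h1 | h1, h2⟩
            · exact Or.inl h1
            · exact Or.inr ⟨h1, h2⟩
          · rintro (rfl | ⟨h1, h2⟩)
            · exact ⟨Or.inl rfl, haT⟩
            · exact ⟨Or.inr h1, h2⟩
        rw [wgt, wgt, this, Finset.card_insert_of_notMem (fun h => ha (Finset.mem_sdiff.mp h).1),
          pow_succ]
        ring
      have hw2 : ∀ T ∈ s.powerset, wgt p (insert a s) (insert a T) = p * wgt p s T := by
        intro T hT
        have hTs : T ⊆ s := Finset.mem_powerset.mp hT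
        have haT : a ∉ T := fun h => ha (hTs h)
        have : insert a s \ insert a T = s \ T := by
          ext x
          simp only [Finset.mem_sdiff, Finset.mem_insert, not_or]
          constructor
          · rintro ⟨h1 | h1, h2, h3⟩
            · exact absurd h1 h2
            · exact ⟨h1, h3⟩
          · rintro ⟨h1, h2⟩
            exact ⟨Or.inr h1, fun hx => ha (hx ▸ h1), h2⟩
        rw [wgt, wgt, this, Finset.card_insert_of_notMem haT, pow_succ]
        ring
      by_cases haV : a ∈ V
      · have hV' : V.erase a ⊆ s := fun x hx => by
          have := hV (Finset.mem_of_mem_erase hx)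
          rcases Finset.mem_insert.mp this with rfl | h
          · exact absurd rfl (Finset.ne_of_mem_erase hx)
          · exact h
        have hcard : V.card = (V.erase a).card + 1 := by
          have h1 : 1 ≤ V.card := Finset.card_pos.mpr ⟨a, haV⟩
          rw [Finset.card_erase_of_mem haV]
          omega
        have h2 : ∀ T ∈ s.powerset, (V ∩ insert a T ≠ ∅) := by
          intro T _
          intro h
          have : a ∈ V ∩ insert a T := Finset.mem_inter.mpr ⟨haV, Finset.mem_insert_self _ _⟩
          rw [h] at this
          exact absurd this (Finset.notMem_empty a)
        have h3 : ∀ T ∈ s.powerset, (V ∩ T = ∅ ↔ V.erase a ∩ T = ∅) := by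
          intro T hT
          have hTs : T ⊆ s := Finset.mem_powerset.mp hT
          have haT : a ∉ T := fun h => ha (hTs h)
          constructor
          · intro h
            rw [Finset.eq_empty_iff_forall_notMem] at h ⊢
            intro x hx
            exact h x (Finset.mem_inter.mpr
              ⟨Finset.mem_of_mem_erase (Finset.mem_inter.mp hx).1, (Finset.mem_inter.mp hx).2⟩)
          · intro h
            rw [Finset.eq_empty_iff_forall_notMem] at h ⊢
            intro x hx
            obtain ⟨hx1, hx2⟩ := Finset.mem_inter.mp hx
            have hxa : x ≠ a := fun hc => haT (hc ▸ hx2)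
            exact h x (Finset.mem_inter.mpr ⟨Finset.mem_erase.mpr ⟨hxa, hx1⟩, hx2⟩)
        calc ∑ T ∈ s.powerset, wgt p (insert a s) T * (if V ∩ T = ∅ then 1 else 0)
              + ∑ T ∈ s.powerset, wgt p (insert a s) (insert a T) * (if V ∩ insert a T = ∅ then 1 else 0)
            = ∑ T ∈ s.powerset, (1 - p) * (wgt p s T * (if V.erase a ∩ T = ∅ then 1 else 0))
              + ∑ T ∈ s.powerset, wgt p (insert a s) (insert a T) * 0 := by
              congr 1
              · refine Finset.sum_congr rfl (fun T hT => ?_)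
                rw [hw1 T hT, if_congr (h3 T hT) rfl rfl]
                ring
              · refine Finset.sum_congr rfl (fun T hT => ?_)
                rw [if_neg (h2 T hT)]
          _ = (1 - p) * ((1 - p) ^ (V.erase a).card) := by
              rw [← Finset.mul_sum, ih (V.erase a) hV']
              simp
          _ = (1 - p) ^ V.card := by rw [hcard, pow_succ]; ring
      · have hVs : V ⊆ s := fun x hx => by
          rcases Finset.mem_insert.mp (hV hx) with rfl | h
          · exact absurd hx haV
          · exact h
        have h3 : ∀ T ∈ s.powerset, (V ∩ insert a T = ∅ ↔ V ∩ T = ∅) := by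
          intro T _
          constructor
          · intro h
            rw [Finset.eq_empty_iff_forall_notMem] at h ⊢
            intro x hx
            obtain ⟨hx1, hx2⟩ := Finset.mem_inter.mp hx
            exact h x (Finset.mem_inter.mpr ⟨hx1, Finset.mem_insert_of_mem hx2⟩)
          · intro h
            rw [Finset.eq_empty_iff_forall_notMem] at h ⊢
            intro x hx
            obtain ⟨hx1, hx2⟩ := Finset.mem_inter.mp hx
            rcases Finset.mem_insert.mp hx2 with rfl | hx2'
            · exact haV hx1
            · exact h x (Finset.mem_inter.mpr ⟨hx1, hx2'⟩)
        calc ∑ T ∈ s.powerset, wgt p (insert a s) T * (if V ∩ T = ∅ then 1 else 0)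
              + ∑ T ∈ s.powerset, wgt p (insert a s) (insert a T) * (if V ∩ insert a T = ∅ then 1 else 0)
            = (1 - p) * ∑ T ∈ s.powerset, wgt p s T * (if V ∩ T = ∅ then 1 else 0)
              + p * ∑ T ∈ s.powerset, wgt p s T * (if V ∩ T = ∅ then 1 else 0) := by
              rw [Finset.mul_sum, Finset.mul_sum]
              congr 1
              · refine Finset.sum_congr rfl (fun T hT => ?_)
                rw [hw1 T hT]; ring
              · refine Finset.sum_congr rfl (fun T hT => ?_)
                rw [hw2 T hT, if_congr (h3 T hT) rfl rfl]; ring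
          _ = ((1 - p) + p) * ((1 - p) ^ V.card) := by
              rw [ih V hVs]; ring
          _ = (1 - p) ^ V.card := by
              rw [tsub_add_cancel_of_le hp, one_mul]

lemma wgt_sum_one (p : ℝ≥0∞) (hp : p ≤ 1) (U : Finset α) :
    ∑ T ∈ U.powerset, wgt p U T = 1 := by
  have := wgt_sum_ind p hp U ∅ (Finset.empty_subset _)
  simpa using this

lemma wgt_sum_mem (p : ℝ≥0∞) (hp : p ≤ 1) (U : Finset α) (u : α) (hu : u ∈ U) :
    ∑ T ∈ U.powerset, wgt p U T * (if u ∈ T then 1 else 0) = p := by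
  have h1 := wgt_sum_ind p hp U {u} (Finset.singleton_subset_iff.mpr hu)
  rw [Finset.card_singleton, pow_one] at h1
  have h2 := wgt_sum_one p hp U
  have key : ∀ T : Finset α,
      wgt p U T * (if u ∈ T then 1 else 0) + wgt p U T * (if {u} ∩ T = ∅ then 1 else 0)
        = wgt p U T := by
    intro T
    by_cases h : u ∈ T
    · rw [if_pos h, if_neg, mul_one, mul_zero, add_zero]
      intro hc
      have : u ∈ ({u} : Finset α) ∩ T := Finset.mem_inter.mpr ⟨Finset.mem_singleton_self u, h⟩
      rw [hc] at this
      exact absurd this (Finset.notMem_empty u)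
    · rw [if_neg h, if_pos, mul_zero, mul_one, zero_add]
      rw [Finset.eq_empty_iff_forall_notMem]
      intro x hx
      obtain ⟨hx1, hx2⟩ := Finset.mem_inter.mp hx
      rw [Finset.mem_singleton.mp hx1] at hx2
      exact h hx2
  have h3 : (∑ T ∈ U.powerset, wgt p U T * (if u ∈ T then 1 else 0))
      + (∑ T ∈ U.powerset, wgt p U T * (if {u} ∩ T = ∅ then 1 else 0))
      = ∑ T ∈ U.powerset, wgt p U T := by
    rw [← Finset.sum_add_distrib]
    exact Finset.sum_congr rfl (fun T _ => key T)
  rw [h1, h2] at h3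
  have h4 : (1:ℝ≥0∞) - (1 - p) = p := ENNReal.sub_sub_cancel ENNReal.one_ne_top hp
  have h5 := ENNReal.eq_sub_of_add_eq
    (ne_top_of_le_ne_top ENNReal.one_ne_top tsub_le_self) h3
  exact h5.trans h4

lemma wgt_sum_len (p : ℝ≥0∞) (hp : p ≤ 1) (U : Finset α) (len : α → ℝ≥0∞) :
    ∑ T ∈ U.powerset, wgt p U T * (∑ c ∈ T, len c) = p * ∑ c ∈ U, len c := by
  have hinner : ∀ T ∈ U.powerset,
      (∑ c ∈ T, len c) = ∑ c ∈ U, len c * (if c ∈ T then 1 else 0) := by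
    intro T hT
    have hTU : T ⊆ U := Finset.mem_powerset.mp hT
    have h1 : ∀ c ∈ U, len c * (if c ∈ T then 1 else 0) = if c ∈ T then len c else 0 := by
      intro c _
      by_cases h : c ∈ T
      · rw [if_pos h, if_pos h, mul_one]
      · rw [if_neg h, if_neg h, mul_zero]
    rw [Finset.sum_congr rfl h1, Finset.sum_ite_mem, Finset.inter_eq_right.mpr hTU]
  calc ∑ T ∈ U.powerset, wgt p U T * (∑ c ∈ T, len c)
      = ∑ T ∈ U.powerset, ∑ c ∈ U, wgt p U T * (len c * (if c ∈ T then 1 else 0)) := by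
        refine Finset.sum_congr rfl (fun T hT => ?_)
        rw [hinner T hT, Finset.mul_sum]
    _ = ∑ c ∈ U, ∑ T ∈ U.powerset, wgt p U T * (len c * (if c ∈ T then 1 else 0)) :=
        Finset.sum_comm
    _ = ∑ c ∈ U, len c * p := by
        refine Finset.sum_congr rfl (fun c hc => ?_)
        have : ∀ T ∈ U.powerset, wgt p U T * (len c * (if c ∈ T then 1 else 0))
            = len c * (wgt p U T * (if c ∈ T then 1 else 0)) := by
          intro T _; ring
        rw [Finset.sum_congr rfl this, ← Finset.mul_sum, wgt_sum_mem p hp U c hc]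
    _ = p * ∑ c ∈ U, len c := by rw [← Finset.sum_mul]; ring

lemma expected_dead (p : ℝ≥0∞) (hp : p ≤ 1) (U : Finset α) (Bs : α → Set ℝ)
    (hBs : ∀ c, MeasurableSet (Bs c)) (cut : Set ℝ) (hcut : MeasurableSet cut)
    (R : ℕ) (hwit : ∀ y ∈ cut, R ≤ (U.filter (fun c => y ∈ Bs c)).card) :
    ∑ T ∈ U.powerset, wgt p U T * volume (cut \ ⋃ c ∈ (T:Finset α), Bs c)
      ≤ (1 - p) ^ R * volume cut := by
  have hmdead : ∀ T : Finset α, MeasurableSet (cut \ ⋃ c ∈ T, Bs c) := by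
    intro T
    exact hcut.diff (MeasurableSet.biUnion T.countable_toSet (fun c _ => hBs c))
  calc ∑ T ∈ U.powerset, wgt p U T * volume (cut \ ⋃ c ∈ (T:Finset α), Bs c)
      = ∑ T ∈ U.powerset, ∫⁻ y, wgt p U T *
          Set.indicator (cut \ ⋃ c ∈ (T:Finset α), Bs c) (fun _ => 1) y := by
        refine Finset.sum_congr rfl (fun T _ => ?_)
        rw [lintegral_const_mul _ (measurable_const.indicator (hmdead T)),
          lintegral_indicator_const (hmdead T), one_mul]
    _ = ∫⁻ y, ∑ T ∈ U.powerset, wgt p U T *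
          Set.indicator (cut \ ⋃ c ∈ (T:Finset α), Bs c) (fun _ => 1) y := by
        rw [lintegral_finset_sum]
        intro T _
        exact (measurable_const.indicator (hmdead T)).const_mul _
    _ ≤ ∫⁻ y, Set.indicator cut (fun _ => (1-p)^R) y := by
        refine lintegral_mono (fun y => ?_)
        by_cases hy : y ∈ cut
        · rw [Set.indicator_of_mem hy]
          have heq : ∀ T ∈ U.powerset,
              wgt p U T * Set.indicator (cut \ ⋃ c ∈ (T:Finset α), Bs c) (fun _ => 1) y
              = wgt p U T * (if (U.filter (fun c => y ∈ Bs c)) ∩ T = ∅ then 1 else 0) := by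
            intro T hT
            have hTU : T ⊆ U := Finset.mem_powerset.mp hT
            congr 1
            by_cases hdead : y ∈ cut \ ⋃ c ∈ (T:Finset α), Bs c
            · rw [Set.indicator_of_mem hdead, if_pos]
              rw [Finset.eq_empty_iff_forall_notMem]
              intro c hc
              obtain ⟨hc1, hc2⟩ := Finset.mem_inter.mp hc
              have := (Finset.mem_filter.mp hc1).2
              exact hdead.2 (Set.mem_biUnion hc2 this)
            · rw [Set.indicator_of_notMem hdead, if_neg]
              intro hemp
              apply hdead
              refine ⟨hy, ?_⟩
              intro hmem
              obtain ⟨c, hc1, hc2⟩ := Set.mem_iUnion₂.mp hmem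
              have : c ∈ (U.filter (fun c => y ∈ Bs c)) ∩ T :=
                Finset.mem_inter.mpr ⟨Finset.mem_filter.mpr ⟨hTU hc1, hc2⟩, hc1⟩
              rw [hemp] at this
              exact absurd this (Finset.notMem_empty c)
          rw [Finset.sum_congr rfl heq,
            wgt_sum_ind p hp U _ (Finset.filter_subset _ _)]
          have hR := hwit y hy
          calc (1-p) ^ (U.filter (fun c => y ∈ Bs c)).card
              = (1-p)^R * (1-p)^((U.filter (fun c => y ∈ Bs c)).card - R) := by
                rw [← pow_add]
                congr 1
                omega
            _ ≤ (1-p)^R * 1 := by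
                exact mul_le_mul_right (pow_le_one' tsub_le_self _) _
            _ = (1-p)^R := mul_one _
        · rw [Set.indicator_of_notMem hy]
          have : ∀ T ∈ U.powerset,
              wgt p U T * Set.indicator (cut \ ⋃ c ∈ (T:Finset α), Bs c) (fun _ => 1) y = 0 := by
            intro T _
            rw [Set.indicator_of_notMem (fun hc => hy hc.1), mul_zero]
          rw [Finset.sum_congr rfl this, Finset.sum_const_zero]
    _ = (1-p)^R * volume cut := lintegral_indicator_const hcut _

lemma exists_small₂ {ι : Type*} (s : Finset ι) (w g h : ι → ℝ≥0∞)
    (hw : ∑ i ∈ s, w i = 1)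
    (η₁ η₂ : ℝ≥0∞) (h10 : η₁ ≠ 0) (h1t : η₁ ≠ ⊤) (h20 : η₂ ≠ 0) (h2t : η₂ ≠ ⊤)
    (hg : ∑ i ∈ s, w i * g i ≤ η₁ / 3) (hh : ∑ i ∈ s, w i * h i ≤ η₂ / 3) :
    ∃ i ∈ s, g i ≤ η₁ ∧ h i ≤ η₂ := by
  by_contra hcon
  push_neg at hcon
  have key : ∀ i ∈ s, η₁ * η₂ ≤ g i * η₂ + h i * η₁ := by
    intro i hi
    rcases le_or_gt (g i) η₁ with hgi | hgi
    · have h2 : η₂ < h i := hcon i hi hgi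
      calc η₁ * η₂ = η₂ * η₁ := mul_comm _ _
        _ ≤ h i * η₁ := mul_le_mul_left h2.le _
        _ ≤ g i * η₂ + h i * η₁ := le_add_self
    · calc η₁ * η₂ ≤ g i * η₂ := mul_le_mul_left hgi.le _
        _ ≤ g i * η₂ + h i * η₁ := le_self_add
  have hbound : η₁ * η₂ ≤ (η₁/3) * η₂ + (η₂/3) * η₁ := by
    calc η₁ * η₂ = (∑ i ∈ s, w i) * (η₁ * η₂) := by rw [hw, one_mul]
      _ = ∑ i ∈ s, w i * (η₁ * η₂) := by rw [Finset.sum_mul]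
      _ ≤ ∑ i ∈ s, w i * (g i * η₂ + h i * η₁) := by
          exact Finset.sum_le_sum (fun i hi => mul_le_mul_right (key i hi) _)
      _ = (∑ i ∈ s, w i * g i) * η₂ + (∑ i ∈ s, w i * h i) * η₁ := by
          rw [Finset.sum_mul, Finset.sum_mul, ← Finset.sum_add_distrib]
          refine Finset.sum_congr rfl (fun i _ => ?_)
          ring
      _ ≤ (η₁/3) * η₂ + (η₂/3) * η₁ :=
          add_le_add (mul_le_mul_left hg _) (mul_le_mul_left hh _)
  have heq : (η₁/3) * η₂ + (η₂/3) * η₁ = (2/3) * (η₁ * η₂) := by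
    simp only [div_eq_mul_inv]
    ring
  rw [heq] at hbound
  have hlt : (2/3 : ℝ≥0∞) * (η₁ * η₂) < 1 * (η₁ * η₂) := by
    rw [ENNReal.mul_lt_mul_iff_left (mul_ne_zero h10 h20) (ENNReal.mul_ne_top h1t h2t)]
    norm_num
    rw [ENNReal.div_lt_iff (by norm_num) (by norm_num)]
    norm_num
  rw [one_mul] at hlt
  exact absurd hbound (not_le.mpr hlt)


end Prob

def lossB (a₀ b₀ : ℚ) (n : ℕ) : ℝ≥0∞ :=
  ∑ k ∈ Finset.range n, 2 * (volume (Bset f (a₀, b₀)) / 2 ^ (k + 3))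

lemma lossB_mono (a₀ b₀ : ℚ) {m n : ℕ} (h : m ≤ n) : lossB f a₀ b₀ m ≤ lossB f a₀ b₀ n := by
  apply Finset.sum_le_sum_of_subset
  exact Finset.range_subset_range.mpr h

def Inv (a₀ b₀ : ℚ) (n : ℕ) (S : Finset (ℚ × ℚ)) (al : Set ℝ) : Prop :=
  (∀ c ∈ S, c.1 < c.2) ∧ MeasurableSet al ∧
  al ⊆ Bset f (a₀, b₀) \ Nstar f ∧
  al ⊆ (⋃ c ∈ S, Bset f c) ∧
  lenS S ≤ lenE (a₀, b₀) * 2⁻¹ ^ n ∧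
  volume (Bset f (a₀, b₀)) ≤ volume al + lossB f a₀ b₀ n

lemma step_ex (hf : Continuous f) (a₀ b₀ : ℚ) (n : ℕ) (S : Finset (ℚ × ℚ)) (al : Set ℝ)
    (hInv : Inv f a₀ b₀ n S al) :
    ∃ S' al', Inv f a₀ b₀ (n + 1) S' al' ∧ KS S' ⊆ KS S ∧ al' ⊆ al := by
  obtain ⟨hpairs, hmeas, hcore, hcover, hlen, hmass⟩ := hInv
  by_cases h0 : volume al = 0
  · refine ⟨∅, ∅, ⟨?_, ?_, ?_, ?_, ?_, ?_⟩, ?_, ?_⟩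
    · intro c hc; exact absurd hc (Finset.notMem_empty c)
    · exact MeasurableSet.empty
    · exact Set.empty_subset _
    · exact Set.empty_subset _
    · exact zero_le
    · calc volume (Bset f (a₀, b₀)) ≤ volume al + lossB f a₀ b₀ n := hmass
        _ = volume (∅ : Set ℝ) + lossB f a₀ b₀ n := by rw [h0, measure_empty]
        _ ≤ volume (∅ : Set ℝ) + lossB f a₀ b₀ (n + 1) :=
            add_le_add le_rfl (lossB_mono f a₀ b₀ (Nat.le_succ n))
    · simp [KS]
    · exact Set.empty_subset _
  -- main case
  · set c₀ := volume (Bset f (a₀, b₀)) with hc₀def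
    have hc₀top : c₀ ≠ ⊤ := (Bset_volume_lt_top f hf _).ne
    have halB : al ⊆ Bset f (a₀, b₀) := fun y hy => (hcore hy).1
    have halfin : volume al ≠ ⊤ := (lt_of_le_of_lt (measure_mono halB)
      (Bset_volume_lt_top f hf _)).ne
    have hc₀0 : c₀ ≠ 0 := by
      intro hc
      exact h0 (le_antisymm (le_trans (measure_mono halB) hc.le) (zero_le))
    set ρ := c₀ / 2 ^ (n + 3) with hρdef
    have hρ0 : ρ ≠ 0 := by
      rw [hρdef]
      simp only [ne_eq, ENNReal.div_eq_zero_iff, not_or]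
      exact ⟨hc₀0, ENNReal.pow_ne_top (by norm_num)⟩
    have hρtop : ρ ≠ ⊤ := by
      rw [hρdef]
      exact (ENNReal.div_lt_top hc₀top (pow_ne_zero _ (by norm_num))).ne
    set p := (2⁻¹ : ℝ≥0∞) ^ (n + 4) with hpdef
    have hp1 : p ≤ 1 := pow_le_one' (by norm_num) _
    have hp0 : p ≠ 0 := by
      rw [hpdef]
      exact pow_ne_zero _ (ENNReal.inv_ne_zero.mpr (by norm_num))
    have h1p : (1 : ℝ≥0∞) - p < 1 := ENNReal.sub_lt_self ENNReal.one_ne_top one_ne_zero hp0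
    -- choose R
    have htendsto := ENNReal.tendsto_pow_atTop_nhds_zero_of_lt_one h1p
    have hεpos : (0:ℝ≥0∞) < ρ / 3 / c₀ := by
      apply ENNReal.div_pos
      · apply (ENNReal.div_pos hρ0 (by norm_num)).ne'
      · exact hc₀top
    obtain ⟨R, hR⟩ := (htendsto.eventually_lt_const hεpos).exists
    have hkill0 : (1 - p) ^ R * c₀ ≤ ρ / 3 := ENNReal.mul_le_of_le_div hR.le
    -- the cut sets
    set cutK : ℕ → Set ℝ := fun K => al ∩ ⋃ c ∈ S,
      (Bset f c ∩ ⋂ (k : ℕ), ⋂ (_ : K ≤ k), {y | R ≤ cnt f c k y}) with hcutKdef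
    have hcutmeas : ∀ K, MeasurableSet (cutK K) := by
      intro K
      apply hmeas.inter
      apply Finset.measurableSet_biUnion
      intro c _
      apply (measurableSet_Bset f hf c).inter
      apply MeasurableSet.iInter
      intro k
      apply MeasurableSet.iInter
      intro _
      exact (measurable_cnt f hf c k) (measurableSet_Ici (a := R))
    have hcutmono : Monotone cutK := by
      intro K K' hKK' y hy
      obtain ⟨hy1, hy2⟩ := hy
      refine ⟨hy1, ?_⟩
      simp only [Set.mem_iUnion, Set.mem_inter_iff, Set.mem_iInter, Set.mem_setOf_eq] at hy2 ⊢
      obtain ⟨c, hc, hBc, hcnt⟩ := hy2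
      exact ⟨c, hc, hBc, fun k hk => hcnt k (le_trans hKK' hk)⟩
    have hcutunion : al ⊆ ⋃ K, cutK K := by
      intro y hy
      obtain ⟨c, hcS, hBc⟩ := Set.mem_iUnion₂.mp (hcover hy)
      have htail : y ∈ tailSet f c := by
        by_contra htc
        exact (hcore hy).2 (Set.mem_iUnion.mpr ⟨c, hBc, htc⟩)
      simp only [tailSet, Set.mem_iInter, Set.mem_iUnion, Set.mem_setOf_eq] at htail
      obtain ⟨K, hK⟩ := htail R
      refine Set.mem_iUnion.mpr ⟨K, hy, ?_⟩
      simp only [Set.mem_iUnion, Set.mem_inter_iff, Set.mem_iInter, Set.mem_setOf_eq]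
      exact ⟨c, hcS, hBc, hK⟩
    -- choose K with small loss
    have hKex : ∃ K, volume al ≤ volume (cutK K) + ρ := by
      by_cases hle : volume al ≤ ρ
      · exact ⟨0, le_trans hle le_add_self⟩
      · have hρle : ρ ≤ volume al := (not_le.mp hle).le
        have hlt : volume al - ρ < volume al :=
          ENNReal.sub_lt_self halfin h0 hρ0
        have hUeq : volume (⋃ K, cutK K) = volume al := by
          apply le_antisymm
          · apply measure_mono
            apply Set.iUnion_subset
            intro K
            exact Set.inter_subset_left
          · exact measure_mono hcutunion
        have htend0 := tendsto_measure_iUnion_atTop (μ := volume) hcutmono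
        rw [hUeq] at htend0
        have htend2 : Tendsto (fun K => volume (cutK K)) atTop (𝓝 (volume al)) := htend0
        obtain ⟨K, hK⟩ := (htend2.eventually_const_lt hlt).exists
        refine ⟨K, ?_⟩
        have := (ENNReal.sub_lt_iff_lt_right hρtop hρle).mp hK
        exact this.le
    obtain ⟨K, hKcut⟩ := hKex
    set kk := K + 1 with hkkdef
    have hkk1 : 1 ≤ kk := Nat.le_add_left 1 K
    set cut := cutK K with hcutdef
    have hcutsub : cut ⊆ al := Set.inter_subset_left
    have hcntK : ∀ y ∈ cut, ∃ c ∈ S, y ∈ Bset f c ∧ R ≤ cnt f c kk y := by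
      intro y hy
      obtain ⟨_, hy2⟩ := hy
      simp only [Set.mem_iUnion, Set.mem_inter_iff, Set.mem_iInter, Set.mem_setOf_eq] at hy2
      obtain ⟨c, hc, hBc, hcnt⟩ := hy2
      exact ⟨c, hc, hBc, hcnt kk (Nat.le_add_right K 1)⟩
    set cand := S.biUnion (fun c => (Finset.range kk).image (child c kk)) with hcanddef
    have hcand_mem : ∀ c' ∈ cand, ∃ c ∈ S, ∃ j < kk, c' = child c kk j := by
      intro c' hc'
      obtain ⟨c, hc, hc'2⟩ := Finset.mem_biUnion.mp hc'
      obtain ⟨j, hj, hj2⟩ := Finset.mem_image.mp hc'2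
      exact ⟨c, hc, j, Finset.mem_range.mp hj, hj2.symm⟩
    have hwit : ∀ y ∈ cut, R ≤ (cand.filter (fun c' => y ∈ Bset f c')).card := by
      intro y hy
      obtain ⟨c, hcS, hBc, hcnt⟩ := hcntK y hy
      have hchildinj : Function.Injective (child c kk) := by
        intro j j' hjj'
        have h1 : (child c kk j).1 = (child c kk j').1 := by rw [hjj']
        have h2 : (((child c kk j).1 : ℚ):ℝ) = (((child c kk j').1 : ℚ):ℝ) := by
          exact_mod_cast h1
        rw [child_fst_cast, child_fst_cast] at h2
        have hk0 : (0:ℝ) < (kk:ℝ) := by exact_mod_cast hkk1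
        have hd : (0:ℝ) < (c.2:ℝ) - c.1 := by
          have : (c.1:ℝ) < c.2 := by exact_mod_cast hpairs c hcS
          linarith
        have hδ : (0:ℝ) < ((c.2:ℝ) - c.1) / kk := div_pos hd hk0
        have hjj : (j:ℝ) = (j':ℝ) := by
          have hmul : (j:ℝ) * (((c.2:ℝ)-c.1)/kk) = (j':ℝ) * (((c.2:ℝ)-c.1)/kk) := by
            linarith
          exact mul_right_cancel₀ hδ.ne' hmul
        exact_mod_cast hjj
      rw [cnt_eq_card] at hcnt
      calc R ≤ ((Finset.range kk).filter (fun j => y ∈ Bset f (child c kk j))).card := hcnt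
        _ = (((Finset.range kk).filter
              (fun j => y ∈ Bset f (child c kk j))).image (child c kk)).card :=
            (Finset.card_image_of_injective _ hchildinj).symm
        _ ≤ (cand.filter (fun c' => y ∈ Bset f c')).card := by
            apply Finset.card_le_card
            intro c' hc'
            obtain ⟨j, hj, hj2⟩ := Finset.mem_image.mp hc'
            obtain ⟨hj3, hj4⟩ := Finset.mem_filter.mp hj
            refine Finset.mem_filter.mpr ⟨?_, ?_⟩
            · exact Finset.mem_biUnion.mpr ⟨c, hcS, Finset.mem_image.mpr ⟨j, hj3, hj2⟩⟩
            · rw [← hj2]; exact hj4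
    -- probabilistic selection
    have hEdead : ∑ T ∈ cand.powerset, wgt p cand T * volume (cut \ ⋃ c ∈ T, Bset f c)
        ≤ ρ / 3 := by
      refine le_trans (expected_dead p hp1 cand (Bset f) (measurableSet_Bset f hf) cut
        (hcutmeas K) R hwit) ?_
      calc (1 - p) ^ R * volume cut ≤ (1 - p) ^ R * c₀ := by
            apply mul_le_mul_right
            exact measure_mono (hcutsub.trans halB)
        _ ≤ ρ / 3 := hkill0
    have hSne : S.Nonempty := by
      rcases Finset.eq_empty_or_nonempty S with rfl | h
      · exfalso
        apply h0
        have : al ⊆ ∅ := by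
          intro y hy
          have := hcover hy
          simpa using this
        exact le_antisymm (le_trans (measure_mono this) (by simp)) (zero_le)
      · exact h
    have hlenS0 : lenS S ≠ 0 := by
      obtain ⟨c, hc⟩ := hSne
      have h1 : lenE c ≤ lenS S := Finset.single_le_sum (fun _ _ => zero_le) hc
      have h2 : lenE c ≠ 0 := by
        rw [lenE]
        simp only [ne_eq, ENNReal.ofReal_eq_zero, not_le]
        have : (c.1:ℝ) < c.2 := by exact_mod_cast hpairs c hc
        linarith
      intro hc0
      exact h2 (le_antisymm (hc0 ▸ h1) (zero_le))
    set η₂ := 3 * (p * lenS S) with hη₂def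
    have hη₂0 : η₂ ≠ 0 := by
      rw [hη₂def]
      apply mul_ne_zero (by norm_num)
      exact mul_ne_zero hp0 hlenS0
    have hη₂top : η₂ ≠ ⊤ := by
      rw [hη₂def]
      apply ENNReal.mul_ne_top (by norm_num)
      apply ENNReal.mul_ne_top _ (lenS_ne_top S)
      rw [hpdef]
      exact (ENNReal.pow_ne_top (by norm_num))
    have hElen : ∑ T ∈ cand.powerset, wgt p cand T * lenS T ≤ η₂ / 3 := by
      have h1 : ∑ T ∈ cand.powerset, wgt p cand T * lenS T = p * lenS cand := by
        exact wgt_sum_len p hp1 cand lenE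
      rw [h1]
      have h2 : lenS cand ≤ lenS S := by
        refine le_trans (sum_biUnion_le' S _ lenE) ?_
        refine Finset.sum_le_sum (fun c hc => ?_)
        exact lenS_children_le (hpairs c hc) hkk1
      have h3 : η₂ / 3 = p * lenS S := by
        rw [hη₂def]
        rw [show (3:ℝ≥0∞) * (p * lenS S) / 3 = 3 * ((p * lenS S) / 3) by
          rw [mul_div_assoc]]
        rw [ENNReal.mul_div_cancel' (by norm_num) (by norm_num)]
      rw [h3]
      exact mul_le_mul_right h2 _
    obtain ⟨T, hTmem, hTdead, hTlen⟩ := exists_small₂ cand.powerset (wgt p cand)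
      (fun T => volume (cut \ ⋃ c ∈ T, Bset f c)) (fun T => lenS T)
      (wgt_sum_one p hp1 cand) ρ η₂ hρ0 hρtop hη₂0 hη₂top hEdead hElen
    have hTsub : T ⊆ cand := Finset.mem_powerset.mp hTmem
    set al' := cut ∩ ⋃ c ∈ T, Bset f c with hal'def
    refine ⟨T, al', ⟨?_, ?_, ?_, ?_, ?_, ?_⟩, ?_, ?_⟩
    · -- pairs valid
      intro c' hc'
      obtain ⟨c, hcS, j, hj, rfl⟩ := hcand_mem c' (hTsub hc')
      exact child_valid (hpairs c hcS) hkk1 j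
    · exact (hcutmeas K).inter
        (Finset.measurableSet_biUnion _ (fun c _ => measurableSet_Bset f hf c))
    · exact fun y hy => hcore (hcutsub hy.1)
    · exact Set.inter_subset_right
    · -- length invariant
      have h3p : 3 * p ≤ 2⁻¹ := by
        rw [hpdef]
        calc (3:ℝ≥0∞) * 2⁻¹ ^ (n+4) ≤ 4 * 2⁻¹ ^ (n+4) := by
              apply mul_le_mul_left
              norm_num
          _ = 4 * (2⁻¹ ^ (n+2) * 2⁻¹ ^ 2) := by rw [← pow_add]
          _ = (4 * 2⁻¹ ^ 2) * 2⁻¹ ^ (n+2) := by ring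
          _ = 2⁻¹ ^ (n+2) := by
              have : (4:ℝ≥0∞) * 2⁻¹ ^ 2 = 1 := by
                rw [pow_two]
                rw [show (4:ℝ≥0∞) = 2 * 2 by norm_num]
                rw [show (2:ℝ≥0∞) * 2 * (2⁻¹ * 2⁻¹) = (2 * 2⁻¹) * (2 * 2⁻¹) by ring]
                rw [ENNReal.mul_inv_cancel (by norm_num) (by norm_num), one_mul]
              rw [this, one_mul]
          _ ≤ 2⁻¹ ^ 1 := by
              apply pow_le_pow_of_le_one (zero_le) (by norm_num)
              omega
          _ = 2⁻¹ := pow_one _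
      calc lenS T ≤ η₂ := hTlen
        _ = (3 * p) * lenS S := by rw [hη₂def]; ring
        _ ≤ 2⁻¹ * (lenE (a₀, b₀) * 2⁻¹ ^ n) := mul_le_mul h3p hlen (zero_le) (zero_le)
        _ = lenE (a₀, b₀) * 2⁻¹ ^ (n + 1) := by rw [pow_succ]; ring
    · -- mass invariant
      have hsplit : volume cut ≤ volume al' + volume (cut \ ⋃ c ∈ T, Bset f c) := by
        have : cut ⊆ al' ∪ (cut \ ⋃ c ∈ T, Bset f c) := by
          intro y hy
          by_cases h : y ∈ ⋃ c ∈ T, Bset f c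
          · exact Or.inl ⟨hy, h⟩
          · exact Or.inr ⟨hy, h⟩
        exact le_trans (measure_mono this) (measure_union_le _ _)
      have hloss : lossB f a₀ b₀ (n + 1) = lossB f a₀ b₀ n + 2 * ρ := by
        rw [lossB, lossB, Finset.sum_range_succ, hρdef]
      calc c₀ ≤ volume al + lossB f a₀ b₀ n := hmass
        _ ≤ (volume cut + ρ) + lossB f a₀ b₀ n := add_le_add hKcut le_rfl
        _ ≤ ((volume al' + volume (cut \ ⋃ c ∈ T, Bset f c)) + ρ) + lossB f a₀ b₀ n := by
            exact add_le_add (add_le_add hsplit le_rfl) le_rfl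
        _ ≤ ((volume al' + ρ) + ρ) + lossB f a₀ b₀ n := by
            exact add_le_add (add_le_add (add_le_add le_rfl hTdead) le_rfl) le_rfl
        _ = volume al' + (lossB f a₀ b₀ n + 2 * ρ) := by ring
        _ = volume al' + lossB f a₀ b₀ (n + 1) := by rw [hloss]
    · -- KS T ⊆ KS S
      intro x hx
      obtain ⟨c', hc'mem, hx2⟩ := Set.mem_iUnion₂.mp hx
      obtain ⟨c, hcS, j, hj, rfl⟩ := hcand_mem c' (hTsub hc'mem)
      exact Set.mem_iUnion₂.mpr ⟨c, hcS, child_Icc_subset (hpairs c hcS) hkk1 hj hx2⟩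
    · exact fun y hy => hcutsub hy.1

lemma measurableSet_Nstar (hf : Continuous f) : MeasurableSet (Nstar f) :=
  MeasurableSet.iUnion (fun c => (measurableSet_Bset f hf c).diff (measurableSet_tailSet f hf c))

lemma Bset_null (hf : Continuous f) (hN : ∀ A : Set ℝ, volume A = 0 → volume (f '' A) = 0)
    (a₀ b₀ : ℚ) (hab : a₀ < b₀) : volume (Bset f (a₀, b₀)) = 0 := by
  by_contra hc₀0
  set c₀ := volume (Bset f (a₀, b₀)) with hc₀def
  have hc₀top : c₀ ≠ ⊤ := (Bset_volume_lt_top f hf _).ne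
  have hNnull := volume_Nstar f hf
  set al₀ := Bset f (a₀, b₀) \ Nstar f with hal₀
  have hInv0 : Inv f a₀ b₀ 0 {(a₀, b₀)} al₀ := by
    refine ⟨?_, ?_, ?_, ?_, ?_, ?_⟩
    · intro c hc; rw [Finset.mem_singleton.mp hc]; exact hab
    · exact (measurableSet_Bset f hf _).diff (measurableSet_Nstar f hf)
    · exact subset_rfl
    · intro y hy
      exact Set.mem_iUnion₂.mpr ⟨(a₀, b₀), Finset.mem_singleton_self _, hy.1⟩
    · rw [lenS, Finset.sum_singleton, pow_zero, mul_one]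
    · rw [measure_diff_null hNnull]
      exact le_self_add
  have hstep : ∀ n (q : Finset (ℚ × ℚ) × Set ℝ), Inv f a₀ b₀ n q.1 q.2 →
      ∃ q' : Finset (ℚ × ℚ) × Set ℝ,
        Inv f a₀ b₀ (n+1) q'.1 q'.2 ∧ KS q'.1 ⊆ KS q.1 ∧ q'.2 ⊆ q.2 := by
    intro n q hq
    obtain ⟨S', al', h1, h2, h3⟩ := step_ex f hf a₀ b₀ n q.1 q.2 hq
    exact ⟨(S', al'), h1, h2, h3⟩
  let chain : ∀ n : ℕ, {q : Finset (ℚ × ℚ) × Set ℝ // Inv f a₀ b₀ n q.1 q.2} :=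
    Nat.rec ⟨({(a₀, b₀)}, al₀), hInv0⟩
      (fun n prev => ⟨(hstep n prev.1 prev.2).choose, (hstep n prev.1 prev.2).choose_spec.1⟩)
  set Sn : ℕ → Finset (ℚ × ℚ) := fun n => (chain n).1.1 with hSn
  set aln : ℕ → Set ℝ := fun n => (chain n).1.2 with haln
  have hIn : ∀ n, Inv f a₀ b₀ n (Sn n) (aln n) := fun n => (chain n).2
  have hchain_rel : ∀ n, KS (Sn (n+1)) ⊆ KS (Sn n) ∧ aln (n+1) ⊆ aln n := by
    intro n
    exact ⟨(hstep n (chain n).1 (chain n).2).choose_spec.2.1,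
      (hstep n (chain n).1 (chain n).2).choose_spec.2.2⟩
  have hS0 : Sn 0 = {(a₀, b₀)} := rfl
  have hal0 : aln 0 = al₀ := rfl
  -- the null compact capture set
  set A := ⋂ n, KS (Sn n) with hA
  have hAnull : volume A = 0 := by
    have hle : ∀ n, volume A ≤ lenE (a₀, b₀) * 2⁻¹ ^ n := by
      intro n
      refine le_trans (measure_mono (Set.iInter_subset _ n)) ?_
      exact le_trans (volume_KS_le _) (hIn n).2.2.2.2.1
    have htend : Tendsto (fun n : ℕ => lenE (a₀, b₀) * 2⁻¹ ^ n) atTop (𝓝 0) := by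
      have h1 : Tendsto (fun n : ℕ => (2⁻¹ : ℝ≥0∞) ^ n) atTop (𝓝 0) :=
        ENNReal.tendsto_pow_atTop_nhds_zero_of_lt_one (by
          rw [ENNReal.inv_lt_one]
          norm_num)
      have h2 := ENNReal.Tendsto.const_mul h1 (Or.inr (lenE_ne_top (a₀, b₀)))
      rw [mul_zero] at h2
      exact h2
    have := ge_of_tendsto' htend hle
    exact le_antisymm this (zero_le)
  have hfA := hN A hAnull
  -- capture
  have hcap : (⋂ n, aln n) ⊆ f '' A := by
    intro y hy
    set Cs : ℕ → Set ℝ := fun n => f ⁻¹' {y} ∩ KS (Sn n) with hCs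
    have hCcl : ∀ n, IsClosed (Cs n) :=
      fun n => (IsClosed.preimage hf isClosed_singleton).inter (isClosed_KS _)
    have hCne : ∀ n, (Cs n).Nonempty := by
      intro n
      have hyn : y ∈ aln n := Set.mem_iInter.mp hy n
      obtain ⟨c, hcS, hBc⟩ := Set.mem_iUnion₂.mp ((hIn n).2.2.2.1 hyn)
      obtain ⟨x, hx1, hx2⟩ := hBc.2
      exact ⟨x, by simpa using hx2, Set.mem_iUnion₂.mpr ⟨c, hcS, hx1⟩⟩
    have hCdec : ∀ n, Cs (n+1) ⊆ Cs n := by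
      intro n
      exact Set.inter_subset_inter_right _ (hchain_rel n).1
    have hKS0 : KS (Sn 0) = Set.Icc ((a₀ : ℚ) : ℝ) ((b₀ : ℚ) : ℝ) := by
      rw [hS0]
      simp [KS]
    have hC0cpt : IsCompact (Cs 0) := by
      apply IsCompact.of_isClosed_subset isCompact_Icc (hCcl 0)
      rw [← hKS0]
      exact Set.inter_subset_right
    obtain ⟨x, hx⟩ := IsCompact.nonempty_iInter_of_sequence_nonempty_isCompact_isClosed
      Cs hCdec hCne hC0cpt hCcl
    have hxA : x ∈ A := by
      rw [hA]
      exact Set.mem_iInter.mpr (fun n => (Set.mem_iInter.mp hx n).2)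
    have hfx : f x = y := by
      have := (Set.mem_iInter.mp hx 0).1
      simpa using this
    exact ⟨x, hxA, hfx⟩
  -- loss bound
  have hhalfinv : (2:ℝ≥0∞) * 2⁻¹ = 1 := ENNReal.mul_inv_cancel (by norm_num) (by norm_num)
  have hloss_half : ∀ n, lossB f a₀ b₀ n ≤ c₀ / 2 := by
    intro n
    have hterm : ∀ k, 2 * (c₀ / 2 ^ (k + 3)) = c₀ * (2⁻¹:ℝ≥0∞) ^ (k + 2) := by
      intro k
      have hip : ((2:ℝ≥0∞) ^ (k + 3))⁻¹ = (2⁻¹:ℝ≥0∞) ^ (k + 3) := by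
        rw [ENNReal.inv_pow]
      rw [div_eq_mul_inv, hip, show (k + 3) = (k + 2) + 1 by omega, pow_succ]
      rw [show (2:ℝ≥0∞) * (c₀ * (2⁻¹ ^ (k+2) * 2⁻¹)) = (c₀ * 2⁻¹ ^ (k+2)) * (2⁻¹ * 2) by ring]
      rw [mul_comm (2⁻¹:ℝ≥0∞) 2, hhalfinv, mul_one]
    rw [lossB, Finset.sum_congr rfl (fun k _ => hterm k), ← Finset.mul_sum]
    have hsum : ∑ k ∈ Finset.range n, (2⁻¹:ℝ≥0∞) ^ (k+2) ≤ 2⁻¹ := by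
      calc ∑ k ∈ Finset.range n, (2⁻¹:ℝ≥0∞) ^ (k+2)
          ≤ ∑' k : ℕ, (2⁻¹:ℝ≥0∞) ^ (k+2) := ENNReal.sum_le_tsum _
        _ = (2⁻¹:ℝ≥0∞) ^ 2 * ∑' k : ℕ, (2⁻¹:ℝ≥0∞) ^ k := by
            rw [← ENNReal.tsum_mul_left]
            congr 1
            funext k
            rw [← pow_add]
            congr 1
            omega
        _ = (2⁻¹:ℝ≥0∞) ^ 2 * 2 := by
            rw [ENNReal.tsum_geometric]
            congr 1
            have h1 : (1:ℝ≥0∞) - 2⁻¹ = 2⁻¹ := by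
              have h2 : (1:ℝ≥0∞) = 2⁻¹ + 2⁻¹ := by
                rw [← two_mul, mul_comm]
                rw [mul_comm] at hhalfinv
                exact hhalfinv.symm
              rw [h2, ENNReal.add_sub_cancel_right (by norm_num)]
            rw [h1, inv_inv]
        _ = 2⁻¹ := by
            rw [pow_two, mul_assoc, mul_comm (2⁻¹:ℝ≥0∞) 2, hhalfinv, mul_one]
    calc c₀ * ∑ k ∈ Finset.range n, (2⁻¹:ℝ≥0∞) ^ (k+2) ≤ c₀ * 2⁻¹ := mul_le_mul_right hsum _
      _ = c₀ / 2 := by rw [div_eq_mul_inv]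
  -- limit mass
  have haldec : Antitone aln := antitone_nat_of_succ_le (fun n => (hchain_rel n).2)
  have halfin : volume (aln 0) ≠ ⊤ := by
    rw [hal0]
    exact (lt_of_le_of_lt (measure_mono Set.diff_subset) (Bset_volume_lt_top f hf _)).ne
  have htendal : Tendsto (fun n => volume (aln n)) atTop (𝓝 (volume (⋂ n, aln n))) := by
    apply tendsto_measure_iInter_atTop (fun n => ((hIn n).2.1).nullMeasurableSet) haldec
    exact ⟨0, halfin⟩
  have hev : ∀ n, c₀ ≤ volume (aln n) + c₀ / 2 := by
    intro n
    exact le_trans (hIn n).2.2.2.2.2 (add_le_add le_rfl (hloss_half n))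
  have htend2 : Tendsto (fun n => volume (aln n) + c₀ / 2) atTop
      (𝓝 (volume (⋂ n, aln n) + c₀ / 2)) := by
    exact htendal.add tendsto_const_nhds
  have hlim : c₀ ≤ volume (⋂ n, aln n) + c₀ / 2 := ge_of_tendsto' htend2 hev
  have hμcapne : volume (⋂ n, aln n) ≠ 0 := by
    intro hzz
    rw [hzz, zero_add] at hlim
    exact absurd hlim (not_le.mpr (ENNReal.half_lt_self hc₀0 hc₀top))
  apply hμcapne
  have h1 : volume (⋂ n, aln n) ≤ volume (f '' A) := measure_mono hcap
  rw [hfA] at h1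
  exact le_antisymm h1 (zero_le)

theorem main_result (hf : Continuous f)
    (hN : ∀ A : Set ℝ, volume A = 0 → volume (f '' A) = 0) :
    volume {y : ℝ | ¬ (f ⁻¹' {y}).Countable} = 0 := by
  have hsub : {y : ℝ | ¬ (f ⁻¹' {y}).Countable} ⊆
      ⋃ N : ℕ, unc f (-(N+1 : ℚ), ((N : ℚ)+1)) := by
    intro y hy
    by_contra hc
    simp only [Set.mem_iUnion, not_exists] at hc
    apply hy
    have hdecomp : f ⁻¹' {y} =
        ⋃ N : ℕ, (f ⁻¹' {y} ∩ Set.Ioo ((-(N+1 : ℚ) : ℚ) : ℝ) (((N : ℚ)+1 : ℚ) : ℝ)) := by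
      ext x
      simp only [Set.mem_iUnion, Set.mem_inter_iff]
      constructor
      · intro hx
        obtain ⟨N, hNx⟩ := exists_nat_gt |x|
        have habs := abs_lt.mp hNx
        refine ⟨N, hx, ?_, ?_⟩
        · push_cast
          linarith [habs.1]
        · push_cast
          linarith [habs.2]
      · rintro ⟨N, hx, _⟩
        exact hx
    rw [hdecomp]
    apply Set.countable_iUnion
    intro N
    have h2 : y ∉ unc f (-(N+1 : ℚ), ((N : ℚ)+1)) := hc N
    rw [unc, Set.mem_setOf_eq, not_not] at h2
    exact h2
  refine measure_mono_null hsub ?_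
  apply measure_iUnion_null
  intro N
  have hab : (-(N+1 : ℚ)) < ((N : ℚ)+1) := by
    have h0 : (0:ℚ) ≤ (N:ℚ) := by positivity
    linarith
  refine measure_mono_null (unc_subset_Bset f _) ?_
  exact Bset_null f hf hN _ _ hab

end LZhelper

end

open MeasureTheory Set

theorem stmt_1 (f : ℝ → ℝ) (hf : Continuous f)
    (hN : ∀ A : Set ℝ, volume A = 0 → volume (f '' A) = 0) :
    volume {y : ℝ | ¬ (f ⁻¹' {y}).Countable} = 0 := by
  exact LZhelper.main_result f hf hN
end

section
/- Let A ⊆ ℝ be an analytic set with positive Lebesgue measure, and let f : ℝ → ℝ be a continuous function such that for every subset B ⊆ A with Lebesgue measure zero, the image f(B) is countable. Then the image f(A) is countable. -/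
open MeasureTheory Set Filter Topology
open scoped ENNReal NNReal

/-- Continuity from below for increasing unions (arbitrary sets) packaged: choose an index. -/
lemma exists_lt_of_union {α : Type*} [MeasurableSpace α] (μ : Measure α)
    {s : ℕ → Set α} (hmono : Monotone s) {c : ℝ≥0∞} (hc : c < μ (⋃ n, s n)) :
    ∃ n, c < μ (s n) := by
  rw [hmono.measure_iUnion] at hc
  exact lt_iSup_iff.mp hc

/-- Capacitability: an analytic subset of ℝ contains compact sets of measure arbitrarily close
to its (outer) measure. -/
lemma analytic_inner_compact {A : Set ℝ} (hA : MeasureTheory.AnalyticSet A)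
    {c : ℝ≥0∞} (hc : c < volume A) :
    ∃ K, K ⊆ A ∧ IsCompact K ∧ c ≤ volume K := by
  -- reduce to a bounded piece
  have hcover : A = ⋃ n : ℕ, A ∩ Icc (-(n : ℝ)) n := by
    ext x
    simp only [mem_iUnion, mem_inter_iff, mem_Icc]
    constructor
    · intro hx
      obtain ⟨n, hn⟩ := exists_nat_ge |x|
      exact ⟨n, hx, (abs_le.mp hn).1, (abs_le.mp hn).2⟩
    · rintro ⟨n, hx, -⟩
      exact hx
  obtain ⟨M, hM⟩ : ∃ M : ℕ, c < volume (A ∩ Icc (-(M : ℝ)) M) := by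
    refine exists_lt_of_union volume ?_ (hcover ▸ hc)
    intro m n hmn
    exact inter_subset_inter_right _
      (Icc_subset_Icc (neg_le_neg (Nat.cast_le.mpr hmn)) (Nat.cast_le.mpr hmn))
  have hA' : MeasureTheory.AnalyticSet (A ∩ Icc (-(M : ℝ)) M) := by
    have h1 : A ∩ Icc (-(M : ℝ)) M = ⋂ b : Bool, (if b then A else Icc (-(M : ℝ)) M) := by
      ext x
      simp [Bool.forall_bool, and_comm]
    rw [h1]
    exact MeasureTheory.AnalyticSet.iInter fun b => by
      cases b
      · simpa using isClosed_Icc.analyticSet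
      · simpa using hA
  set A' := A ∩ Icc (-(M : ℝ)) M with hA'def
  have hne : A'.Nonempty := nonempty_of_measure_ne_zero (zero_le.trans_lt hM).ne'
  rw [MeasureTheory.AnalyticSet] at hA'
  rcases hA' with h | ⟨g, gcont, grange⟩
  · exact absurd h (Set.nonempty_iff_ne_empty.mp hne)
  -- the tree of sections
  set S : (ℕ → ℕ) → ℕ → Set (ℕ → ℕ) := fun b k => {x | ∀ i < k, x i ≤ b i} with hSdef
  have hstep : ∀ (b : ℕ → ℕ) (k : ℕ), c < volume (g '' S b k) →
      ∃ n : ℕ, c < volume (g '' S (Function.update b k n) (k + 1)) := by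
    intro b k hk
    have hdecomp : ∀ n : ℕ, S (Function.update b k n) (k + 1) = S b k ∩ {x | x k ≤ n} := by
      intro n; ext x
      simp only [hSdef, mem_setOf_eq, mem_inter_iff]
      constructor
      · intro h
        refine ⟨fun i hi => ?_, ?_⟩
        · have := h i (hi.trans (Nat.lt_succ_self k))
          rwa [Function.update_of_ne hi.ne] at this
        · have := h k (Nat.lt_succ_self k)
          rwa [Function.update_self] at this
      · rintro ⟨h1, h2⟩ i hi
        rcases Nat.lt_succ_iff_lt_or_eq.mp hi with h | rfl
        · rw [Function.update_of_ne h.ne]; exact h1 i h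
        · rwa [Function.update_self]
    have hmono : Monotone (fun n : ℕ => g '' (S b k ∩ {x | x k ≤ n})) := by
      intro m n hmn
      exact image_mono (inter_subset_inter_right _ (fun x hx => le_trans hx hmn))
    have hunion : (⋃ n : ℕ, g '' (S b k ∩ {x | x k ≤ n})) = g '' S b k := by
      rw [← image_iUnion]
      have huni : (⋃ n : ℕ, (S b k ∩ {x | x k ≤ n})) = S b k := by
        ext x
        constructor
        · rintro ⟨_, ⟨n, rfl⟩, h, -⟩; exact h
        · intro h
          have hx2 : x ∈ S b k ∩ {y | y k ≤ x k} := ⟨h, mem_setOf_eq ▸ le_rfl⟩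
          exact mem_iUnion.mpr ⟨x k, hx2⟩
      rw [huni]
    obtain ⟨n, hn⟩ := exists_lt_of_union volume hmono (by rw [hunion]; exact hk)
    exact ⟨n, by rwa [hdecomp]⟩
  have hbase : c < volume (g '' S (fun _ => 0) 0) := by
    have h0 : S (fun _ => 0) 0 = univ := by ext x; simp [hSdef]
    rw [h0, image_univ, grange]; exact hM
  let F : (k : ℕ) → {b : ℕ → ℕ // c < volume (g '' S b k)} := fun k =>
    Nat.rec ⟨fun _ => 0, hbase⟩
      (fun k prev => ⟨Function.update prev.1 k (hstep prev.1 k prev.2).choose,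
        (hstep prev.1 k prev.2).choose_spec⟩) k
  have hFsucc : ∀ k, (F (k + 1)).1 =
      Function.update (F k).1 k (hstep (F k).1 k (F k).2).choose := fun k => rfl
  set b : ℕ → ℕ := fun i => (F (i + 1)).1 i with hbdef
  have hagree : ∀ k, ∀ i < k, (F k).1 i = b i := by
    intro k
    induction k with
    | zero => intro i hi; omega
    | succ k ih =>
      intro i hi
      rcases Nat.lt_succ_iff_lt_or_eq.mp hi with h | rfl
      · rw [hFsucc k, Function.update_of_ne h.ne]
        exact ih i h
      · rfl
  have hSk : ∀ k, S b k = S (F k).1 k := by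
    intro k; ext x
    simp only [hSdef, mem_setOf_eq]
    exact ⟨fun h i hi => (hagree k i hi).symm ▸ h i hi,
           fun h i hi => (hagree k i hi) ▸ h i hi⟩
  have hbk : ∀ k, c < volume (g '' S b k) := fun k => by rw [hSk k]; exact (F k).2
  -- the compact set
  set C : Set (ℕ → ℕ) := univ.pi fun i => Iic (b i) with hCdef
  have hCcomp : IsCompact C := isCompact_univ_pi fun i => (Set.finite_Iic (b i)).isCompact
  refine ⟨g '' C, ?_, hCcomp.image gcont, ?_⟩
  · exact (image_subset_range g C).trans (grange ▸ inter_subset_left)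
  -- measure estimate via closures
  set Fc : ℕ → Set ℝ := fun k => closure (g '' S b k) with hFcdef
  have hFanti : Antitone Fc := by
    intro k l hkl
    exact closure_mono (image_mono (fun x hx i hi => hx i (lt_of_lt_of_le hi hkl)))
  have hFc_sub : ∀ k, Fc k ⊆ Icc (-(M : ℝ)) M := by
    intro k
    refine closure_minimal ?_ isClosed_Icc
    exact (image_subset_range g _).trans (grange ▸ inter_subset_right)
  have hFccomp : ∀ k, IsCompact (Fc k) :=
    fun k => isCompact_Icc.of_isClosed_subset isClosed_closure (hFc_sub k)
  have hInter : (⋂ k, Fc k) ⊆ g '' C := by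
    intro x hx
    have hx' : ∀ k : ℕ, ∃ z, z ∈ S b k ∧ dist x (g z) < 1 / (k + 1) := by
      intro k
      have hxk : x ∈ closure (g '' S b k) := mem_iInter.mp hx k
      obtain ⟨y, hy, hdist⟩ := Metric.mem_closure_iff.mp hxk (1 / (k + 1)) (by positivity)
      obtain ⟨z, hz, rfl⟩ := hy
      exact ⟨z, hz, hdist⟩
    choose z hz hzdist using hx'
    set u : ℕ → (ℕ → ℕ) := fun k i => min (z k i) (b i) with hudef
    have hu : ∀ k, u k ∈ C := by
      intro k
      rw [hCdef, mem_univ_pi]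
      exact fun i => mem_Iic.mpr (min_le_right _ _)
    obtain ⟨a, ha, φ, hφ, hconv⟩ := hCcomp.tendsto_subseq hu
    have hzconv : Tendsto (fun n => z (φ n)) atTop (𝓝 a) := by
      rw [tendsto_pi_nhds]
      intro i
      have hcoord : Tendsto (fun n => u (φ n) i) atTop (𝓝 (a i)) :=
        tendsto_pi_nhds.mp hconv i
      refine hcoord.congr' ?_
      filter_upwards [eventually_ge_atTop (i + 1)] with n hn
      have hlt : i < φ n := lt_of_lt_of_le (Nat.lt_succ_self i) (hn.trans hφ.le_apply)
      exact min_eq_left (hz (φ n) i hlt)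
    have hgz : Tendsto (fun k => g (z k)) atTop (𝓝 x) := by
      rw [tendsto_iff_dist_tendsto_zero]
      refine squeeze_zero (fun k => dist_nonneg) (fun k => ?_)
        tendsto_one_div_add_atTop_nhds_zero_nat
      rw [dist_comm]
      exact (hzdist k).le
    have hgz' : Tendsto (fun n => g (z (φ n))) atTop (𝓝 x) := hgz.comp hφ.tendsto_atTop
    have hga : Tendsto (fun n => g (z (φ n))) atTop (𝓝 (g a)) := (gcont.tendsto a).comp hzconv
    exact ⟨a, ha, (tendsto_nhds_unique hgz' hga).symm⟩
  have hmeas_iInter : c ≤ volume (⋂ k, Fc k) := by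
    have heq : volume (⋂ k, Fc k) = ⨅ k, volume (Fc k) := by
      refine Directed.measure_iInter (fun k => ((hFccomp k).measurableSet.nullMeasurableSet)) ?_ ?_
      · exact hFanti.directed_ge
      · exact ⟨0, ((measure_mono (hFc_sub 0)).trans_lt measure_Icc_lt_top).ne⟩
    rw [heq]
    exact le_iInf fun k => ((hbk k).trans_le (measure_mono subset_closure)).le
  exact hmeas_iInter.trans (measure_mono hInter)

open MeasureTheory Set Filter Topology
open scoped ENNReal NNReal

/-- Split a compact set of positive measure into two disjoint compact subsets of positive
measure, for a nonatomic measure on ℝ. -/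
lemma split_compact (ν : Measure ℝ) [IsFiniteMeasure ν] [NullSingletonClass ν]
    {K : Set ℝ} (hK : IsCompact K) (hpos : 0 < ν K) :
    ∃ K₀ K₁ : Set ℝ, K₀ ⊆ K ∧ K₁ ⊆ K ∧ IsCompact K₀ ∧ IsCompact K₁ ∧
      Disjoint K₀ K₁ ∧ 0 < ν K₀ ∧ 0 < ν K₁ := by
  have hKne : K.Nonempty := nonempty_of_measure_ne_zero hpos.ne'
  set P : Set ℝ := {t : ℝ | 0 < ν (K ∩ Iic t)} with hPdef
  obtain ⟨ub, hub⟩ := hK.bddAbove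
  obtain ⟨lb, hlb⟩ := hK.bddBelow
  have hPne : P.Nonempty := by
    refine ⟨ub, ?_⟩
    have : K ∩ Iic ub = K := inter_eq_left.mpr (fun x hx => hub hx)
    simpa [hPdef, this] using hpos
  have hPbdd : BddBelow P := by
    refine ⟨lb - 1, fun t ht => ?_⟩
    by_contra hcon
    push_neg at hcon
    have : K ∩ Iic t = ∅ := by
      ext x
      simp only [mem_inter_iff, mem_Iic, mem_empty_iff_false, iff_false, not_and]
      intro hx
      have := hlb hx
      linarith [hcon]
    rw [hPdef, mem_setOf_eq, this] at ht
    simp at ht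
  set t₀ : ℝ := sInf P with ht₀def
  have hmemP : ∀ t, t₀ < t → 0 < ν (K ∩ Iic t) := by
    intro t ht
    obtain ⟨p, hp, hpt⟩ := (csInf_lt_iff hPbdd hPne).mp ht
    exact hp.trans_le (measure_mono (inter_subset_inter_right _ (Iic_subset_Iic.mpr hpt.le)))
  have hIio : ν (K ∩ Iio t₀) = 0 := by
    have hcov : K ∩ Iio t₀ = ⋃ n : ℕ, K ∩ Iic (t₀ - 1 / (n + 1)) := by
      ext x
      simp only [mem_inter_iff, mem_Iio, mem_iUnion, mem_Iic]
      constructor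
      · rintro ⟨hx, hlt⟩
        obtain ⟨n, hn⟩ := exists_nat_one_div_lt (sub_pos.mpr hlt)
        exact ⟨n, hx, by linarith⟩
      · rintro ⟨n, hx, hle⟩
        have : (0:ℝ) < 1 / (n + 1) := by positivity
        exact ⟨hx, by linarith⟩
    rw [hcov]
    refine measure_iUnion_null fun n => ?_
    by_contra hcon
    have hmem : t₀ - 1 / (n + 1) ∈ P := by
      rw [hPdef, mem_setOf_eq]
      exact zero_lt_iff.mpr hcon
    have := csInf_le hPbdd hmem
    have hpos' : (0:ℝ) < 1 / (n + 1) := by positivity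
    rw [← ht₀def] at this
    linarith
  have hIic : ν (K ∩ Iic t₀) = 0 := by
    have hsplit : K ∩ Iic t₀ ⊆ (K ∩ Iio t₀) ∪ {t₀} := by
      rintro x ⟨hx, hle⟩
      rcases lt_or_eq_of_le (mem_Iic.mp hle) with h | h
      · exact Or.inl ⟨hx, h⟩
      · exact Or.inr (by simp [h])
    refine le_antisymm ?_ zero_le
    calc ν (K ∩ Iic t₀) ≤ ν ((K ∩ Iio t₀) ∪ {t₀}) := measure_mono hsplit
      _ ≤ ν (K ∩ Iio t₀) + ν {t₀} := measure_union_le _ _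
      _ = 0 := by rw [hIio, measure_singleton, add_zero]
  have hIoi : 0 < ν (K ∩ Ioi t₀) := by
    have hsub : K ⊆ (K ∩ Iic t₀) ∪ (K ∩ Ioi t₀) := by
      intro x hx
      rcases le_or_gt x t₀ with h | h
      · exact Or.inl ⟨hx, h⟩
      · exact Or.inr ⟨hx, h⟩
    by_contra hcon
    push_neg at hcon
    have h0 : ν (K ∩ Ioi t₀) = 0 := le_antisymm hcon zero_le
    have : ν K ≤ 0 := by
      calc ν K ≤ ν ((K ∩ Iic t₀) ∪ (K ∩ Ioi t₀)) := measure_mono hsub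
        _ ≤ ν (K ∩ Iic t₀) + ν (K ∩ Ioi t₀) := measure_union_le _ _
        _ = 0 := by rw [hIic, h0, add_zero]
    exact absurd (le_antisymm this zero_le) hpos.ne'
  -- find ε with ν (K ∩ Ici (t₀ + ε)) > 0
  obtain ⟨n, hn⟩ : ∃ n : ℕ, 0 < ν (K ∩ Ici (t₀ + 1 / (n + 1))) := by
    have hcov : K ∩ Ioi t₀ = ⋃ n : ℕ, K ∩ Ici (t₀ + 1 / (n + 1)) := by
      ext x
      simp only [mem_inter_iff, mem_Ioi, mem_iUnion, mem_Ici]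
      constructor
      · rintro ⟨hx, hlt⟩
        obtain ⟨n, hn⟩ := exists_nat_one_div_lt (sub_pos.mpr hlt)
        exact ⟨n, hx, by linarith⟩
      · rintro ⟨n, hx, hle⟩
        have : (0:ℝ) < 1 / (n + 1) := by positivity
        exact ⟨hx, by linarith⟩
    by_contra hcon
    push_neg at hcon
    have : ν (K ∩ Ioi t₀) = 0 := by
      rw [hcov]
      exact measure_iUnion_null fun n => le_antisymm (hcon n) zero_le
    exact absurd this hIoi.ne'
  set ε : ℝ := 1 / (n + 1) with hεdef
  have hεpos : (0:ℝ) < ε := by positivity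
  refine ⟨K ∩ Iic (t₀ + ε / 2), K ∩ Ici (t₀ + ε), inter_subset_left, inter_subset_left,
    hK.inter_right isClosed_Iic, hK.inter_right isClosed_Ici, ?_, ?_, hn⟩
  · refine Disjoint.mono inter_subset_right inter_subset_right ?_
    exact Iic_disjoint_Ici.mpr (by linarith)
  · exact hmemP _ (by linarith)

/-- Shrink: a compact set of positive measure contains a compact subset of positive measure
with at most half the measure. -/
lemma shrink_compact (ν : Measure ℝ) [IsFiniteMeasure ν] [NullSingletonClass ν]
    {K : Set ℝ} (hK : IsCompact K) (hpos : 0 < ν K) :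
    ∃ K' : Set ℝ, K' ⊆ K ∧ IsCompact K' ∧ 0 < ν K' ∧ 2 * ν K' ≤ ν K := by
  obtain ⟨K₀, K₁, hs₀, hs₁, hc₀, hc₁, hdisj, hp₀, hp₁⟩ := split_compact ν hK hpos
  have hsum : ν K₀ + ν K₁ ≤ ν K := by
    rw [← measure_union hdisj hc₁.measurableSet]
    exact measure_mono (union_subset hs₀ hs₁)
  rcases le_total (ν K₀) (ν K₁) with h | h
  · exact ⟨K₀, hs₀, hc₀, hp₀, by
      calc 2 * ν K₀ = ν K₀ + ν K₀ := two_mul _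
        _ ≤ ν K₀ + ν K₁ := add_le_add_right h _
        _ ≤ ν K := hsum⟩
  · exact ⟨K₁, hs₁, hc₁, hp₁, by
      calc 2 * ν K₁ = ν K₁ + ν K₁ := two_mul _
        _ ≤ ν K₀ + ν K₁ := add_le_add_left h _
        _ ≤ ν K := hsum⟩

/-- Two disjoint compact positive-measure subsets, each of at most a quarter of the measure. -/
lemma pair_compact (ν : Measure ℝ) [IsFiniteMeasure ν] [NullSingletonClass ν]
    {K : Set ℝ} (hK : IsCompact K) (hpos : 0 < ν K) :
    ∃ C : Bool → Set ℝ, (∀ b, C b ⊆ K ∧ IsCompact (C b) ∧ 0 < ν (C b) ∧ 4 * ν (C b) ≤ ν K) ∧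
      Disjoint (C false) (C true) := by
  obtain ⟨K₀, K₁, hs₀, hs₁, hc₀, hc₁, hdisj, hp₀, hp₁⟩ := split_compact ν hK hpos
  obtain ⟨D₀, hD₀s, hD₀c, hD₀p, hD₀m⟩ := shrink_compact ν hc₀ hp₀
  obtain ⟨E₀, hE₀s, hE₀c, hE₀p, hE₀m⟩ := shrink_compact ν hD₀c hD₀p
  obtain ⟨D₁, hD₁s, hD₁c, hD₁p, hD₁m⟩ := shrink_compact ν hc₁ hp₁
  obtain ⟨E₁, hE₁s, hE₁c, hE₁p, hE₁m⟩ := shrink_compact ν hD₁c hD₁p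
  have hq₀ : 4 * ν E₀ ≤ ν K := by
    calc 4 * ν E₀ = 2 * (2 * ν E₀) := by ring
      _ ≤ 2 * ν D₀ := mul_le_mul_right hE₀m _
      _ ≤ ν K₀ := hD₀m
      _ ≤ ν K := measure_mono hs₀
  have hq₁ : 4 * ν E₁ ≤ ν K := by
    calc 4 * ν E₁ = 2 * (2 * ν E₁) := by ring
      _ ≤ 2 * ν D₁ := mul_le_mul_right hE₁m _
      _ ≤ ν K₁ := hD₁m
      _ ≤ ν K := measure_mono hs₁
  refine ⟨fun b => if b then E₁ else E₀, ?_, ?_⟩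
  · intro b
    cases b
    · exact ⟨(hE₀s.trans hD₀s).trans hs₀, hE₀c, hE₀p, hq₀⟩
    · exact ⟨(hE₁s.trans hD₁s).trans hs₁, hE₁c, hE₁p, hq₁⟩
  · simp only [if_true, if_false]
    exact hdisj.mono (hE₀s.trans hD₀s) (hE₁s.trans hD₁s)

lemma not_countable_funBool : ¬ Countable (ℕ → Bool) := by
  intro h
  have h2 : Countable (Set ℕ) := by
    have e : Set ℕ ≃ (ℕ → Bool) := by
      classical
      exact ⟨fun s n => decide (n ∈ s), fun f => {n | f n = true}, fun s => by ext n; simp,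
        fun f => by ext n; simp⟩
    exact Countable.of_equiv _ e.symm
  obtain ⟨f, hf⟩ := (countable_iff_exists_injective (Set ℕ)).mp h2
  exact Function.cantor_injective (fun s => (f s : ℕ)) fun a b hab => hf (by simpa using hab)

/-- A binary Cantor scheme indexed by finite boolean sequences. -/
noncomputable def cantorScheme (F : Set ℝ → Bool → Set ℝ) (G : Set ℝ) :
    (n : ℕ) → (Fin n → Bool) → Set ℝ
  | 0 => fun _ => G
  | n + 1 => fun v => F (cantorScheme F G n (fun i => v i.castSucc)) (v (Fin.last n))

/-- For a nonatomic finite measure, any compact set of positive measure contains an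
uncountable measurable null set. -/
lemma exists_uncountable_null (ν : Measure ℝ) [IsFiniteMeasure ν] [NullSingletonClass ν]
    {G : Set ℝ} (hG : IsCompact G) (hpos : 0 < ν G) :
    ∃ E : Set ℝ, E ⊆ G ∧ MeasurableSet E ∧ ν E = 0 ∧ ¬ E.Countable := by
  classical
  set F : Set ℝ → Bool → Set ℝ := fun K b =>
    if h : IsCompact K ∧ 0 < ν K then (pair_compact ν h.1 h.2).choose b else ∅ with hFdef
  set T : (n : ℕ) → (Fin n → Bool) → Set ℝ := cantorScheme F G with hTdef
  have hT0 : ∀ v : Fin 0 → Bool, T 0 v = G := fun v => rfl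
  have hTsucc : ∀ n (v : Fin (n+1) → Bool),
      T (n+1) v = F (T n (fun i => v i.castSucc)) (v (Fin.last n)) := fun n v => rfl
  -- invariant: compact, positive measure, small measure, contained in G
  have hinv : ∀ n (v : Fin n → Bool), IsCompact (T n v) ∧ 0 < ν (T n v) ∧
      ν (T n v) * 4 ^ n ≤ ν G ∧ T n v ⊆ G := by
    intro n
    induction n with
    | zero =>
      intro v
      refine ⟨hG, hpos, ?_, subset_rfl⟩
      rw [hT0 v]
      simp
    | succ n ih =>
      intro v
      obtain ⟨hc, hp, hb, hg⟩ := ih (fun i => v i.castSucc)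
      have hF := (pair_compact ν hc hp).choose_spec
      have hstep : T (n+1) v = (pair_compact ν hc hp).choose (v (Fin.last n)) := by
        rw [hTsucc n v, hFdef]
        simp only [dif_pos (⟨hc, hp⟩ : IsCompact (T n fun i => v i.castSucc) ∧
          0 < ν (T n fun i => v i.castSucc))]
      obtain ⟨hsub, hcomp, hposc, hquarter⟩ := hF.1 (v (Fin.last n))
      rw [hstep]
      refine ⟨hcomp, hposc, ?_, hsub.trans hg⟩
      calc ν ((pair_compact ν hc hp).choose (v (Fin.last n))) * 4 ^ (n + 1)
          = (4 * ν ((pair_compact ν hc hp).choose (v (Fin.last n)))) * 4 ^ n := by ring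
        _ ≤ ν (T n (fun i => v i.castSucc)) * 4 ^ n := mul_le_mul_left hquarter _
        _ ≤ ν G := hb
  -- subset of parent
  have hsubset : ∀ n (v : Fin (n+1) → Bool), T (n+1) v ⊆ T n (fun i => v i.castSucc) := by
    intro n v
    obtain ⟨hc, hp, -, -⟩ := hinv n (fun i => v i.castSucc)
    have hF := (pair_compact ν hc hp).choose_spec
    have hstep : T (n+1) v = (pair_compact ν hc hp).choose (v (Fin.last n)) := by
      rw [hTsucc n v, hFdef]
      simp only [dif_pos (⟨hc, hp⟩ : IsCompact (T n fun i => v i.castSucc) ∧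
        0 < ν (T n fun i => v i.castSucc))]
    rw [hstep]
    exact (hF.1 (v (Fin.last n))).1
  -- disjointness
  have hdisj : ∀ n (v w : Fin n → Bool), v ≠ w → Disjoint (T n v) (T n w) := by
    intro n
    induction n with
    | zero =>
      intro v w hvw
      exact absurd (funext fun i => i.elim0) hvw
    | succ n ih =>
      intro v w hvw
      by_cases htail : (fun i : Fin n => v i.castSucc) = (fun i : Fin n => w i.castSucc)
      · have hlast : v (Fin.last n) ≠ w (Fin.last n) := by
          intro h
          apply hvw
          funext i
          refine Fin.lastCases h (fun j => ?_) i
          exact congrFun htail j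
        obtain ⟨hc, hp, -, -⟩ := hinv n (fun i => v i.castSucc)
        have hF := (pair_compact ν hc hp).choose_spec
        have hstepv : T (n+1) v = (pair_compact ν hc hp).choose (v (Fin.last n)) := by
          rw [hTsucc n v, hFdef]
          simp only [dif_pos (⟨hc, hp⟩ : IsCompact (T n fun i => v i.castSucc) ∧
            0 < ν (T n fun i => v i.castSucc))]
        have hstepw : T (n+1) w = (pair_compact ν hc hp).choose (w (Fin.last n)) := by
          rw [hTsucc n w, hFdef, ← htail]
          simp only [dif_pos (⟨hc, hp⟩ : IsCompact (T n fun i => v i.castSucc) ∧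
            0 < ν (T n fun i => v i.castSucc))]
        rw [hstepv, hstepw]
        rcases Bool.eq_false_or_eq_true (v (Fin.last n)) with hv | hv <;>
          rcases Bool.eq_false_or_eq_true (w (Fin.last n)) with hw | hw
        · exact absurd (hv.trans hw.symm) hlast
        · rw [hv, hw]; exact hF.2.symm
        · rw [hv, hw]; exact hF.2
        · exact absurd (hv.trans hw.symm) hlast
      · have := ih (fun i => v i.castSucc) (fun i => w i.castSucc) htail
        exact this.mono (hsubset n v) (hsubset n w)
  -- the null set
  set E : Set ℝ := ⋂ n, ⋃ v : Fin n → Bool, T n v with hEdef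
  have hEsub : E ⊆ G := by
    intro x hx
    have := mem_iInter.mp hx 0
    obtain ⟨v, hv⟩ := mem_iUnion.mp this
    exact (hinv 0 v).2.2.2 hv
  have hEmeas : MeasurableSet E := by
    refine MeasurableSet.iInter fun n => MeasurableSet.iUnion fun v => ?_
    exact (hinv n v).1.measurableSet
  have hEnull : ν E = 0 := by
    have hbound : ∀ n : ℕ, ν E ≤ ν G * (2⁻¹ : ℝ≥0∞) ^ n := by
      intro n
      have h1 : ν E ≤ ν (⋃ v : Fin n → Bool, T n v) := measure_mono (iInter_subset _ n)
      have h2 : ν (⋃ v : Fin n → Bool, T n v) ≤ ∑ v : Fin n → Bool, ν (T n v) := by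
        refine (measure_iUnion_le _).trans_eq (tsum_fintype _)
      have h3 : ∀ v : Fin n → Bool, ν (T n v) ≤ ν G / 4 ^ n := by
        intro v
        rw [ENNReal.le_div_iff_mul_le (Or.inl (by positivity)) (Or.inl (by simp))]
        exact (hinv n v).2.2.1
      have h4 : (∑ v : Fin n → Bool, ν (T n v)) ≤ 2 ^ n * (ν G / 4 ^ n) := by
        calc (∑ v : Fin n → Bool, ν (T n v)) ≤ ∑ _v : Fin n → Bool, ν G / 4 ^ n :=
              Finset.sum_le_sum fun v _ => h3 v
          _ = (Fintype.card (Fin n → Bool)) * (ν G / 4 ^ n) := by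
              rw [Finset.sum_const, nsmul_eq_mul, Finset.card_univ]
          _ = 2 ^ n * (ν G / 4 ^ n) := by
              norm_cast
              rw [Fintype.card_fun]
              simp
      have h5 : (2:ℝ≥0∞) ^ n * (ν G / 4 ^ n) = ν G * (2⁻¹ : ℝ≥0∞) ^ n := by
        have h4n : (4:ℝ≥0∞) ^ n = 2 ^ n * 2 ^ n := by
          rw [← mul_pow]; norm_num
        rw [div_eq_mul_inv, h4n, ENNReal.mul_inv (Or.inl (by positivity)) (Or.inl (by simp)),
          ← mul_assoc, mul_comm ((2:ℝ≥0∞)^n), mul_assoc, ← mul_assoc ((2:ℝ≥0∞)^n),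
          ENNReal.mul_inv_cancel (by positivity) (by simp), one_mul, ← ENNReal.inv_pow]
      exact h1.trans (h2.trans (h4.trans_eq h5))
    have htend : Tendsto (fun n : ℕ => ν G * (2⁻¹ : ℝ≥0∞) ^ n) atTop (nhds 0) := by
      have := ENNReal.tendsto_pow_atTop_nhds_zero_of_lt_one (by norm_num : (2⁻¹ : ℝ≥0∞) < 1)
      have h := ENNReal.Tendsto.const_mul this (Or.inr (measure_ne_top ν G))
      simpa using h
    have := ge_of_tendsto htend (Filter.Eventually.of_forall hbound)
    exact le_antisymm this zero_le
  -- uncountability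
  have hbranch : ∀ c : ℕ → Bool, ∃ x, x ∈ ⋂ n, T n (fun i : Fin n => c i) := by
    intro c
    have hnest : ∀ n, T (n+1) (fun i : Fin (n+1) => c i) ⊆ T n (fun i : Fin n => c i) := by
      intro n
      exact hsubset n (fun i : Fin (n+1) => c i)
    have hne : ∀ n, (T n (fun i : Fin n => c i)).Nonempty :=
      fun n => nonempty_of_measure_ne_zero (hinv n _).2.1.ne'
    obtain ⟨x, hx⟩ := IsCompact.nonempty_iInter_of_sequence_nonempty_isCompact_isClosed
      (fun n => T n (fun i : Fin n => c i)) hnest hne (hinv 0 _).1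
      (fun n => (hinv n _).1.isClosed)
    exact ⟨x, hx⟩
  choose xf hxf using hbranch
  have hxE : ∀ c, xf c ∈ E := by
    intro c
    refine mem_iInter.mpr fun n => mem_iUnion.mpr ⟨fun i : Fin n => c i, ?_⟩
    exact mem_iInter.mp (hxf c) n
  have hxinj : Function.Injective xf := by
    intro c d hcd
    by_contra hne
    have : ∃ m, c m ≠ d m := by
      by_contra hall
      push_neg at hall
      exact hne (funext hall)
    obtain ⟨m, hm⟩ := this
    have hvne : (fun i : Fin (m+1) => c i) ≠ (fun i : Fin (m+1) => d i) := by
      intro h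
      have := congrFun h (Fin.last m)
      simp only [Fin.val_last] at this
      exact hm this
    have hd := hdisj (m+1) _ _ hvne
    have h1 : xf c ∈ T (m+1) (fun i : Fin (m+1) => c i) := mem_iInter.mp (hxf c) (m+1)
    have h2 : xf d ∈ T (m+1) (fun i : Fin (m+1) => d i) := mem_iInter.mp (hxf d) (m+1)
    rw [hcd] at h1
    exact hd.ne_of_mem h1 h2 rfl
  refine ⟨E, hEsub, hEmeas, hEnull, fun hEc => ?_⟩
  apply not_countable_funBool
  have := hEc.to_subtype
  exact Function.Injective.countable
    (f := fun c : ℕ → Bool => (⟨xf c, hxE c⟩ : E))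
    (fun a b hab => hxinj (congrArg Subtype.val hab))

/-- The key compact case: if `K ⊆ A` is compact then `f '' K` is countable. -/
lemma compact_image_countable {A : Set ℝ} (f : ℝ → ℝ) (hf : Continuous f)
    (hsmall : ∀ B : Set ℝ, B ⊆ A → volume B = 0 → (f '' B).Countable)
    {K : Set ℝ} (hK : IsCompact K) (hKA : K ⊆ A) : (f '' K).Countable := by
  set μ : Measure ℝ := Measure.map f (volume.restrict K) with hμdef
  haveI hfin : IsFiniteMeasure μ := by
    constructor
    rw [hμdef, Measure.map_apply hf.measurable MeasurableSet.univ, preimage_univ,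
      Measure.restrict_apply MeasurableSet.univ, univ_inter]
    exact hK.measure_lt_top
  have hmap : ∀ W : Set ℝ, MeasurableSet W → μ W = volume (K ∩ f ⁻¹' W) := by
    intro W hW
    rw [hμdef, Measure.map_apply hf.measurable hW, Measure.restrict_apply (hf.measurable hW),
      inter_comm]
  set S : Set ℝ := {y : ℝ | 0 < μ {y}} with hSdef
  have hScount : S.Countable := by
    have := MeasureTheory.Measure.countable_meas_pos_of_disjoint_iUnion (μ := μ)
      (As := fun y : ℝ => {y}) (fun y => measurableSet_singleton y)
      (fun y z hyz => disjoint_singleton.mpr hyz)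
    exact this
  have hSmeas : MeasurableSet S := hScount.measurableSet
  have hB₀ : μ Sᶜ = volume (K \ f ⁻¹' S) := by
    rw [hmap _ hSmeas.compl, preimage_compl, ← diff_eq]
  by_cases h0 : volume (K \ f ⁻¹' S) = 0
  · have hc := hsmall _ (diff_subset.trans hKA) h0
    have hsub : f '' K ⊆ f '' (K \ f ⁻¹' S) ∪ S := by
      rintro y ⟨x, hx, rfl⟩
      by_cases hfx : f x ∈ S
      · exact Or.inr hfx
      · exact Or.inl ⟨x, ⟨hx, hfx⟩, rfl⟩
    exact (hc.union hScount).mono hsub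
  · exfalso
    set ν : Measure ℝ := μ.restrict Sᶜ with hνdef
    haveI : IsFiniteMeasure ν := by
      constructor
      calc ν univ ≤ μ univ := by
            rw [hνdef, Measure.restrict_apply MeasurableSet.univ]
            exact measure_mono (inter_subset_left)
        _ < ⊤ := measure_lt_top μ univ
    haveI : NullSingletonClass ν := by
      constructor
      intro y
      rw [hνdef, Measure.restrict_apply (measurableSet_singleton y)]
      by_cases hy : y ∈ S
      · have hempty : {y} ∩ Sᶜ = ∅ := by
          ext z
          simp only [mem_inter_iff, mem_singleton_iff, mem_compl_iff, mem_empty_iff_false,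
            iff_false, not_and]
          rintro rfl
          simpa using hy
        rw [hempty, measure_empty]
      · have hμy : μ {y} = 0 := by
          by_contra h
          exact hy (zero_lt_iff.mpr h)
        exact le_antisymm ((measure_mono inter_subset_left).trans hμy.le) zero_le
    set G : Set ℝ := f '' K with hGdef
    have hGcomp : IsCompact G := hK.image hf
    have hGpos : 0 < ν G := by
      have hGc : ν Gᶜ = 0 := by
        rw [hνdef, Measure.restrict_apply hGcomp.isClosed.measurableSet.compl]
        have h2 : μ Gᶜ = 0 := by
          rw [hmap _ hGcomp.isClosed.measurableSet.compl]
          have hempty : K ∩ f ⁻¹' Gᶜ = ∅ := by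
            ext x
            simp only [mem_inter_iff, mem_preimage, mem_compl_iff, mem_empty_iff_false,
              iff_false, not_and]
            intro hx
            simp only [not_not]
            exact mem_image_of_mem f hx
          rw [hempty, measure_empty]
        exact le_antisymm ((measure_mono inter_subset_left).trans h2.le) zero_le
      have huniv : 0 < ν univ := by
        rw [hνdef, Measure.restrict_apply MeasurableSet.univ, univ_inter, hB₀]
        exact zero_lt_iff.mpr h0
      by_contra hng
      push_neg at hng
      have hG0 : ν G = 0 := le_antisymm hng zero_le
      have : ν univ ≤ 0 := by
        calc ν univ = ν (G ∪ Gᶜ) := by rw [union_compl_self]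
          _ ≤ ν G + ν Gᶜ := measure_union_le _ _
          _ = 0 := by rw [hG0, hGc, add_zero]
      exact absurd (le_antisymm this zero_le) huniv.ne'
    obtain ⟨E, hEG, hEmeas, hEnull, hEunc⟩ := exists_uncountable_null ν hGcomp hGpos
    set E' : Set ℝ := E \ S with hE'def
    have hE'meas : MeasurableSet E' := hEmeas.diff hSmeas
    have hμE' : μ E' = 0 := by
      have h1 : ν E' = μ E' := by
        rw [hνdef, Measure.restrict_apply hE'meas]
        congr 1
        exact inter_eq_left.mpr fun x hx => hx.2
      rw [← h1]
      exact le_antisymm ((measure_mono diff_subset).trans hEnull.le) zero_le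
    have hB : volume (K ∩ f ⁻¹' E') = 0 := by
      rw [← hmap _ hE'meas]
      exact hμE'
    have hcount := hsmall (K ∩ f ⁻¹' E') (inter_subset_left.trans hKA) hB
    have himg : E' ⊆ f '' (K ∩ f ⁻¹' E') := by
      intro y hy
      obtain ⟨x, hx, rfl⟩ := hEG hy.1
      exact ⟨x, ⟨hx, hy⟩, rfl⟩
    have hE'c : E'.Countable := hcount.mono himg
    apply hEunc
    have hEsub : E ⊆ E' ∪ S := by
      intro x hx
      by_cases h : x ∈ S
      · exact Or.inr h
      · exact Or.inl ⟨hx, h⟩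
    exact (hE'c.union hScount).mono hEsub

theorem stmt_5 (A : Set ℝ) (hA : MeasureTheory.AnalyticSet A) (hApos : 0 < volume A)
    (f : ℝ → ℝ) (hf : Continuous f)
    (hsmall : ∀ B : Set ℝ, B ⊆ A → volume B = 0 → (f '' B).Countable) :
    (f '' A).Countable := by
  have hcover : A = ⋃ n : ℕ, A ∩ Icc (-(n : ℝ)) n := by
    ext x
    simp only [mem_iUnion, mem_inter_iff, mem_Icc]
    constructor
    · intro hx
      obtain ⟨n, hn⟩ := exists_nat_ge |x|
      exact ⟨n, hx, (abs_le.mp hn).1, (abs_le.mp hn).2⟩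
    · rintro ⟨n, hx, -⟩
      exact hx
  have himg : f '' A = ⋃ n : ℕ, f '' (A ∩ Icc (-(n : ℝ)) n) := by
    conv_lhs => rw [hcover]
    exact image_iUnion
  rw [himg]
  refine countable_iUnion fun n => ?_
  set An : Set ℝ := A ∩ Icc (-(n : ℝ)) n with hAndef
  have hAn : MeasureTheory.AnalyticSet An := by
    have h1 : An = ⋂ b : Bool, (if b then A else Icc (-(n : ℝ)) n) := by
      ext x
      simp [hAndef, Bool.forall_bool, and_comm]
    rw [h1]
    exact MeasureTheory.AnalyticSet.iInter fun b => by
      cases b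
      · simpa using isClosed_Icc.analyticSet
      · simpa using hA
  by_cases hz : volume An = 0
  · exact hsmall _ inter_subset_left hz
  have hfin : volume An ≠ ⊤ :=
    (lt_of_le_of_lt (measure_mono inter_subset_right) measure_Icc_lt_top).ne
  have hKj : ∀ j : ℕ, ∃ K, K ⊆ An ∧ IsCompact K ∧
      volume (An \ K) ≤ ((j : ℝ≥0∞) + 1)⁻¹ := by
    intro j
    have hc : volume An - ((j : ℝ≥0∞) + 1)⁻¹ < volume An :=
      ENNReal.sub_lt_self hfin hz (by simp)
    obtain ⟨K, hKs, hKc, hKv⟩ := analytic_inner_compact hAn hc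
    refine ⟨K, hKs, hKc, ?_⟩
    have hiK : An ∩ K = K := inter_eq_right.mpr hKs
    have heq : volume K + volume (An \ K) = volume An := by
      have h := measure_inter_add_diff (μ := volume) An hKc.measurableSet
      rwa [hiK] at h
    have hle : volume An ≤ volume K + ((j : ℝ≥0∞) + 1)⁻¹ := by
      rw [add_comm]
      exact tsub_le_iff_left.mp hKv
    have hKfin : volume K ≠ ⊤ := hKc.measure_lt_top.ne
    have := heq.le.trans hle
    rwa [ENNReal.add_le_add_iff_left hKfin] at this
  choose Kseq hKsub hKcomp hKbound using hKj
  set N : Set ℝ := An \ ⋃ j, Kseq j with hNdef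
  have hN : volume N = 0 := by
    by_contra h
    obtain ⟨j, hj⟩ := ENNReal.exists_inv_nat_lt h
    have hsub : N ⊆ An \ Kseq j := diff_subset_diff_right (subset_iUnion _ j)
    have hb := (measure_mono hsub).trans (hKbound j)
    have hmono : ((j : ℝ≥0∞) + 1)⁻¹ ≤ ((j : ℝ≥0∞))⁻¹ :=
      ENNReal.inv_le_inv.mpr (by simp)
    exact absurd hj (not_lt.mpr (hb.trans hmono))
  have hcount_N := hsmall N (diff_subset.trans inter_subset_left) hN
  have hcover2 : f '' An ⊆ f '' N ∪ ⋃ j, f '' Kseq j := by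
    rintro y ⟨x, hx, rfl⟩
    by_cases hxK : x ∈ ⋃ j, Kseq j
    · obtain ⟨j, hj⟩ := mem_iUnion.mp hxK
      exact Or.inr (mem_iUnion.mpr ⟨j, mem_image_of_mem f hj⟩)
    · exact Or.inl ⟨x, ⟨hx, hxK⟩, rfl⟩
  refine Set.Countable.mono hcover2 ?_
  refine hcount_N.union (countable_iUnion fun j => ?_)
  exact compact_image_countable f hf hsmall (hKcomp j) ((hKsub j).trans inter_subset_left)
end

section
/- Assume the continuum hypothesis. Then there exists a function f : ℝ → ℝ such that: (i) for every set A ⊆ ℝ with Lebesgue measure zero, the image f(A) is countable; (ii) f is surjective onto ℝ; (iii) for every set A ⊆ ℝ with positive Lebesgue outer measure, the image f(A) is uncountable; and (iv) for every y ∈ ℝ, the fiber f⁻¹({y}) is an uncountable Borel set of Lebesgue measure zero. -/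
open MeasureTheory Set


noncomputable def cterm (δ : ℝ) (b : Bool) (n : ℕ) : ℝ := cond b (2 * δ * (3:ℝ)⁻¹ ^ (n + 1)) 0

noncomputable def cFun (δ : ℝ) (a : ℕ → Bool) : ℝ := ∑' n, cterm δ (a n) n

lemma cterm_nonneg {δ : ℝ} (hδ : 0 ≤ δ) (b : Bool) (n : ℕ) : 0 ≤ cterm δ b n := by
  cases b <;> simp [cterm] <;> positivity

lemma cterm_le {δ : ℝ} (hδ : 0 ≤ δ) (b : Bool) (n : ℕ) :
    cterm δ b n ≤ 2 * δ * (3:ℝ)⁻¹ ^ (n + 1) := by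
  cases b <;> simp [cterm] <;> positivity

lemma cterm_true (δ : ℝ) (n : ℕ) : cterm δ true n = 2 * δ * (3:ℝ)⁻¹ ^ (n + 1) := rfl
lemma cterm_false (δ : ℝ) (n : ℕ) : cterm δ false n = 0 := rfl

lemma cGeom_summable (δ : ℝ) : Summable (fun n : ℕ => 2 * δ * (3:ℝ)⁻¹ ^ (n + 1)) := by
  have h : (fun n : ℕ => 2 * δ * (3:ℝ)⁻¹ ^ (n + 1)) =
      (fun n : ℕ => (2 * δ * 3⁻¹) * (3:ℝ)⁻¹ ^ n) := by
    funext n; ring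
  rw [h]
  exact (summable_geometric_of_lt_one (by norm_num) (by norm_num)).mul_left _

lemma cGeom_tsum {δ : ℝ} (m : ℕ) :
    ∑' k : ℕ, 2 * δ * (3:ℝ)⁻¹ ^ (k + m + 1) = δ * (3:ℝ)⁻¹ ^ m := by
  have h1 : (fun k : ℕ => 2 * δ * (3:ℝ)⁻¹ ^ (k + m + 1)) =
      (fun k : ℕ => (2 * δ * (3:ℝ)⁻¹ ^ (m + 1)) * (3:ℝ)⁻¹ ^ k) := by
    funext k; rw [pow_add, pow_add]; ring
  rw [h1, tsum_mul_left, tsum_geometric_of_lt_one (by norm_num) (by norm_num), pow_succ]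
  field_simp
  ring

lemma cSummable {δ : ℝ} (hδ : 0 ≤ δ) (a : ℕ → Bool) :
    Summable (fun n => cterm δ (a n) n) :=
  Summable.of_nonneg_of_le (fun n => cterm_nonneg hδ (a n) n)
    (fun n => cterm_le hδ (a n) n) (cGeom_summable δ)

lemma cTail_summable {δ : ℝ} (hδ : 0 ≤ δ) (a : ℕ → Bool) (m : ℕ) :
    Summable (fun k => cterm δ (a (k + m)) (k + m)) :=
  (summable_nat_add_iff m).2 (cSummable hδ a)

lemma cTail_le {δ : ℝ} (hδ : 0 ≤ δ) (a : ℕ → Bool) (m : ℕ) :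
    ∑' k : ℕ, cterm δ (a (k + m)) (k + m) ≤ δ * (3:ℝ)⁻¹ ^ m := by
  have h1 : ∑' k : ℕ, cterm δ (a (k + m)) (k + m)
      ≤ ∑' k : ℕ, 2 * δ * (3:ℝ)⁻¹ ^ (k + m + 1) :=
    Summable.tsum_mono (cTail_summable hδ a m)
      ((summable_nat_add_iff (f := fun n : ℕ => 2 * δ * (3:ℝ)⁻¹ ^ (n + 1)) m).2
        (cGeom_summable δ))
      (fun k => cterm_le hδ (a (k + m)) (k + m))
  exact h1.trans_eq (cGeom_tsum m)

lemma cTail_nonneg {δ : ℝ} (hδ : 0 ≤ δ) (a : ℕ → Bool) (m : ℕ) :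
    0 ≤ ∑' k : ℕ, cterm δ (a (k + m)) (k + m) :=
  tsum_nonneg (fun k => cterm_nonneg hδ _ _)

lemma cFun_nonneg {δ : ℝ} (hδ : 0 ≤ δ) (a : ℕ → Bool) : 0 ≤ cFun δ a :=
  tsum_nonneg (fun k => cterm_nonneg hδ _ _)

lemma cFun_le {δ : ℝ} (hδ : 0 ≤ δ) (a : ℕ → Bool) : cFun δ a ≤ δ := by
  have h := cTail_le hδ a 0
  simp only [add_zero, pow_zero, mul_one] at h
  exact h

lemma cFun_continuous {δ : ℝ} (hδ : 0 ≤ δ) : Continuous (cFun δ) := by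
  apply continuous_tsum (u := fun n : ℕ => 2 * δ * (3:ℝ)⁻¹ ^ (n + 1))
  · intro n
    exact (continuous_of_discreteTopology (f := fun b : Bool => cterm δ b n)).comp
      (continuous_apply n)
  · exact cGeom_summable δ
  · intro n a
    rw [Real.norm_eq_abs, abs_of_nonneg (cterm_nonneg hδ _ _)]
    exact cterm_le hδ _ _

lemma cFun_split {δ : ℝ} (hδ : 0 ≤ δ) (a : ℕ → Bool) (n : ℕ) :
    cFun δ a = (∑ k ∈ Finset.range n, cterm δ (a k) k)
      + ∑' k : ℕ, cterm δ (a (k + n)) (k + n) :=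
  (Summable.sum_add_tsum_nat_add n (cSummable hδ a)).symm

lemma cFun_injective {δ : ℝ} (hδ : 0 < δ) : Function.Injective (cFun δ) := by
  have key : ∀ a b : ℕ → Bool, ∀ n : ℕ, (∀ k < n, a k = b k) → a n = true → b n = false →
      cFun δ b < cFun δ a := by
    intro a b n hpre ha hb
    rw [cFun_split hδ.le a n, cFun_split hδ.le b n]
    have hsum : (∑ k ∈ Finset.range n, cterm δ (a k) k)
        = ∑ k ∈ Finset.range n, cterm δ (b k) k := by
      refine Finset.sum_congr rfl (fun k hk => ?_)
      rw [hpre k (Finset.mem_range.1 hk)]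
    rw [hsum]
    apply add_lt_add_right
    have htb : ∑' k : ℕ, cterm δ (b (k + n)) (k + n) ≤ δ * (3:ℝ)⁻¹ ^ (n + 1) := by
      have hz : ∑' k : ℕ, cterm δ (b (k + n)) (k + n)
          = cterm δ (b n) n + ∑' k : ℕ, cterm δ (b (k + 1 + n)) (k + 1 + n) := by
        have h := Summable.tsum_eq_zero_add (cTail_summable hδ.le b n)
        simpa using h
      rw [hz, hb, cterm_false, zero_add]
      have hre : ∑' k : ℕ, cterm δ (b (k + 1 + n)) (k + 1 + n)
          = ∑' k : ℕ, cterm δ (b (k + (n + 1))) (k + (n + 1)) := by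
        refine tsum_congr (fun k => ?_)
        have h' : k + 1 + n = k + (n + 1) := by ring
        rw [h']
      rw [hre]
      exact cTail_le hδ.le b (n + 1)
    have hta : 2 * δ * (3:ℝ)⁻¹ ^ (n + 1) ≤ ∑' k : ℕ, cterm δ (a (k + n)) (k + n) := by
      have h := Summable.le_tsum (cTail_summable hδ.le a n) 0 (fun j _ => cterm_nonneg hδ.le _ _)
      simpa [ha, cterm_true] using h
    have h3 : (0:ℝ) < (3:ℝ)⁻¹ ^ (n + 1) := by positivity
    nlinarith
  intro a b hab
  by_contra hne
  have hex : ∃ n, a n ≠ b n := by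
    by_contra h
    push_neg at h
    exact hne (funext h)
  classical
  have hn : a (Nat.find hex) ≠ b (Nat.find hex) := Nat.find_spec hex
  have hpre : ∀ k < Nat.find hex, a k = b k := fun k hk => by
    by_contra h
    exact Nat.find_min hex hk h
  cases ha : a (Nat.find hex) <;> cases hb : b (Nat.find hex)
  · exact hn (ha.trans hb.symm)
  · have h := key b a _ (fun k hk => (hpre k hk).symm) hb ha
    rw [hab] at h
    exact lt_irrefl _ h
  · have h := key a b _ hpre ha hb
    rw [hab] at h
    exact lt_irrefl _ h
  · exact hn (ha.trans hb.symm)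

lemma cRange_volume {δ : ℝ} (hδ : 0 ≤ δ) : volume (Set.range (cFun δ)) = 0 := by
  have hbound : ∀ n : ℕ, volume (Set.range (cFun δ)) ≤
      2 ^ n * ENNReal.ofReal (δ * (3:ℝ)⁻¹ ^ n) := by
    intro n
    set c : (Fin n → Bool) → ℝ := fun s => ∑ k : Fin n, cterm δ (s k) (k : ℕ) with hc
    have hcover : Set.range (cFun δ) ⊆
        ⋃ s : Fin n → Bool, Icc (c s) (c s + δ * (3:ℝ)⁻¹ ^ n) := by
      rintro x ⟨a, rfl⟩
      apply Set.mem_iUnion.2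
      refine ⟨fun k => a k, ?_⟩
      have hs : c (fun k => a k) = ∑ k ∈ Finset.range n, cterm δ (a k) k :=
        (Finset.sum_range (fun k => cterm δ (a k) k)).symm
      rw [hs]
      constructor
      · rw [cFun_split hδ a n]
        exact le_add_of_nonneg_right (cTail_nonneg hδ a n)
      · rw [cFun_split hδ a n]
        exact add_le_add_right (cTail_le hδ a n) _
    calc volume (Set.range (cFun δ))
        ≤ volume (⋃ s : Fin n → Bool, Icc (c s) (c s + δ * (3:ℝ)⁻¹ ^ n)) :=
          measure_mono hcover
      _ ≤ ∑ s : Fin n → Bool, volume (Icc (c s) (c s + δ * (3:ℝ)⁻¹ ^ n)) :=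
          measure_iUnion_fintype_le volume _
      _ = ∑ _s : Fin n → Bool, ENNReal.ofReal (δ * (3:ℝ)⁻¹ ^ n) := by
          refine Finset.sum_congr rfl (fun s _ => ?_)
          rw [Real.volume_Icc]
          congr 1
          ring
      _ = 2 ^ n * ENNReal.ofReal (δ * (3:ℝ)⁻¹ ^ n) := by
          classical
          rw [Finset.sum_const, Finset.card_univ]
          simp only [nsmul_eq_mul]
          congr 1
          rw [Fintype.card_fun]
          simp
  have htend : Filter.Tendsto (fun n : ℕ => (2:ENNReal) ^ n * ENNReal.ofReal (δ * (3:ℝ)⁻¹ ^ n))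
      Filter.atTop (nhds 0) := by
    have heq : ∀ n : ℕ, (2:ENNReal) ^ n * ENNReal.ofReal (δ * (3:ℝ)⁻¹ ^ n)
        = ENNReal.ofReal (δ * (2 * 3⁻¹) ^ n) := by
      intro n
      rw [mul_pow, show δ * ((2:ℝ) ^ n * (3:ℝ)⁻¹ ^ n) = (2:ℝ) ^ n * (δ * (3:ℝ)⁻¹ ^ n) by ring,
        ENNReal.ofReal_mul (by positivity : (0:ℝ) ≤ (2:ℝ) ^ n),
        ENNReal.ofReal_pow (by norm_num : (0:ℝ) ≤ 2)]
      norm_num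
    simp only [heq]
    have h1 : Filter.Tendsto (fun n : ℕ => δ * (2 * 3⁻¹ : ℝ) ^ n) Filter.atTop (nhds 0) := by
      have h2 := tendsto_pow_atTop_nhds_zero_of_lt_one (by norm_num : (0:ℝ) ≤ 2 * 3⁻¹)
        (by norm_num : (2 * 3⁻¹ : ℝ) < 1)
      simpa using h2.const_mul δ
    have h2 := (ENNReal.continuous_ofReal.tendsto 0).comp h1
    simpa [Function.comp_def] using h2
  exact le_antisymm (ge_of_tendsto' htend hbound) zero_le

lemma exists_cantor_like (m : ℝ) (hm : 0 < m) :
    ∃ C : Set ℝ, MeasurableSet C ∧ volume C = 0 ∧ ¬ C.Countable ∧ C ⊆ Ioc 0 m := by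
  refine ⟨Set.range (cFun m) ∩ Ioi 0, ?_, ?_, ?_, ?_⟩
  · exact ((isCompact_range (cFun_continuous hm.le)).isClosed.measurableSet).inter
      measurableSet_Ioi
  · exact measure_mono_null inter_subset_left (cRange_volume hm.le)
  · intro hc
    have hrc : (Set.range (cFun m)).Countable := by
      refine Set.Countable.mono ?_ (hc.union (countable_singleton 0))
      rintro x ⟨a, rfl⟩
      rcases lt_or_eq_of_le (cFun_nonneg hm.le a) with h | h
      · exact Or.inl ⟨mem_range_self a, h⟩
      · exact Or.inr (by simp [← h])
    have hco : Countable (ℕ → Bool) :=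
      @Countable.of_equiv _ _ hrc.to_subtype (Equiv.ofInjective _ (cFun_injective hm)).symm
    have hcard : Cardinal.mk (ℕ → Bool) ≤ Cardinal.aleph0 := Cardinal.mk_le_aleph0_iff.2 hco
    rw [← Cardinal.power_def, Cardinal.mk_bool, Cardinal.mk_nat,
      Cardinal.two_power_aleph0] at hcard
    exact absurd hcard (not_le.2 Cardinal.aleph0_lt_continuum)
  · rintro x ⟨⟨a, rfl⟩, hx⟩
    exact ⟨hx, cFun_le hm.le a⟩


lemma exists_uncountable_null_disjoint (U : Set ℝ) (hU : MeasurableSet U)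
    (hU0 : volume U = 0) :
    ∃ B : Set ℝ, MeasurableSet B ∧ volume B = 0 ∧ ¬ B.Countable ∧ Disjoint B U := by
  -- a compact positive measure set disjoint from U
  have hV : MeasurableSet (Icc (0:ℝ) 1 \ U) := measurableSet_Icc.diff hU
  have hVvol : volume (Icc (0:ℝ) 1 \ U) = 1 := by
    rw [measure_diff_null hU0, Real.volume_Icc]
    norm_num
  obtain ⟨K, hKV, hKcomp, hKlt⟩ := hV.exists_isCompact_lt_add
    (by rw [hVvol]; exact ENNReal.one_ne_top) (ε := 1) one_ne_zero
  have hKmeas : MeasurableSet K := hKcomp.isClosed.measurableSet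
  have hKpos : 0 < volume K := by
    by_contra h
    push_neg at h
    have h0 : volume K = 0 := le_antisymm h zero_le
    rw [hVvol, h0, zero_add] at hKlt
    exact lt_irrefl _ hKlt
  have hKfin : volume K ≠ ⊤ := by
    have : volume K ≤ volume (Icc (0:ℝ) 1 \ U) := measure_mono hKV
    rw [hVvol] at this
    exact (this.trans_lt ENNReal.one_lt_top).ne
  have hK01 : K ⊆ Icc (0:ℝ) 1 := hKV.trans diff_subset
  set r : ℝ := (volume K).toReal with hr
  have hrpos : 0 < r := ENNReal.toReal_pos hKpos.ne' hKfin
  -- distribution function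
  set F : ℝ → ℝ := fun x => (volume (K ∩ Iic x)).toReal with hF
  have hfin : ∀ x, volume (K ∩ Iic x) ≠ ⊤ :=
    fun x => ((measure_mono inter_subset_left).trans_lt hKfin.lt_top).ne
  have hFmono : Monotone F := by
    intro a b hab
    exact ENNReal.toReal_le_toReal (hfin a) (hfin b) |>.2
      (measure_mono (inter_subset_inter_right _ (Iic_subset_Iic.2 hab)))
  have hFdiff : ∀ a b : ℝ, a ≤ b → F b - F a = (volume (K ∩ Ioc a b)).toReal := by
    intro a b hab
    have hsplit : K ∩ Iic b = (K ∩ Iic a) ∪ (K ∩ Ioc a b) := by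
      rw [← inter_union_distrib_left]
      congr 1
      rw [Iic_union_Ioc_eq_Iic hab]
    have hdisj : Disjoint (K ∩ Iic a) (K ∩ Ioc a b) := by
      apply Disjoint.mono inter_subset_right inter_subset_right
      exact Iic_disjoint_Ioc le_rfl
    have hvol : volume (K ∩ Iic b) = volume (K ∩ Iic a) + volume (K ∩ Ioc a b) := by
      rw [hsplit, measure_union hdisj (hKmeas.inter measurableSet_Ioc)]
    rw [hF]
    simp only
    rw [hvol, ENNReal.toReal_add (hfin a)
      (((measure_mono inter_subset_left).trans_lt hKfin.lt_top).ne)]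
    ring
  have hFcont : Continuous F := by
    rw [Metric.continuous_iff]
    intro x ε hε
    refine ⟨ε, hε, fun y hy => ?_⟩
    rw [Real.dist_eq] at hy ⊢
    rcases le_total x y with h | h
    · rw [abs_of_nonneg (by linarith [hFmono h] : (0:ℝ) ≤ F y - F x), hFdiff x y h]
      have h1 : volume (K ∩ Ioc x y) ≤ volume (Ioc x y) := measure_mono inter_subset_right
      rw [Real.volume_Ioc] at h1
      have h2 := (ENNReal.toReal_le_toReal ((h1.trans_lt ENNReal.ofReal_lt_top).ne)
        ENNReal.ofReal_ne_top).2 h1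
      rw [ENNReal.toReal_ofReal (by linarith)] at h2
      calc (volume (K ∩ Ioc x y)).toReal ≤ y - x := h2
        _ ≤ |y - x| := le_abs_self _
        _ < ε := hy
    · rw [abs_of_nonpos (by linarith [hFmono h] : F y - F x ≤ 0), neg_sub, hFdiff y x h]
      have h1 : volume (K ∩ Ioc y x) ≤ volume (Ioc y x) := measure_mono inter_subset_right
      rw [Real.volume_Ioc] at h1
      have h2 := (ENNReal.toReal_le_toReal ((h1.trans_lt ENNReal.ofReal_lt_top).ne)
        ENNReal.ofReal_ne_top).2 h1
      rw [ENNReal.toReal_ofReal (by linarith)] at h2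
      calc (volume (K ∩ Ioc y x)).toReal ≤ x - y := h2
        _ ≤ |x - y| := le_abs_self _
        _ < ε := by rwa [abs_sub_comm] at hy
  have hFmeas : Measurable F := hFcont.measurable
  have hFneg : ∀ x < (0:ℝ), F x = 0 := by
    intro x hx
    have : K ∩ Iic x = ∅ := by
      apply eq_empty_of_forall_notMem
      rintro t ⟨htK, htx⟩
      exact absurd ((hK01 htK).1.trans htx) (not_le.2 hx)
    rw [hF]; simp only [this, measure_empty]; simp
  have hFone : ∀ x, (1:ℝ) ≤ x → F x = r := by
    intro x hx
    have : K ∩ Iic x = K := inter_eq_left.2 (fun t ht => le_trans (hK01 ht).2 hx)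
    rw [hF]; simp only [this]; rfl
  have hFnonneg : ∀ x, 0 ≤ F x := fun x => ENNReal.toReal_nonneg
  have hFler : ∀ x, F x ≤ r := fun x =>
    (ENNReal.toReal_le_toReal (hfin x) hKfin).2 (measure_mono inter_subset_left)
  -- pushforward identity
  have hmap : Measure.map F (volume.restrict K) = volume.restrict (Ioc 0 r) := by
    have hfinK : IsFiniteMeasure (volume.restrict K) := by
      constructor
      rw [Measure.restrict_apply_univ]
      exact hKfin.lt_top
    have hfinmap : IsFiniteMeasure (Measure.map F (volume.restrict K)) := by
      constructor
      rw [Measure.map_apply hFmeas MeasurableSet.univ, preimage_univ,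
        Measure.restrict_apply_univ]
      exact hKfin.lt_top
    refine @Measure.ext_of_Iic ℝ _ _ _ _ _ _ _ _ hfinmap (fun a => ?_)
    rw [Measure.map_apply hFmeas measurableSet_Iic,
      Measure.restrict_apply (hFmeas measurableSet_Iic),
      Measure.restrict_apply measurableSet_Iic]
    rcases lt_or_ge a 0 with ha | ha
    · have h1 : F ⁻¹' Iic a ∩ K = ∅ := by
        apply eq_empty_of_forall_notMem
        rintro x ⟨hx1, _⟩
        exact absurd (le_trans (hFnonneg x) hx1) (not_le.2 ha)
      have h2 : Iic a ∩ Ioc 0 r = ∅ := by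
        apply eq_empty_of_forall_notMem
        rintro x ⟨hx1, hx2⟩
        exact absurd (lt_of_lt_of_le hx2.1 hx1) (not_lt.2 ha.le)
      rw [h1, h2]
    rcases lt_or_ge a r with har | har
    · -- 0 ≤ a < r
      set s := {x : ℝ | F x ≤ a} with hs
      have hne : (-1:ℝ) ∈ s := by
        rw [hs]
        simp only [mem_setOf_eq]
        rw [hFneg (-1) (by norm_num)]
        exact ha
      have hbdd : BddAbove s := by
        refine ⟨1, fun x hx => ?_⟩
        by_contra h
        push_neg at h
        rw [hs, mem_setOf_eq, hFone x h.le] at hx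
        exact absurd (lt_of_le_of_lt hx har) (lt_irrefl r)
      have hcl : IsClosed s := isClosed_le hFcont continuous_const
      set z := sSup s with hz
      have hzs : z ∈ s := hcl.csSup_mem ⟨-1, hne⟩ hbdd
      have hFz : F z = a := by
        refine le_antisymm hzs ?_
        by_contra h
        push_neg at h
        have hopen : IsOpen {x : ℝ | F x < a} := isOpen_lt hFcont continuous_const
        obtain ⟨ε, hε, hball⟩ := Metric.isOpen_iff.1 hopen z h
        have : z + ε / 2 ∈ s := by
          have hmem : z + ε / 2 ∈ {x : ℝ | F x < a} := by
            apply hball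
            rw [Metric.mem_ball, Real.dist_eq, abs_of_nonneg (by linarith)]
            linarith
          exact le_of_lt (show F (z + ε / 2) < a from hmem)
        have := le_csSup hbdd this
        linarith
      have hseq : F ⁻¹' Iic a = Iic z := by
        ext x
        simp only [mem_preimage, mem_Iic]
        constructor
        · intro hx
          exact le_csSup hbdd hx
        · intro hx
          exact le_trans (hFmono hx) (le_of_eq hFz)
      rw [hseq]
      have h2 : Iic a ∩ Ioc 0 r = Ioc 0 a := by
        ext x
        simp only [mem_inter_iff, mem_Iic, mem_Ioc]
        constructor
        · rintro ⟨h1, h2, h3⟩; exact ⟨h2, h1⟩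
        · rintro ⟨h1, h2⟩; exact ⟨h2, h1, h2.trans (le_of_lt har)⟩
      rw [h2, Real.volume_Ioc, inter_comm, sub_zero]
      have hFz' : (volume (K ∩ Iic z)).toReal = a := hFz
      rw [← hFz', ENNReal.ofReal_toReal (hfin z)]
    · -- r ≤ a
      have h1 : F ⁻¹' Iic a = univ := by
        apply eq_univ_of_forall
        intro x
        exact le_trans (hFler x) har
      have h2 : Iic a ∩ Ioc 0 r = Ioc 0 r := by
        apply inter_eq_right.2
        intro x hx
        exact le_trans hx.2 har
      rw [h1, h2, univ_inter, Real.volume_Ioc]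
      rw [← hr] at *
      rw [show ENNReal.ofReal (r - 0) = ENNReal.ofReal r by norm_num]
      rw [hr, ENNReal.ofReal_toReal hKfin]
  -- get the Cantor-type set
  obtain ⟨C, hCmeas, hC0, hCunc, hCsub⟩ := exists_cantor_like r hrpos
  refine ⟨K ∩ F ⁻¹' C, hKmeas.inter (hFmeas hCmeas), ?_, ?_, ?_⟩
  · have h1 : volume (K ∩ F ⁻¹' C) = (volume.restrict K) (F ⁻¹' C) := by
      rw [Measure.restrict_apply (hFmeas hCmeas), inter_comm]
    rw [h1, ← Measure.map_apply hFmeas hCmeas, hmap, Measure.restrict_apply hCmeas]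
    exact measure_mono_null inter_subset_left hC0
  · -- uncountable: C ⊆ F '' (K ∩ F⁻¹ C)
    intro hcnt
    apply hCunc
    have hsub : C ⊆ F '' (K ∩ F ⁻¹' C) := by
      intro y hy
      obtain ⟨hy0, hyr⟩ := hCsub hy
      set S := {x : ℝ | y ≤ F x} with hS
      have hSne : (1:ℝ) ∈ S := by
        rw [hS, mem_setOf_eq, hFone 1 le_rfl]
        exact hyr
      have hSbdd : BddBelow S := by
        refine ⟨0, fun x hx => ?_⟩
        by_contra h
        push_neg at h
        rw [hS, mem_setOf_eq, hFneg x h] at hx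
        exact absurd (lt_of_lt_of_le hy0 hx) (lt_irrefl 0)
      have hScl : IsClosed S := isClosed_le continuous_const hFcont
      set w := sInf S with hw
      have hwS : w ∈ S := hScl.csInf_mem ⟨1, hSne⟩ hSbdd
      have hFw : F w = y := by
        refine le_antisymm ?_ hwS
        by_contra h
        push_neg at h
        have hopen : IsOpen {x : ℝ | y < F x} := isOpen_lt continuous_const hFcont
        obtain ⟨ε, hε, hball⟩ := Metric.isOpen_iff.1 hopen w h
        have hmem : w - ε / 2 ∈ S := by
          have hmem : w - ε / 2 ∈ {x : ℝ | y < F x} := by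
            apply hball
            rw [Metric.mem_ball, Real.dist_eq, abs_of_nonpos (by linarith)]
            linarith
          exact le_of_lt (show y < F (w - ε / 2) from hmem)
        have := csInf_le hSbdd hmem
        linarith
      have hwK : w ∈ K := by
        by_contra h
        obtain ⟨ε, hε, hball⟩ := Metric.isOpen_iff.1 hKcomp.isClosed.isOpen_compl w h
        have hzero : volume (K ∩ Ioc (w - ε / 2) w) = 0 := by
          have hempty : K ∩ Ioc (w - ε / 2) w = ∅ := by
            apply eq_empty_of_forall_notMem
            rintro t ⟨htK, ht1, ht2⟩
            have htb : t ∈ Metric.ball w ε := by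
              rw [Metric.mem_ball, Real.dist_eq, abs_of_nonpos (by linarith)]
              linarith
            exact hball htb htK
          rw [hempty, measure_empty]
        have heq : F (w - ε / 2) = F w := by
          have := hFdiff (w - ε / 2) w (by linarith)
          rw [hzero] at this
          simp at this
          linarith
        have : w - ε / 2 ∈ S := by
          rw [hS, mem_setOf_eq, heq, hFw]
        have := csInf_le hSbdd this
        linarith
      exact ⟨w, ⟨hwK, by rw [mem_preimage, hFw]; exact hy⟩, hFw⟩
    exact Set.Countable.mono hsub (hcnt.image F)
  · exact disjoint_left.2 fun x hx hxU => (hKV hx.1).2 hxU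


theorem stmt_7 (hCH : Cardinal.continuum = Cardinal.aleph 1) :
    ∃ f : ℝ → ℝ,
      (∀ A : Set ℝ, volume A = 0 → (f '' A).Countable) ∧
      Function.Surjective f ∧
      (∀ A : Set ℝ, 0 < volume A → ¬ (f '' A).Countable) ∧
      (∀ y : ℝ, ¬ (f ⁻¹' {y}).Countable ∧ MeasurableSet (f ⁻¹' {y}) ∧
        volume (f ⁻¹' {y}) = 0) := by
  classical
  have hCH0 : (Cardinal.continuum : Cardinal.{0}) = Cardinal.aleph 1 := by
    apply Cardinal.lift_injective.{_, 0}
    rw [Cardinal.lift_continuum, Cardinal.lift_aleph, hCH]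
    congr 1
    simp
  clear hCH
  -- index type: ω₁
  set ι := ((Cardinal.aleph 1 : Cardinal.{0}).ord).ToType with hι
  have hmkι : Cardinal.mk ι = Cardinal.aleph 1 := Cardinal.mk_ord_toType _
  have hIio : ∀ i : ι, (Set.Iio i).Countable := fun i =>
    (Cardinal.countable_iff_lt_aleph_one _).2 (Cardinal.mk_Iio_ord_toType i)
  have hIic : ∀ i : ι, (Set.Iic i).Countable := by
    intro i
    have h : Set.Iic i = insert i (Set.Iio i) := (Set.Iio_insert).symm
    rw [h]
    exact (hIio i).insert i
  have hne : Nonempty ι := by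
    rw [hι, Ordinal.toType_nonempty_iff_ne_zero]
    intro h
    have h0 : (Cardinal.aleph 1 : Cardinal.{0}) = 0 := Cardinal.ord_eq_zero.1 h
    have h2 := Cardinal.aleph0_lt_aleph_one.{0}
    rw [h0] at h2
    exact (Cardinal.zero_le _).not_gt h2
  -- the family of Borel null sets
  set 𝒩 : Set (Set ℝ) := {s : Set ℝ | MeasurableSet s ∧ volume s = 0} with h𝒩
  have h𝒩ne : Nonempty ↥𝒩 := ⟨⟨∅, MeasurableSet.empty, measure_empty⟩⟩
  have h𝒩card : Cardinal.mk ↥𝒩 ≤ Cardinal.continuum := by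
    have hsub : 𝒩 ⊆ {s : Set ℝ | MeasurableSet s} := fun s hs => hs.1
    refine le_trans (Cardinal.mk_le_mk_of_subset hsub) ?_
    have hgen : (MeasurableSpace.generateFrom (MeasurableSpace.countableGeneratingSet ℝ))
        = (inferInstance : MeasurableSpace ℝ) :=
      MeasurableSpace.generateFrom_countableGeneratingSet
    have hct : Countable ↑(MeasurableSpace.countableGeneratingSet ℝ) :=
      (MeasurableSpace.countable_countableGeneratingSet).to_subtype
    have := MeasurableSpace.cardinal_measurableSet_le_continuum
      (s := MeasurableSpace.countableGeneratingSet ℝ)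
      ((@Cardinal.mk_le_aleph0 _ hct).trans Cardinal.aleph0_le_continuum)
    rw [hgen] at this
    exact this
  -- surjection ν : ι → 𝒩
  have hcard2 : Cardinal.mk ↥𝒩 ≤ Cardinal.mk ι := by
    rw [hmkι, ← hCH0]; exact h𝒩card
  obtain ⟨j⟩ := Cardinal.le_def _ _ |>.1 hcard2
  set ν' : ι → ↥𝒩 := Function.invFun j with hν'
  have hν'surj : Function.Surjective ν' := Function.invFun_surjective j.injective
  set ν : ι → Set ℝ := fun i => (ν' i : Set ℝ) with hν
  have hνmeas : ∀ i, MeasurableSet (ν i) := fun i => (ν' i).2.1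
  have hνnull : ∀ i, volume (ν i) = 0 := fun i => (ν' i).2.2
  have hνall : ∀ s ∈ 𝒩, ∃ i, ν i = s := by
    intro s hs
    obtain ⟨i, hi⟩ := hν'surj ⟨s, hs⟩
    exact ⟨i, by rw [hν]; simp [hi]⟩
  -- the rank function
  have hcov : ∀ x : ℝ, {i : ι | x ∈ ν i}.Nonempty := by
    intro x
    obtain ⟨i, hi⟩ := hνall {x} ⟨measurableSet_singleton x, measure_singleton x⟩
    exact ⟨i, by rw [mem_setOf_eq, hi]; exact mem_singleton x⟩
  have hwf : WellFounded ((· < ·) : ι → ι → Prop) := IsWellFounded.wf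
  set rk : ℝ → ι := fun x => hwf.min {i : ι | x ∈ ν i} (hcov x) with hrk
  have hrk_mem : ∀ x, x ∈ ν (rk x) := fun x => hwf.min_mem _ (hcov x)
  have hrk_le : ∀ x : ℝ, ∀ i : ι, x ∈ ν i → rk x ≤ i := by
    intro x i hi
    by_contra h
    push_neg at h
    exact hwf.not_lt_min _ hi h
  set M : ι → Set ℝ := fun i => rk ⁻¹' {i} with hM
  have hMsub : ∀ i, M i ⊆ ν i := by
    rintro i x (hx : rk x = i)
    rw [← hx]; exact hrk_mem x
  have hMnull : ∀ i, volume (M i) = 0 := fun i => measure_mono_null (hMsub i) (hνnull i)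
  have hMeq : ∀ i, M i = ν i \ ⋃ j ∈ Set.Iio i, ν j := by
    intro i
    ext x
    constructor
    · rintro (hx : rk x = i)
      refine ⟨hx ▸ hrk_mem x, ?_⟩
      intro hmem
      simp only [mem_iUnion] at hmem
      obtain ⟨j, hji, hj⟩ := hmem
      exact absurd (hx ▸ hrk_le x j hj) (not_le.2 hji)
    · rintro ⟨hx1, hx2⟩
      have h1 : rk x ≤ i := hrk_le x i hx1
      rcases lt_or_eq_of_le h1 with h | h
      · exact absurd (Set.mem_biUnion (show rk x ∈ Set.Iio i from h) (hrk_mem x)) hx2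
      · exact h
  have hMmeas : ∀ i, MeasurableSet (M i) := by
    intro i
    rw [hMeq i]
    exact (hνmeas i).diff (MeasurableSet.biUnion (hIio i) (fun j _ => hνmeas j))
  -- the set of indices with uncountable fiber piece
  set T : Set ι := {i : ι | ¬ (M i).Countable} with hT
  have hTunc : ¬ T.Countable := by
    intro hTc
    set U : Set ℝ := ⋃ i ∈ T, M i with hU
    have hUmeas : MeasurableSet U := MeasurableSet.biUnion hTc (fun i _ => hMmeas i)
    have hUnull : volume U = 0 := (measure_biUnion_null_iff hTc).2 (fun i _ => hMnull i)
    obtain ⟨B, hBmeas, hBnull, hBunc, hBdisj⟩ := exists_uncountable_null_disjoint U hUmeas hUnull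
    obtain ⟨i₂, hi₂⟩ := hνall B ⟨hBmeas, hBnull⟩
    apply hBunc
    have hBsub : B ⊆ ⋃ i ∈ (Set.Iic i₂ ∩ Tᶜ), M i := by
      intro x hx
      have h1 : rk x ≤ i₂ := hrk_le x i₂ (by rw [hi₂]; exact hx)
      have hxM : x ∈ M (rk x) := Set.mem_preimage.2 (Set.mem_singleton _)
      have h2 : rk x ∉ T := by
        intro h
        exact absurd (Set.mem_biUnion h hxM) (disjoint_left.1 hBdisj hx)
      exact Set.mem_biUnion (⟨h1, h2⟩ : rk x ∈ Set.Iic i₂ ∩ Tᶜ) hxM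
    refine Set.Countable.mono hBsub ?_
    refine Set.Countable.biUnion ((hIic i₂).mono inter_subset_left) ?_
    rintro i ⟨_, hi⟩
    exact not_not.1 hi
  -- cardinalities
  have hTcard : Cardinal.mk ↥T = Cardinal.mk ℝ := by
    have h1 : Cardinal.aleph 1 ≤ Cardinal.mk ↥T := by
      by_contra h
      push_neg at h
      exact hTunc ((Cardinal.countable_iff_lt_aleph_one _).2 h)
    have h2 : Cardinal.mk ↥T ≤ Cardinal.aleph 1 := hmkι ▸ Cardinal.mk_set_le T
    rw [Cardinal.mk_real, hCH0]
    exact le_antisymm h2 h1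
  have hιcard : Cardinal.mk ι = Cardinal.mk ℝ := by
    rw [hmkι, Cardinal.mk_real, hCH0]
  obtain ⟨e⟩ : Nonempty (ℝ ≃ ↥T) := Cardinal.eq.1 hTcard.symm
  obtain ⟨d⟩ : Nonempty (ι ≃ ℝ) := Cardinal.eq.1 hιcard
  -- the collapsing map
  set π : ι → ℝ := fun i => if h : i ∈ T then e.symm ⟨i, h⟩ else d i with hπ
  have hπfiber : ∀ y : ℝ, π ⁻¹' {y} ⊆ {((e y : ↥T) : ι), d.symm y} := by
    intro y i hi
    simp only [mem_preimage, mem_singleton_iff] at hi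
    rw [hπ] at hi
    simp only at hi
    simp only [mem_insert_iff, mem_singleton_iff]
    by_cases h : i ∈ T
    · rw [dif_pos h] at hi
      left
      have h2 : (⟨i, h⟩ : ↥T) = e y := by
        rw [← hi]; simp
      exact congrArg Subtype.val h2
    · rw [dif_neg h] at hi
      right
      rw [← hi]; simp
  have hπmem : ∀ y : ℝ, π ((e y : ↥T) : ι) = y := by
    intro y
    rw [hπ]
    simp only
    rw [dif_pos (e y).2]
    simp
  set f : ℝ → ℝ := π ∘ rk with hf
  have hfiber_eq : ∀ y : ℝ, f ⁻¹' {y} = ⋃ i ∈ π ⁻¹' {y}, M i := by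
    intro y
    ext x
    simp only [hf, mem_preimage, Function.comp_apply, mem_singleton_iff, mem_iUnion]
    constructor
    · intro hx
      exact ⟨rk x, hx, rfl⟩
    · rintro ⟨i, hi, (hx : rk x = i)⟩
      rw [hx]; exact hi
  have hπfib_ct : ∀ y : ℝ, (π ⁻¹' {y}).Countable := fun y =>
    Set.Countable.mono (hπfiber y) ((countable_singleton _).insert _)
  have hfiber_null : ∀ y : ℝ, volume (f ⁻¹' {y}) = 0 := by
    intro y
    rw [hfiber_eq y]
    exact (measure_biUnion_null_iff (hπfib_ct y)).2 (fun i _ => hMnull i)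
  have hfiber_unc : ∀ y : ℝ, ¬ (f ⁻¹' {y}).Countable := by
    intro y hc
    have hsub : M ((e y : ↥T) : ι) ⊆ f ⁻¹' {y} := by
      rw [hfiber_eq y]
      exact subset_biUnion_of_mem (by simp [mem_preimage, hπmem y])
    exact (e y).2 (hc.mono hsub)
  refine ⟨f, ?_, ?_, ?_, ?_⟩
  · -- null sets have countable image
    intro A hA
    obtain ⟨N, hAN, hNmeas, hNnull⟩ := exists_measurable_superset_of_null hA
    obtain ⟨i₀, hi₀⟩ := hνall N ⟨hNmeas, hNnull⟩
    have h1 : rk '' A ⊆ Set.Iic i₀ := by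
      rintro i ⟨x, hx, rfl⟩
      exact hrk_le x i₀ (by rw [hi₀]; exact hAN hx)
    have h2 : f '' A = π '' (rk '' A) := by
      rw [hf, Set.image_comp]
    rw [h2]
    exact (((hIic i₀).mono h1).image π)
  · -- surjective
    intro y
    have h := hfiber_unc y
    have hne' : (f ⁻¹' {y}).Nonempty := by
      rcases Set.eq_empty_or_nonempty (f ⁻¹' {y}) with h1 | h1
      · rw [h1] at h
        exact absurd countable_empty h
      · exact h1
    obtain ⟨x, hx⟩ := hne'
    exact ⟨x, hx⟩
  · -- positive outer measure → uncountable image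
    intro A hA hc
    have hsub : A ⊆ ⋃ y ∈ f '' A, f ⁻¹' {y} := by
      intro x hx
      exact mem_biUnion (mem_image_of_mem f hx) rfl
    have : volume A = 0 :=
      measure_mono_null hsub ((measure_biUnion_null_iff hc).2 (fun y _ => hfiber_null y))
    rw [this] at hA
    exact lt_irrefl _ hA
  · intro y
    exact ⟨hfiber_unc y, by
      rw [hfiber_eq y]
      exact MeasurableSet.biUnion (hπfib_ct y) (fun i _ => hMmeas i), hfiber_null y⟩
end

section
/- Let A ⊆ ℝ be a set with positive Lebesgue outer measure, and let f : ℝ → ℝ be a continuous function such that for every subset B ⊆ A with Lebesgue measure zero, the image f(B) is meager. Then the image f(A) is meager. -/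
open MeasureTheory Set

lemma isMeagre_singleton_real (x : ℝ) : IsMeagre ({x} : Set ℝ) := by
  rw [IsMeagre]
  exact residual_of_dense_open isOpen_compl_singleton (dense_compl_singleton x)

lemma isMeagre_of_countable {C : Set ℝ} (hC : C.Countable) : IsMeagre C := by
  rcases C.eq_empty_or_nonempty with rfl | hne
  · exact IsMeagre.empty
  · obtain ⟨g, hg⟩ := hC.exists_eq_range hne
    have : C ⊆ ⋃ n : ℕ, ({g n} : Set ℝ) := by
      rw [hg]; intro x hx; simpa using hx
    exact (isMeagre_iUnion fun n => isMeagre_singleton_real (g n)).mono this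

lemma IsMeagre.union' {s t : Set ℝ} (hs : IsMeagre s) (ht : IsMeagre t) :
    IsMeagre (s ∪ t) := by
  rw [IsMeagre, compl_union]
  exact Filter.inter_mem hs ht

lemma aux_meagre (S : Set ℝ) (hS : volume S ≠ ⊤)
    (f : ℝ → ℝ) (hf : Continuous f)
    (hsmall : ∀ B : Set ℝ, B ⊆ S → volume B = 0 → IsMeagre (f '' B)) :
    IsMeagre (f '' S) := by
  obtain ⟨H, hSH, hHm, hHvol⟩ := exists_measurable_superset volume S
  set μ := Measure.map f (volume.restrict H) with hμ
  haveI : IsFiniteMeasure (volume.restrict H) := by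
    constructor
    rw [Measure.restrict_apply_univ]
    exact lt_top_iff_ne_top.2 (hHvol ▸ hS)
  haveI : IsFiniteMeasure μ := by
    constructor
    rw [hμ, Measure.map_apply hf.measurable MeasurableSet.univ]
    exact measure_lt_top _ _
  set C := {y : ℝ | μ {y} ≠ 0} with hC
  have hCc : C.Countable := by
    have h := Measure.countable_meas_pos_of_disjoint_iUnion
      (μ := μ) (As := fun y : ℝ => {y}) (fun y => measurableSet_singleton y)
      (fun y z hyz => by simpa [Function.onFun] using disjoint_singleton.2 hyz)
    convert h using 1
    ext y
    simp [hC, pos_iff_ne_zero]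
  have hCmeas : MeasurableSet C := hCc.measurableSet
  set μ' := μ.restrict Cᶜ with hμ'
  haveI : NullSingletonClass μ' := by
    constructor
    intro y
    rw [hμ', Measure.restrict_apply (measurableSet_singleton y)]
    by_cases hy : y ∈ C
    · have : ({y} : Set ℝ) ∩ Cᶜ = ∅ := by
        ext z; simp only [mem_inter_iff, mem_singleton_iff, mem_compl_iff, mem_empty_iff_false,
          iff_false, not_and]
        rintro rfl; simpa using hy
      rw [this, measure_empty]
    · have : ({y} : Set ℝ) ∩ Cᶜ = {y} := by
        rw [inter_eq_left]
        intro z hz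
        simp only [mem_singleton_iff] at hz
        subst hz
        simpa using hy
      rw [this]
      simpa [hC] using hy
  have hQd : Dense (range ((↑) : ℚ → ℝ)) := Rat.denseRange_cast
  have hQ0 : μ' (range ((↑) : ℚ → ℝ)) = 0 := (countable_range _).measure_zero μ'
  have hU : ∀ n : ℕ, ∃ U : Set ℝ, range ((↑) : ℚ → ℝ) ⊆ U ∧ IsOpen U ∧ μ' U < (n : ENNReal)⁻¹ := by
    intro n
    apply Set.exists_isOpen_lt_of_lt
    rw [hQ0]
    exact ENNReal.inv_pos.2 (by simp)
  choose U hUQ hUo hUlt using hU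
  set G := ⋂ n, U n with hG
  have hGres : G ∈ residual ℝ :=
    countable_iInter_mem.2 fun n => residual_of_dense_open (hUo n) (hQd.mono (hUQ n))
  have hGmeag : IsMeagre Gᶜ := by rw [IsMeagre, compl_compl]; exact hGres
  have hG0 : μ' G = 0 := by
    by_contra h
    obtain ⟨n, hn⟩ := ENNReal.exists_inv_nat_lt h
    exact absurd ((measure_mono (iInter_subset U n)).trans_lt (hUlt n)) (not_lt.2 hn.le)
  have hGmeas : MeasurableSet G := MeasurableSet.iInter fun n => (hUo n).measurableSet
  set B := S ∩ f ⁻¹' (G ∩ Cᶜ) with hB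
  have hB0 : volume B = 0 := by
    have hle : volume B ≤ volume (H ∩ f ⁻¹' (G ∩ Cᶜ)) :=
      measure_mono (inter_subset_inter hSH Subset.rfl)
    have heq : volume (H ∩ f ⁻¹' (G ∩ Cᶜ)) = μ (G ∩ Cᶜ) := by
      rw [hμ, Measure.map_apply hf.measurable (hGmeas.inter hCmeas.compl),
        Measure.restrict_apply (hf.measurable (hGmeas.inter hCmeas.compl)), inter_comm]
    have h2 : μ (G ∩ Cᶜ) = 0 := by
      have := hG0
      rwa [hμ', Measure.restrict_apply hGmeas] at this
    exact le_antisymm (hle.trans (le_of_eq (heq.trans h2))) (zero_le)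
  have hmB : IsMeagre (f '' B) := hsmall B inter_subset_left hB0
  have hsub : f '' S ⊆ f '' B ∪ (Gᶜ ∪ C) := by
    rintro y ⟨x, hxS, rfl⟩
    by_cases hg : f x ∈ G ∩ Cᶜ
    · exact Or.inl ⟨x, ⟨hxS, hg⟩, rfl⟩
    · right
      rcases not_and_or.1 (by simpa only [mem_inter_iff] using hg) with h | h
      · exact Or.inl h
      · exact Or.inr (not_not.1 h)
  exact (hmB.union' (hGmeag.union' (isMeagre_of_countable hCc))).mono hsub

theorem stmt_8 (A : Set ℝ) (hApos : 0 < volume A)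
    (f : ℝ → ℝ) (hf : Continuous f)
    (hsmall : ∀ B : Set ℝ, B ⊆ A → volume B = 0 → IsMeagre (f '' B)) :
    IsMeagre (f '' A) := by
  have himg : f '' A = ⋃ n : ℕ, f '' (A ∩ Icc (-(n : ℝ)) n) := by
    ext y
    constructor
    · rintro ⟨x, hx, rfl⟩
      refine mem_iUnion.2 ⟨⌈|x|⌉₊, ⟨x, ⟨hx, ?_⟩, rfl⟩⟩
      have h1 : |x| ≤ (⌈|x|⌉₊ : ℝ) := Nat.le_ceil _
      constructor
      · linarith [abs_le.1 h1 |>.1, neg_abs_le x]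
      · exact le_trans (le_abs_self x) h1
    · intro hy
      obtain ⟨n, x, hx, rfl⟩ := by simpa using hy
      exact ⟨x, hx.1, rfl⟩
  rw [himg]
  refine isMeagre_iUnion fun n => aux_meagre _ ?_ f hf
    (fun B hB h0 => hsmall B (hB.trans inter_subset_left) h0)
  exact ne_top_of_le_ne_top (by simp [Real.volume_Icc]) (measure_mono inter_subset_right)
end

section
/- Let a < b be reals and let f : ℝ → ℝ be a continuous function such that for every subset B ⊆ [a,b] with Lebesgue measure zero, the image f(B) is meager. Then f is constant on [a,b]. -/
open MeasureTheory Set Metric Filter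
open scoped ENNReal Topology

theorem stmt_9 (a b : ℝ) (hab : a < b) (f : ℝ → ℝ) (hf : Continuous f)
    (hsmall : ∀ B : Set ℝ, B ⊆ Set.Icc a b → volume B = 0 → IsMeagre (f '' B)) :
    ∃ c : ℝ, ∀ x ∈ Set.Icc a b, f x = c := by
  by_contra hcon
  push_neg at hcon
  obtain ⟨x, hx, hfx⟩ := hcon (f a)
  have ha : a ∈ Icc a b := ⟨le_refl a, hab.le⟩
  have hfm : Measurable f := hf.measurable
  set μ : Measure ℝ := Measure.map f (volume.restrict (Icc a b)) with hμdef
  have hμfin : IsFiniteMeasure μ := by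
    constructor
    rw [hμdef, Measure.map_apply hfm MeasurableSet.univ]
    simp [Real.volume_Icc]
  -- atoms of μ are countable
  have hatoms : Set.Countable {t : ℝ | 0 < μ {t}} := by
    haveI : SFinite μ := inferInstance
    exact Measure.countable_meas_pos_of_disjoint_iUnion
      (fun t => measurableSet_singleton t)
      (fun s t hst => by
        simp only [Function.onFun, disjoint_singleton]; exact hst)
  have hdc : Dense ({t : ℝ | 0 < μ {t}}ᶜ) := hatoms.dense_compl ℝ
  obtain ⟨D, hDN, hDc, hDd⟩ := hdc.exists_countable_dense_subset
  have hDne : D.Nonempty := hDd.nonempty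
  obtain ⟨e, he⟩ := hDc.exists_eq_range hDne
  set ν : Measure ℝ := μ + volume with hνdef
  have hν0 : ∀ k : ℕ, ν {e k} = 0 := by
    intro k
    have hek : e k ∈ D := by rw [he]; exact ⟨k, rfl⟩
    have : ¬ 0 < μ {e k} := hDN hek
    have hμ0 : μ {e k} = 0 := by simpa using this
    simp [hνdef, hμ0]
  -- choose small balls
  have key : ∀ n k : ℕ, ∃ r : ℝ, 0 < r ∧ ν (ball (e k) r) ≤ (2⁻¹ : ℝ≥0∞) ^ (n + k + 1) := by
    intro n k
    have hsing : (⋂ i : ℕ, closedBall (e k) (1 / (i + 1))) = {e k} := by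
      apply Subset.antisymm
      · intro y hy
        simp only [mem_iInter, mem_closedBall] at hy
        have : dist y (e k) ≤ 0 := by
          refine le_of_forall_pos_le_add (fun ε hε => ?_)
          obtain ⟨i, hi⟩ := exists_nat_one_div_lt hε
          exact le_trans (hy i) (by linarith [hi])
        exact dist_le_zero.mp this
      · intro y hy
        simp only [mem_singleton_iff] at hy
        subst hy
        simp only [mem_iInter, mem_closedBall, dist_self]
        intro i; positivity
    have htend : Tendsto (fun i : ℕ => ν (closedBall (e k) (1 / (i + 1)))) atTop
        (𝓝 (ν {e k})) := by
      rw [← hsing]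
      apply tendsto_measure_iInter_atTop
        (fun i => measurableSet_closedBall.nullMeasurableSet)
      · intro i j hij
        apply closedBall_subset_closedBall
        have : (i : ℝ) ≤ j := Nat.cast_le.mpr hij
        rw [div_le_div_iff₀ (by positivity) (by positivity)]
        linarith
      · refine ⟨0, ?_⟩
        have hb : ν (closedBall (e k) (1 / ((0 : ℕ) + 1))) ≤
            μ Set.univ + volume (closedBall (e k) 1) := by
          rw [hνdef, Measure.add_apply]
          refine add_le_add (measure_mono (subset_univ _)) (measure_mono ?_)
          intro z hz
          simp only [mem_closedBall] at hz ⊢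
          calc dist z (e k) ≤ 1 / ((0 : ℕ) + 1) := hz
            _ ≤ 1 := by norm_num
        exact ne_top_of_le_ne_top
          (ENNReal.add_ne_top.2 ⟨measure_ne_top μ _, measure_closedBall_lt_top.ne⟩) hb
    rw [hν0 k] at htend
    have hpos : (0 : ℝ≥0∞) < (2⁻¹ : ℝ≥0∞) ^ (n + k + 1) :=
      ENNReal.pow_pos (ENNReal.inv_pos.mpr ENNReal.ofNat_ne_top) _
    obtain ⟨i, hi⟩ := (htend.eventually (Iio_mem_nhds hpos)).exists
    refine ⟨1 / (i + 1), by positivity, ?_⟩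
    exact le_trans (measure_mono ball_subset_closedBall) (le_of_lt hi)
  choose r hrpos hrsmall using key
  set U : ℕ → Set ℝ := fun n => ⋃ k, ball (e k) (r n k) with hUdef
  have hUopen : ∀ n, IsOpen (U n) := fun n => isOpen_iUnion fun k => isOpen_ball
  have hUdense : ∀ n, Dense (U n) := by
    intro n
    apply hDd.mono
    rw [he]
    rintro y ⟨k, rfl⟩
    exact mem_iUnion.2 ⟨k, mem_ball_self (hrpos n k)⟩
  set C : Set ℝ := ⋂ n, U n with hCdef
  have hCGδ : IsGδ C := IsGδ.iInter_of_isOpen hUopen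
  have hCdense : Dense C := dense_iInter_of_isOpen hUopen hUdense
  have hCres : C ∈ residual ℝ := residual_of_dense_Gδ hCGδ hCdense
  have hCmeas : MeasurableSet C := hCGδ.measurableSet
  -- ν C = 0
  have hνC : ν C = 0 := by
    have hle : ∀ n : ℕ, ν C ≤ (2⁻¹ : ℝ≥0∞) ^ n := by
      intro n
      have h1 : ν C ≤ ν (U n) := measure_mono (iInter_subset _ n)
      have h2 : ν (U n) ≤ ∑' k, ν (ball (e k) (r n k)) := measure_iUnion_le _
      have h3 : ∑' k : ℕ, ν (ball (e k) (r n k)) ≤ ∑' k : ℕ, (2⁻¹ : ℝ≥0∞) ^ (n + k + 1) :=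
        ENNReal.tsum_le_tsum fun k => hrsmall n k
      have h4 : ∑' k : ℕ, (2⁻¹ : ℝ≥0∞) ^ (n + k + 1) = (2⁻¹ : ℝ≥0∞) ^ n := by
        have : ∀ k : ℕ, (2⁻¹ : ℝ≥0∞) ^ (n + k + 1) = (2⁻¹ : ℝ≥0∞) ^ (n + 1) * (2⁻¹) ^ k := by
          intro k; ring
        rw [tsum_congr this, ENNReal.tsum_mul_left, ENNReal.tsum_geometric]
        rw [pow_succ]
        have h12 : (1 : ℝ≥0∞) - 2⁻¹ = 2⁻¹ := by
          rw [← ENNReal.inv_two_add_inv_two, ENNReal.add_sub_cancel_right (by norm_num)]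
        rw [h12, mul_assoc, ENNReal.mul_inv_cancel (by norm_num) (by norm_num), mul_one]
      calc ν C ≤ ν (U n) := h1
        _ ≤ ∑' k, ν (ball (e k) (r n k)) := h2
        _ ≤ ∑' k : ℕ, (2⁻¹ : ℝ≥0∞) ^ (n + k + 1) := h3
        _ = (2⁻¹ : ℝ≥0∞) ^ n := h4
    have htend : Tendsto (fun n : ℕ => (2⁻¹ : ℝ≥0∞) ^ n) atTop (𝓝 0) :=
      ENNReal.tendsto_pow_atTop_nhds_zero_of_lt_one (by
        rw [ENNReal.inv_lt_one]; exact ENNReal.one_lt_two)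
    have := le_of_tendsto_of_tendsto' tendsto_const_nhds htend hle
    exact le_antisymm this (zero_le)
  have hμC : μ C = 0 := by
    have : μ C ≤ ν C := by simp [hνdef]
    simpa [hνC] using le_antisymm (this.trans_eq hνC) (zero_le)
  -- the bad set
  set B : Set ℝ := f ⁻¹' C ∩ Icc a b with hBdef
  have hBvol : volume B = 0 := by
    have : μ C = volume B := by
      rw [hμdef, Measure.map_apply hfm hCmeas, Measure.restrict_apply (hfm hCmeas)]
    rw [← this, hμC]
  have hmeagre : IsMeagre (f '' B) := hsmall B inter_subset_right hBvol
  -- the interval J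
  set J : Set ℝ := Ioo (min (f a) (f x)) (max (f a) (f x)) with hJdef
  have hJsub : J ⊆ f '' Icc a b := by
    have h1 : uIcc (f a) (f x) ⊆ f '' uIcc a x :=
      intermediate_value_uIcc (hf.continuousOn)
    have h2 : uIcc a x ⊆ Icc a b := by
      rw [uIcc_of_le hx.1]
      exact Icc_subset_Icc le_rfl hx.2
    intro y hy
    have : y ∈ uIcc (f a) (f x) := Ioo_subset_Icc_self hy
    obtain ⟨z, hz, hzy⟩ := h1 this
    exact ⟨z, h2 hz, hzy⟩
  have hJmeagre : IsMeagre J := by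
    have hsub : J ⊆ f '' B ∪ Cᶜ := by
      intro y hy
      by_cases hyC : y ∈ C
      · obtain ⟨z, hz, rfl⟩ := hJsub hy
        exact Or.inl ⟨z, ⟨hyC, hz⟩, rfl⟩
      · exact Or.inr hyC
    have hCcm : IsMeagre (Cᶜ) := by
      rw [IsMeagre, compl_compl]; exact hCres
    have : IsMeagre (f '' B ∪ Cᶜ) := by
      rw [IsMeagre, compl_union]
      exact Filter.inter_mem hmeagre hCcm
    exact this.mono hsub
  -- contradiction: J is a nonempty open set
  have hJne : J.Nonempty := nonempty_Ioo.2 (min_lt_max.2 (Ne.symm hfx))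
  have hJcd : Dense (Jᶜ) := dense_of_mem_residual hJmeagre
  have hJclosed : IsClosed (Jᶜ) := isOpen_Ioo.isClosed_compl
  have : (Jᶜ : Set ℝ) = univ := by
    rw [← hJclosed.closure_eq]; exact hJcd.closure_eq
  obtain ⟨y, hy⟩ := hJne
  have : y ∈ (Jᶜ : Set ℝ) := by rw [this]; trivial
  exact this hy
end

section
/- Let f : ℝ → ℝ be Lebesgue measurable, and suppose that for every set A ⊆ ℝ with Lebesgue measure zero, the image f(A) is meager. Then the range f(ℝ) is meager. -/
open MeasureTheory Set

lemma isMeagre_union' {X : Type*} [TopologicalSpace X] {s t : Set X}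
    (hs : IsMeagre s) (ht : IsMeagre t) : IsMeagre (s ∪ t) := by
  rw [IsMeagre, Set.compl_union]
  exact Filter.inter_mem hs ht

open Filter Metric Topology ENNReal in
/-- Every finite Borel measure on ℝ is concentrated (up to null sets) on a meagre set. -/
lemma exists_meagre_conull (ν : Measure ℝ) [IsFiniteMeasure ν] :
    ∃ M : Set ℝ, IsMeagre M ∧ ν Mᶜ = 0 := by
  classical
  set D : Set ℝ := {x | ν {x} ≠ 0} with hDdef
  have hD : D.Countable := by
    have h := MeasureTheory.Measure.countable_meas_pos_of_disjoint_iUnion₀ (μ := ν)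
      (As := fun x : ℝ => {x}) (fun x => (measurableSet_singleton x).nullMeasurableSet)
      (fun x y hxy => (disjoint_singleton.2 hxy).aedisjoint)
    refine h.mono ?_
    intro x hx
    exact pos_iff_ne_zero.2 hx
  have hDc : Dense Dᶜ := hD.dense_compl ℝ
  obtain ⟨Q, hQsub, hQc, hQd⟩ := hDc.exists_countable_dense_subset
  have hQne : Q.Nonempty := hQd.nonempty
  obtain ⟨u, hu⟩ := hQc.exists_eq_range hQne
  have hu0 : ∀ n, ν {u n} = 0 := by
    intro n
    have : u n ∈ Dᶜ := hQsub (hu ▸ mem_range_self n)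
    simpa [hDdef] using this
  -- choose small balls around each `u n`
  have hball : ∀ n k : ℕ, ∃ r : ℝ, 0 < r ∧ ν (ball (u n) r) ≤ 2⁻¹ ^ (n + (k + 1)) := by
    intro n k
    have htend := tendsto_measure_cthickening_of_isClosed (μ := ν) (s := {u n})
      ⟨1, one_pos, (measure_lt_top ν _).ne⟩ isClosed_singleton
    rw [hu0 n] at htend
    have hε : (0 : ℝ≥0∞) < 2⁻¹ ^ (n + (k + 1)) :=
      pos_iff_ne_zero.2 (pow_ne_zero _ (by norm_num))
    have htend' := htend.mono_left (nhdsWithin_le_nhds (s := Set.Ioi (0:ℝ)))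
    have hev := (htend'.eventually_lt_const hε).and eventually_mem_nhdsWithin
    obtain ⟨r, hr1, hr2⟩ := hev.exists
    refine ⟨r, hr2, ?_⟩
    refine le_trans (measure_mono ?_) hr1.le
    exact (ball_subset_closedBall).trans (closedBall_subset_cthickening_singleton _ _)
  choose r hrpos hrν using hball
  set U : ℕ → Set ℝ := fun k => ⋃ n, ball (u n) (r n k) with hUdef
  have hUopen : ∀ k, IsOpen (U k) := fun k => isOpen_iUnion fun n => isOpen_ball
  have hUdense : ∀ k, Dense (U k) := by
    intro k
    refine hQd.mono ?_
    rw [hu]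
    rintro x ⟨n, rfl⟩
    exact mem_iUnion.2 ⟨n, mem_ball_self (hrpos n k)⟩
  set G : Set ℝ := ⋂ k, U k with hGdef
  have hGres : G ∈ residual ℝ :=
    (countable_iInter_mem.2 fun k => residual_of_dense_open (hUopen k) (hUdense k))
  have hGν : ν G = 0 := by
    have hk : ∀ k : ℕ, ν G ≤ 2⁻¹ ^ k := by
      intro k
      have h1 : ν G ≤ ν (U k) := measure_mono (iInter_subset _ k)
      have h2 : ν (U k) ≤ ∑' n, ν (ball (u n) (r n k)) := measure_iUnion_le _
      have h3 : ∑' n, ν (ball (u n) (r n k)) ≤ ∑' n : ℕ, 2⁻¹ ^ (n + (k + 1)) :=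
        ENNReal.tsum_le_tsum fun n => hrν n k
      have h4 : ∑' n : ℕ, (2⁻¹ : ℝ≥0∞) ^ (n + (k + 1)) = 2⁻¹ ^ k := by
        simp_rw [pow_add]
        rw [ENNReal.tsum_mul_right, ENNReal.tsum_geometric, ENNReal.one_sub_inv_two,
          inv_inv, pow_one]
        rw [mul_left_comm, ENNReal.mul_inv_cancel (by norm_num) (by norm_num), mul_one]
      exact h1.trans (h2.trans (h3.trans h4.le))
    by_contra h
    obtain ⟨k, hklt⟩ := ENNReal.exists_inv_two_pow_lt h
    exact absurd (hk k) (not_le.2 hklt)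
  refine ⟨Gᶜ ∪ D, ?_, ?_⟩
  · rw [IsMeagre, Set.compl_union, compl_compl]
    refine Filter.inter_mem hGres ?_
    have hDres : Dᶜ ∈ residual ℝ := by
      have : Dᶜ = ⋂ x ∈ D, ({x}ᶜ : Set ℝ) := by
        ext y
        simp only [Set.mem_iInter, Set.mem_compl_iff, Set.mem_singleton_iff]
        exact ⟨fun h i hi hyi => h (hyi ▸ hi), fun h hy => h y hy rfl⟩
      rw [this]
      exact (countable_bInter_mem hD).2 fun x hx =>
        residual_of_dense_open isOpen_compl_singleton (dense_compl_singleton x)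
    exact hDres
  · rw [Set.compl_union, compl_compl]
    exact measure_mono_null Set.inter_subset_left hGν

theorem stmt_10 (f : ℝ → ℝ) (hf : NullMeasurable f (volume : Measure ℝ))
    (hsmall : ∀ A : Set ℝ, volume A = 0 → IsMeagre (f '' A)) :
    IsMeagre (Set.range f) := by
  have hae : AEMeasurable f (volume : Measure ℝ) := hf.aemeasurable
  -- for every unit interval, find a meagre set capturing almost all of the image
  have H : ∀ n : ℤ, ∃ M : Set ℝ, IsMeagre M ∧
      volume (Icc (n : ℝ) (n + 1) ∩ f ⁻¹' Mᶜ) = 0 := by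
    intro n
    set μn := (volume : Measure ℝ).restrict (Icc (n : ℝ) (n + 1)) with hμn
    haveI : IsFiniteMeasure μn := by
      constructor
      rw [hμn, Measure.restrict_apply_univ, Real.volume_Icc]
      exact ENNReal.ofReal_lt_top
    haveI : IsFiniteMeasure (μn.map f) := by
      constructor
      rw [Measure.map_apply_of_aemeasurable (hae.restrict) MeasurableSet.univ]
      simp
    obtain ⟨M, hM, hM0⟩ := exists_meagre_conull (μn.map f)
    refine ⟨M, hM, ?_⟩
    have h1 : μn (f ⁻¹' Mᶜ) ≤ μn.map f Mᶜ := Measure.le_map_apply (hae.restrict) _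
    rw [hM0] at h1
    have h2 : μn (f ⁻¹' Mᶜ) = 0 := le_antisymm h1 (by simp)
    rw [hμn, Measure.restrict_apply' measurableSet_Icc] at h2
    rwa [Set.inter_comm]
  choose M hMmeagre hMnull using H
  have cover : Set.range f ⊆
      ⋃ n : ℤ, (f '' (Icc (n : ℝ) (n + 1) ∩ f ⁻¹' (M n)ᶜ) ∪ M n) := by
    rintro _ ⟨y, rfl⟩
    refine mem_iUnion.2 ⟨⌊y⌋, ?_⟩
    by_cases hy : f y ∈ M ⌊y⌋
    · exact Or.inr hy
    · exact Or.inl ⟨y, ⟨⟨Int.floor_le y, (Int.lt_floor_add_one y).le⟩, hy⟩, rfl⟩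
  refine IsMeagre.mono cover ?_
  have e : ℕ ≃ ℤ := (Denumerable.eqv ℤ).symm
  have hrw : (⋃ n : ℤ, (f '' (Icc (n : ℝ) (n + 1) ∩ f ⁻¹' (M n)ᶜ) ∪ M n)) =
      ⋃ k : ℕ, (f '' (Icc (e k : ℝ) (e k + 1) ∩ f ⁻¹' (M (e k))ᶜ) ∪ M (e k)) :=
    (e.surjective.iUnion_comp _).symm
  rw [hrw]
  refine isMeagre_iUnion fun k => isMeagre_union' ?_ (hMmeagre (e k))
  exact hsmall _ (hMnull (e k))
end

section
/- Let f : ℝ → ℝ be continuous, and suppose that for every set A ⊆ ℝ with Lebesgue measure zero, the image f(A) is meager. Then f is constant. -/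
open MeasureTheory Set Filter Metric
open scoped ENNReal Topology

lemma aux_small_punctured_ball (μ : Measure ℝ) [IsFiniteMeasure μ] (q : ℝ) {ε : ℝ≥0∞}
    (hε : 0 < ε) : ∃ r > 0, μ (Metric.ball q r \ {q}) < ε := by
  have hmono : Antitone (fun n : ℕ => Metric.ball q (1 / (n + 1)) \ {q}) := by
    intro a b hab
    apply diff_subset_diff_left
    apply Metric.ball_subset_ball
    have : (a : ℝ) + 1 ≤ (b : ℝ) + 1 := by exact_mod_cast Nat.succ_le_succ hab
    exact one_div_le_one_div_of_le (by positivity) this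
  have hempty : (⋂ n : ℕ, Metric.ball q (1 / (n + 1)) \ {q}) = ∅ := by
    rw [eq_empty_iff_forall_notMem]
    intro x hx
    simp only [mem_iInter, mem_diff, Metric.mem_ball, mem_singleton_iff] at hx
    have hne : x ≠ q := (hx 0).2
    have hpos : 0 < dist x q := dist_pos.2 hne
    obtain ⟨n, hn⟩ := exists_nat_one_div_lt hpos
    exact absurd (hx n).1 (not_lt.2 hn.le)
  have htend : Tendsto (μ ∘ fun n : ℕ => Metric.ball q (1 / (n + 1)) \ {q}) atTop
      (𝓝 (μ (⋂ n : ℕ, Metric.ball q (1 / (n + 1)) \ {q}))) := by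
    refine tendsto_measure_iInter_atTop (fun n => ?_) hmono ⟨0, measure_ne_top μ _⟩
    exact ((Metric.isOpen_ball.measurableSet.diff (measurableSet_singleton q))).nullMeasurableSet
  rw [hempty, measure_empty] at htend
  have := htend.eventually_lt_const hε
  obtain ⟨n, hn⟩ := this.exists
  exact ⟨1 / (n + 1), by positivity, hn⟩

set_option maxHeartbeats 1000000 in
theorem stmt_11 (f : ℝ → ℝ) (hf : Continuous f)
    (hsmall : ∀ A : Set ℝ, volume A = 0 → IsMeagre (f '' A)) :
    ∃ c : ℝ, ∀ x : ℝ, f x = c := by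
  classical
  by_contra hcon
  push_neg at hcon
  obtain ⟨x₁, hx₁⟩ := hcon (f 0)
  set K : Set ℝ := uIcc 0 x₁ with hKdef
  have hK : IsCompact K := isCompact_uIcc
  haveI : IsFiniteMeasure (volume.restrict K) :=
    ⟨by rw [Measure.restrict_apply_univ]; exact hK.measure_lt_top⟩
  set μ : Measure ℝ := (volume.restrict K).map f with hμdef
  haveI : IsFiniteMeasure μ := by
    rw [hμdef]; exact Measure.isFiniteMeasure_map _ _
  -- enumeration of the rationals
  set e : ℕ → ℝ := fun n => ((Denumerable.ofNat ℚ n : ℚ) : ℝ) with he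
  have herange : range e = Set.range ((↑) : ℚ → ℝ) := by
    ext x
    simp only [he, mem_range]
    constructor
    · rintro ⟨n, rfl⟩; exact ⟨_, rfl⟩
    · rintro ⟨q, rfl⟩; exact ⟨@Encodable.encode ℚ Denumerable.toEncodable q, congrArg _ (Denumerable.ofNat_encode (α := ℚ) q)⟩
  have hedense : Dense (range e) := by
    rw [herange]; exact Rat.denseRange_cast
  -- small punctured balls around each rational
  have hr : ∀ n m : ℕ, ∃ r > 0, μ (Metric.ball (e m) r \ {e m}) < 2⁻¹ ^ (n + m + 1) := by
    intro n m
    refine aux_small_punctured_ball μ (e m) ?_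
    exact ENNReal.pow_pos (by simp) _
  choose r hr0 hrμ using hr
  set Wn : ℕ → Set ℝ := fun n => ⋃ m, Metric.ball (e m) (r n m) with hWn
  set W : Set ℝ := ⋂ n, Wn n with hW
  set Qs : Set ℝ := range e with hQs
  have hWQ : ∀ n, μ (W \ Qs) ≤ 2⁻¹ ^ n := by
    intro n
    have hsub : W \ Qs ⊆ ⋃ m, (Metric.ball (e m) (r n m) \ {e m}) := by
      rintro x ⟨hxW, hxQ⟩
      obtain ⟨m, hm⟩ := mem_iUnion.1 (mem_iInter.1 hxW n)
      exact mem_iUnion.2 ⟨m, hm, fun h => hxQ ⟨m, (mem_singleton_iff.1 h).symm⟩⟩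
    calc μ (W \ Qs) ≤ ∑' m, μ (Metric.ball (e m) (r n m) \ {e m}) :=
          (measure_mono hsub).trans (measure_iUnion_le _)
      _ ≤ ∑' m, (2⁻¹ : ℝ≥0∞) ^ (n + m + 1) := ENNReal.tsum_le_tsum fun m => (hrμ n m).le
      _ = 2⁻¹ ^ n := by
          have : ∀ m : ℕ, (2⁻¹ : ℝ≥0∞) ^ (n + m + 1) = 2⁻¹ ^ (n + 1) * 2⁻¹ ^ m := by
            intro m; rw [← pow_add]; ring_nf
          simp only [this]
          rw [ENNReal.tsum_mul_left, ENNReal.tsum_geometric, ENNReal.one_sub_inv_two,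
            inv_inv, pow_succ]
          rw [mul_assoc, ENNReal.inv_mul_cancel two_ne_zero ENNReal.ofNat_ne_top, mul_one]
  have hμW : μ (W \ Qs) = 0 := by
    have h2 : Tendsto (fun n : ℕ => (2⁻¹ : ℝ≥0∞) ^ n) atTop (𝓝 0) :=
      ENNReal.tendsto_pow_atTop_nhds_zero_of_lt_one (by
        rw [ENNReal.inv_lt_one]; exact ENNReal.one_lt_two)
    exact le_antisymm (ge_of_tendsto' h2 hWQ) (zero_le)
  have hWm : MeasurableSet W := by
    refine MeasurableSet.iInter fun n => ?_
    exact (isOpen_iUnion fun m => Metric.isOpen_ball).measurableSet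
  have hWQm : MeasurableSet (W \ Qs) := hWm.diff (countable_range e).measurableSet
  have hvol : volume (K ∩ f ⁻¹' (W \ Qs)) = 0 := by
    rw [hμdef, Measure.map_apply hf.measurable hWQm,
      Measure.restrict_apply (hf.measurable hWQm)] at hμW
    rwa [inter_comm]
  -- picking one point in the fiber over each rational
  set pick : ℝ → ℝ := fun y => if h : ∃ x ∈ K, f x = y then h.choose else 0 with hpick
  have hpick_spec : ∀ y ∈ f '' K, pick y ∈ K ∧ f (pick y) = y := by
    intro y hy
    obtain ⟨x, hx, hfx⟩ := hy
    have h : ∃ x ∈ K, f x = y := ⟨x, hx, hfx⟩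
    simp only [hpick, dif_pos h]
    exact ⟨h.choose_spec.1, h.choose_spec.2⟩
  set A : Set ℝ := (K ∩ f ⁻¹' (W \ Qs)) ∪ pick '' Qs with hA
  have hA0 : volume A = 0 :=
    measure_union_null hvol (((countable_range e).image _).measure_zero _)
  have hmeagre : (f '' A)ᶜ ∈ residual ℝ := hsmall A hA0
  -- the image of A contains W ∩ U for a nonempty open interval U
  have hJ : uIcc (f 0) (f x₁) ⊆ f '' K := intermediate_value_uIcc hf.continuousOn
  set U : Set ℝ := Ioo (min (f 0) (f x₁)) (max (f 0) (f x₁)) with hU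
  have hUne : U.Nonempty := nonempty_Ioo.2 (min_lt_max.2 (Ne.symm hx₁))
  have hUsub : U ⊆ f '' K := fun y hy => hJ (Ioo_subset_Icc_self hy)
  have hWU : W ∩ U ⊆ f '' A := by
    rintro y ⟨hyW, hyU⟩
    by_cases hyQ : y ∈ Qs
    · obtain ⟨hpK, hpf⟩ := hpick_spec y (hUsub hyU)
      exact ⟨pick y, Or.inr ⟨y, hyQ, rfl⟩, hpf⟩
    · obtain ⟨x, hxK, hfx⟩ := hUsub hyU
      exact ⟨x, Or.inl ⟨hxK, by rw [mem_preimage, hfx]; exact ⟨hyW, hyQ⟩⟩, hfx⟩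
  -- W is residual
  have hWres : W ∈ residual ℝ := by
    rw [hW]
    refine countable_iInter_mem.2 fun n => ?_
    have hsub : range e ⊆ Wn n := by
      rintro x ⟨m, rfl⟩
      exact mem_iUnion.2 ⟨m, Metric.mem_ball_self (hr0 n m)⟩
    exact residual_of_dense_open (isOpen_iUnion fun m => Metric.isOpen_ball)
      (hedense.mono hsub)
  have hdense : Dense ((f '' A)ᶜ ∩ W) := dense_of_mem_residual (inter_mem hmeagre hWres)
  obtain ⟨y, ⟨hyc, hyW⟩, hyU⟩ := hdense.exists_mem_open isOpen_Ioo hUne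
  exact hyc (hWU ⟨hyW, hyU⟩)
end

section
/- Let f : ℝ → ℝ have the Baire property (i.e., for every open set U ⊆ ℝ, the preimage f⁻¹(U) differs from some open set by a meager set), and suppose that for every meager set A ⊆ ℝ, the image f(A) has Lebesgue measure zero. Then the range f(ℝ) has Lebesgue measure zero. -/
open MeasureTheory Set

theorem stmt_12 (f : ℝ → ℝ)
    (hf : ∀ U : Set ℝ, IsOpen U → ∃ V : Set ℝ, IsOpen V ∧ IsMeagre (symmDiff (f ⁻¹' U) V))
    (hsmall : ∀ A : Set ℝ, IsMeagre A → volume (f '' A) = 0) :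
    volume (Set.range f) = 0 := by
  classical
  -- a countable topological basis of ℝ
  obtain ⟨b, bc, -, hb⟩ := TopologicalSpace.exists_countable_basis ℝ
  haveI : Countable ↥b := bc.to_subtype
  choose v hvopen hvmeag using fun s : b => hf s (hb.isOpen s.2)
  set M : Set ℝ := ⋃ s : b, symmDiff (f ⁻¹' (s : Set ℝ)) (v s) with hM
  have hMmeag : IsMeagre M := by
    rw [IsMeagre, hM, compl_iUnion]
    exact (countable_iInter_mem).2 fun s => hvmeag s
  -- f is "continuous" on Mᶜ
  have key : ∀ x ∈ Mᶜ, ∀ r : ℝ, 0 < r →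
      ∃ δ > 0, ∀ y ∈ Mᶜ, dist y x < δ → dist (f y) (f x) < r := by
    intro x hx r hr
    obtain ⟨s, hsb, hfx, hsub⟩ :=
      hb.exists_subset_of_mem_open (Metric.mem_ball_self hr) Metric.isOpen_ball
    have hxM : x ∉ symmDiff (f ⁻¹' s) (v ⟨s, hsb⟩) := fun h =>
      hx (mem_iUnion.2 ⟨⟨s, hsb⟩, h⟩)
    have hxv : x ∈ v ⟨s, hsb⟩ := by
      by_contra h
      exact hxM (Set.mem_symmDiff.2 (Or.inl ⟨hfx, h⟩))
    obtain ⟨δ, hδpos, hδ⟩ := Metric.isOpen_iff.1 (hvopen ⟨s, hsb⟩) x hxv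
    refine ⟨δ, hδpos, fun y hy hyx => ?_⟩
    have hyv : y ∈ v ⟨s, hsb⟩ := hδ (Metric.mem_ball.2 hyx)
    have hyM : y ∉ symmDiff (f ⁻¹' s) (v ⟨s, hsb⟩) := fun h =>
      hy (mem_iUnion.2 ⟨⟨s, hsb⟩, h⟩)
    have hys : y ∈ f ⁻¹' s := by
      by_contra h
      exact hyM (Set.mem_symmDiff.2 (Or.inr ⟨hyv, h⟩))
    exact Metric.mem_ball.1 (hsub hys)
  have hdense : Dense Mᶜ := dense_of_mem_residual hMmeag
  -- a countable dense sequence inside Mᶜ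
  haveI : Nonempty ↥(Mᶜ) := hdense.nonempty.to_subtype
  obtain ⟨t, tc, td⟩ := TopologicalSpace.exists_countable_dense ↥(Mᶜ)
  obtain ⟨e, he⟩ := tc.exists_eq_range td.nonempty
  set d : ℕ → ℝ := fun n => (e n : ℝ) with hd
  have hdM : ∀ n, d n ∈ Mᶜ := fun n => (e n).2
  have hddense : Dense (Set.range d) := by
    have h1 : DenseRange ((↑) : ↥(Mᶜ) → ℝ) := hdense.denseRange_val
    have h2 : Dense (((↑) : ↥(Mᶜ) → ℝ) '' t) := h1.dense_image continuous_subtype_val td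
    have : Set.range d = ((↑) : ↥(Mᶜ) → ℝ) '' t := by
      rw [he, hd, ← Set.range_comp]
      rfl
    rwa [this]
  -- main estimate
  have main : ∀ ε : ℝ, 0 < ε → volume (Set.range f) ≤ ENNReal.ofReal ε := by
    intro ε hε
    set r : ℕ → ℝ := fun k => ε / 8 * (1 / 2) ^ k with hr
    have hrpos : ∀ k, 0 < r k := fun k => by positivity
    choose δ hδpos hδ using fun k => key (d k) (hdM k) (r k) (hrpos k)
    set U : Set ℝ := ⋃ k, Metric.ball (d k) (δ k) with hU
    have hUopen : IsOpen U := isOpen_iUnion fun k => Metric.isOpen_ball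
    have hUdense : Dense U := by
      refine hddense.mono ?_
      rintro _ ⟨k, rfl⟩
      exact mem_iUnion.2 ⟨k, Metric.mem_ball_self (hδpos k)⟩
    have hUc : IsMeagre Uᶜ := by
      rw [IsMeagre, compl_compl]
      exact residual_of_dense_open hUopen hUdense
    have hK : IsMeagre (Mᶜ \ U) := hUc.mono fun x hx => hx.2
    have hcover : Set.range f ⊆ f '' M ∪ (f '' (Mᶜ \ U) ∪ f '' (Mᶜ ∩ U)) := by
      rintro _ ⟨x, rfl⟩
      by_cases hxM : x ∈ M
      · exact Or.inl ⟨x, hxM, rfl⟩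
      by_cases hxU : x ∈ U
      · exact Or.inr (Or.inr ⟨x, ⟨hxM, hxU⟩, rfl⟩)
      · exact Or.inr (Or.inl ⟨x, ⟨hxM, hxU⟩, rfl⟩)
    have himg : f '' (Mᶜ ∩ U) ⊆ ⋃ k, Metric.ball (f (d k)) (r k) := by
      rintro _ ⟨y, ⟨hyM, hyU⟩, rfl⟩
      obtain ⟨k, hk⟩ := mem_iUnion.1 hyU
      exact mem_iUnion.2 ⟨k, Metric.mem_ball.2 (hδ k y hyM (Metric.mem_ball.1 hk))⟩
    calc volume (Set.range f)
        ≤ volume (f '' M ∪ (f '' (Mᶜ \ U) ∪ f '' (Mᶜ ∩ U))) := measure_mono hcover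
      _ ≤ volume (f '' M) + (volume (f '' (Mᶜ \ U)) + volume (f '' (Mᶜ ∩ U))) := by
          exact (measure_union_le _ _).trans (add_le_add le_rfl (measure_union_le _ _))
      _ = volume (f '' (Mᶜ ∩ U)) := by
          rw [hsmall M hMmeag, hsmall _ hK, zero_add, zero_add]
      _ ≤ volume (⋃ k, Metric.ball (f (d k)) (r k)) := measure_mono himg
      _ ≤ ∑' k, volume (Metric.ball (f (d k)) (r k)) := measure_iUnion_le _
      _ = ∑' k : ℕ, ENNReal.ofReal (ε / 4) * ((2 : ENNReal)⁻¹) ^ k := by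
          refine tsum_congr fun k => ?_
          rw [Real.volume_ball]
          rw [show 2 * r k = (ε / 4) * (1 / 2) ^ k by rw [hr]; ring]
          rw [ENNReal.ofReal_mul (by positivity), ENNReal.ofReal_pow (by norm_num),
            one_div, ENNReal.ofReal_inv_of_pos (by norm_num), ENNReal.ofReal_ofNat]
      _ = ENNReal.ofReal (ε / 4) * 2 := by
          rw [ENNReal.tsum_mul_left, ENNReal.tsum_geometric, ENNReal.one_sub_inv_two, inv_inv]
      _ ≤ ENNReal.ofReal ε := by
          rw [show (2 : ENNReal) = ENNReal.ofReal 2 by norm_num, ← ENNReal.ofReal_mul (by positivity)]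
          exact ENNReal.ofReal_le_ofReal (by linarith)
  refine le_antisymm ?_ zero_le
  refine ENNReal.le_of_forall_pos_le_add fun ε hε _ => ?_
  rw [zero_add]
  calc volume (Set.range f) ≤ ENNReal.ofReal (ε : ℝ) := main ε (by exact_mod_cast hε)
    _ = (ε : ENNReal) := ENNReal.ofReal_coe_nnreal
end
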